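/- arXiv:2211.17211 — 9 statements merged into one kernel-verified Lean document; each statement's English description precedes it below -/
import Mathlib

section
/- Let N, m, Δ be positive integers with Δ dividing N, and let K ≥ 1 be a real number such that (2^m : ℝ) ≤ N / (K·Δ). Then there exists a finite set S of functions Fin N → (Fin m → Bool) such that: (1) |S| ≥ 2^(m·N − Δ) (entropy deficiency at most Δ); (2) for every subset J ⊆ Fin N and every α : Fin N → (Fin m → Bool), the number of y ∈ S with y i = α i for all i ∈ J is at most |S| · 2^(−(m−1)·|J|) (min-entropy rate at least 1 − 1/m); and (3) for every subset I ⊆ Fin N with (|I| : ℝ) ≤ (K−1)·Δ, for every x : Fin N → Fin m and every y ∈ S, there exists i ∉ I with y i (x i) = true; that is, the projection of IND_m^N(x,y) to the coordinates outside I is never the all-zero string. -/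
lemma aux_choose (n a : ℕ) (ha : 1 ≤ a) :
    ∀ d e : ℕ, (e + d + 1) * (a + 1) ≤ n →
      n.choose e * a ^ (2 * d + 1) ≤ n.choose (e + (2 * d + 1)) := by
  intro d
  induction d with
  | zero =>
    intro e h
    have key : a * (e + 1) + e ≤ (e + 0 + 1) * (a + 1) := by nlinarith
    have h1 : a * (e + 1) + e ≤ n := key.trans h
    have h2 : a * (e + 1) ≤ n - e := Nat.le_sub_of_add_le h1
    have h3 : n.choose e * a * (e + 1) ≤ n.choose (e + 1) * (e + 1) := by
      rw [Nat.choose_succ_right_eq]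
      calc n.choose e * a * (e + 1) = n.choose e * (a * (e + 1)) := by ring
        _ ≤ n.choose e * (n - e) := Nat.mul_le_mul_left _ h2
    have h4 : n.choose e * a ≤ n.choose (e + 1) :=
      Nat.le_of_mul_le_mul_right h3 (Nat.succ_pos e)
    simpa using h4
  | succ d ih =>
    intro e h
    have h' : (e + 1 + d + 1) * (a + 1) ≤ n := by
      have : e + 1 + d + 1 = e + (d + 1) + 1 := by omega
      rw [this]; exact h
    have hIH := ih (e + 1) h'
    have h2 : (e + d + 2) * 2 ≤ (e + d + 2) * (a + 1) := Nat.mul_le_mul_left _ (by omega)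
    have h2' : (e + d + 2) * 2 ≤ n := by
      refine h2.trans ?_
      have : e + d + 2 = e + (d + 1) + 1 := by omega
      rw [this]; exact h
    have hen : e + 2 * d + 3 ≤ n := by omega
    obtain ⟨u, hu⟩ := Nat.exists_eq_add_of_le (show e ≤ n by omega)
    obtain ⟨v, hv⟩ := Nat.exists_eq_add_of_le (show 2 * d + 2 + 1 ≤ u by omega)
    -- u = 2*d+2 + (1 + v)? careful: hv : u = 2*d+2+1 + v
    set v' := 1 + v with hv'
    have huv : u = 2 * d + 2 + v' := by omega
    have hT : (e + d + 2) * a + (e + d + 2) ≤ e + u := by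
      calc (e + d + 2) * a + (e + d + 2) = (e + d + 2) * (a + 1) := by ring
        _ = (e + (d + 1) + 1) * (a + 1) := by ring
        _ ≤ n := h
        _ = e + u := hu
    have hT' : (e + d + 2) * a ≤ v' + d := by omega
    have key : a ^ 2 * ((e + 1) * (e + 2 * d + 3)) ≤ u * v' := by
      rw [huv]
      have h1 : ((e + d + 2) * a + 1) * ((e + d + 2) * a + 1) ≤ (v' + d + 1) * (v' + d + 1) :=
        Nat.mul_le_mul (Nat.succ_le_succ hT') (Nat.succ_le_succ hT')
      have h2 : (d + 1) * (d + 1) * (1 * 1) ≤ (d + 1) * (d + 1) * (a * a) :=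
        Nat.mul_le_mul_left _ (Nat.mul_le_mul ha ha)
      nlinarith [h1, h2]
    have hne : n - e = u := by omega
    have hne2 : n - (e + 2 * d + 2) = v' := by omega
    have id1 : n.choose (e + 1) * (e + 1) = n.choose e * u := by
      rw [Nat.choose_succ_right_eq, hne]
    have id2 : n.choose (e + 2 * d + 3) * (e + 2 * d + 3) = n.choose (e + 2 * d + 2) * v' := by
      have := Nat.choose_succ_right_eq n (e + 2 * d + 2)
      rw [hne2] at this
      convert this using 2 <;> omega
    have hIH' : n.choose (e + 1) * a ^ (2 * d + 1) ≤ n.choose (e + 2 * d + 2) := by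
      have : e + 1 + (2 * d + 1) = e + 2 * d + 2 := by omega
      rwa [this] at hIH
    have pos : 0 < u * (e + 2 * d + 3) := Nat.mul_pos (by omega) (by omega)
    refine Nat.le_of_mul_le_mul_right ?_ pos
    calc n.choose e * a ^ (2 * (d + 1) + 1) * (u * (e + 2 * d + 3))
        = (n.choose e * u) * (a ^ (2 * d + 1) * (a ^ 2 * (e + 2 * d + 3))) := by ring
      _ = (n.choose (e + 1) * (e + 1)) * (a ^ (2 * d + 1) * (a ^ 2 * (e + 2 * d + 3))) := by
          rw [id1]
      _ = (n.choose (e + 1) * a ^ (2 * d + 1)) * (a ^ 2 * ((e + 1) * (e + 2 * d + 3))) := by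
          ring
      _ ≤ n.choose (e + 2 * d + 2) * (u * v') := Nat.mul_le_mul hIH' key
      _ = (n.choose (e + 2 * d + 2) * v') * u := by ring
      _ = (n.choose (e + 2 * d + 3) * (e + 2 * d + 3)) * u := by rw [id2]
      _ = n.choose (e + (2 * (d + 1) + 1)) * (u * (e + 2 * d + 3)) := by
          have : e + (2 * (d + 1) + 1) = e + 2 * d + 3 := by omega
          rw [this]; ring

lemma aux_sum (n a t : ℕ) (ha : 1 ≤ a) (ht : 1 ≤ t) (h : t * (a + 1) ≤ n) :
    ∑ j ∈ Finset.range t, n.choose j * a ^ (n - j) ≤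
      ∑ j ∈ Finset.Icc t n, n.choose j * a ^ (n - j) := by
  have h2t : 2 * t ≤ n := by
    have := Nat.mul_le_mul_left t (show 2 ≤ a + 1 by omega)
    omega
  calc ∑ j ∈ Finset.range t, n.choose j * a ^ (n - j)
      ≤ ∑ j ∈ Finset.range t, n.choose (2 * t - 1 - j) * a ^ (n - (2 * t - 1 - j)) := by
        refine Finset.sum_le_sum ?_
        intro j hj
        rw [Finset.mem_range] at hj
        have hd := aux_choose n a ha (t - 1 - j) j (by
          have : j + (t - 1 - j) + 1 = t := by omega
          rw [this]; exact h)
        have hidx : j + (2 * (t - 1 - j) + 1) = 2 * t - 1 - j := by omega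
        rw [hidx] at hd
        have hexp : (2 * (t - 1 - j) + 1) + (n - (2 * t - 1 - j)) = n - j := by omega
        calc n.choose j * a ^ (n - j)
            = n.choose j * a ^ (2 * (t - 1 - j) + 1) * a ^ (n - (2 * t - 1 - j)) := by
              rw [mul_assoc, ← pow_add, hexp]
          _ ≤ n.choose (2 * t - 1 - j) * a ^ (n - (2 * t - 1 - j)) :=
              Nat.mul_le_mul_right _ hd
    _ = ∑ j ∈ (Finset.range t).image (fun j => 2 * t - 1 - j),
          n.choose j * a ^ (n - j) := by
        rw [Finset.sum_image]
        intro x hx y hy hxy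
        rw [Finset.mem_coe, Finset.mem_range] at hx hy
        simp only at hxy
        omega
    _ ≤ ∑ j ∈ Finset.Icc t n, n.choose j * a ^ (n - j) := by
        refine Finset.sum_le_sum_of_subset ?_
        intro j hj
        simp only [Finset.mem_image, Finset.mem_range] at hj
        obtain ⟨x, hx, rfl⟩ := hj
        rw [Finset.mem_Icc]
        omega



lemma class_card (N m j : ℕ) :
    (Finset.univ.filter (fun y : Fin N → Fin m → Bool =>
      (Finset.univ.filter (fun i => y i = fun _ => true)).card = j)).card
      = N.choose j * (2 ^ m - 1) ^ (N - j) := by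
  classical
  set a₀ : Fin m → Bool := fun _ => true with ha₀
  have hsplit : (Finset.univ.filter (fun y : Fin N → Fin m → Bool =>
      (Finset.univ.filter (fun i => y i = a₀)).card = j))
      = (Finset.univ.powersetCard j).biUnion
          (fun s => Fintype.piFinset (fun i => if i ∈ s then {a₀} else {a₀}ᶜ)) := by
    ext y
    simp only [Finset.mem_filter, Finset.mem_univ, true_and, Finset.mem_biUnion,
      Finset.mem_powersetCard, Fintype.mem_piFinset]
    constructor
    · intro hy
      refine ⟨Finset.univ.filter (fun i => y i = a₀), ⟨Finset.subset_univ _, hy⟩, ?_⟩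
      intro i
      by_cases hi : i ∈ Finset.univ.filter (fun i => y i = a₀)
      · rw [if_pos hi, Finset.mem_singleton]
        exact (Finset.mem_filter.mp hi).2
      · rw [if_neg hi, Finset.mem_compl, Finset.mem_singleton]
        intro hc
        exact hi (Finset.mem_filter.mpr ⟨Finset.mem_univ _, hc⟩)
    · rintro ⟨s, ⟨-, hcard⟩, hs⟩
      have : Finset.univ.filter (fun i => y i = a₀) = s := by
        ext i
        simp only [Finset.mem_filter, Finset.mem_univ, true_and]
        constructor
        · intro hyi
          by_contra hi
          have := hs i
          rw [if_neg hi, Finset.mem_compl, Finset.mem_singleton] at this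
          exact this hyi
        · intro hi
          have := hs i
          rw [if_pos hi, Finset.mem_singleton] at this
          exact this
      rw [this, hcard]
  rw [hsplit, Finset.card_biUnion]
  · have hpiece : ∀ s ∈ Finset.univ.powersetCard j,
        (Fintype.piFinset (fun i : Fin N => if i ∈ s then ({a₀} : Finset (Fin m → Bool)) else {a₀}ᶜ)).card
          = (2 ^ m - 1) ^ (N - j) := by
      intro s hs
      rw [Finset.mem_powersetCard] at hs
      rw [Fintype.card_piFinset]
      have : ∀ i : Fin N, (if i ∈ s then ({a₀} : Finset (Fin m → Bool)) else {a₀}ᶜ).card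
          = if i ∈ s then 1 else 2 ^ m - 1 := by
        intro i
        split_ifs
        · exact Finset.card_singleton _
        · rw [Finset.card_compl, Finset.card_singleton]
          congr 1
          simp [Fintype.card_fun]
      rw [Finset.prod_congr rfl (fun i _ => this i), Finset.prod_ite,
        Finset.prod_const_one, Finset.prod_const, one_mul]
      congr 1
      have hfs : Finset.univ.filter (fun i : Fin N => i ∈ s) = s := by
        ext i; simp
      rw [Finset.filter_not, hfs, Finset.card_sdiff_of_subset (Finset.subset_univ s),
        Finset.card_univ, Fintype.card_fin, hs.2]
    rw [Finset.sum_congr rfl hpiece, Finset.sum_const, Finset.card_powersetCard,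
      Finset.card_univ, Fintype.card_fin, smul_eq_mul]
  · intro s hs s' hs' hne
    simp only [Function.onFun]; rw [Finset.disjoint_left]
    intro y hy hy'
    apply hne
    rw [Fintype.mem_piFinset] at hy hy'
    ext i
    have h1 := hy i
    have h2 := hy' i
    constructor
    · intro hi
      rw [if_pos hi, Finset.mem_singleton] at h1
      by_contra hi'
      rw [if_neg hi', Finset.mem_compl, Finset.mem_singleton] at h2
      exact h2 h1
    · intro hi'
      rw [if_pos hi', Finset.mem_singleton] at h2
      by_contra hi
      rw [if_neg hi, Finset.mem_compl, Finset.mem_singleton] at h1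
      exact h1 h2

lemma good_card (N m t : ℕ) (hm : 1 ≤ m) (hN : 1 ≤ N) (ht : 1 ≤ t) (h : t * 2 ^ m ≤ N) :
    2 ^ (m * N - 1) ≤ (Finset.univ.filter (fun y : Fin N → Fin m → Bool =>
      t ≤ (Finset.univ.filter (fun i => y i = fun _ => true)).card)).card := by
  classical
  set cnt : (Fin N → Fin m → Bool) → ℕ :=
    fun y => (Finset.univ.filter (fun i => y i = fun _ => true)).card with hcnt
  set f : ℕ → ℕ := fun j => N.choose j * (2 ^ m - 1) ^ (N - j) with hf
  have hclass : ∀ j, (Finset.univ.filter (fun y => cnt y = j)).card = f j :=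
    fun j => class_card N m j
  have hdisj : ∀ (u : Finset ℕ), ∀ s ∈ u, ∀ s' ∈ u, s ≠ s' →
      Disjoint (Finset.univ.filter (fun y : Fin N → Fin m → Bool => cnt y = s))
        (Finset.univ.filter (fun y => cnt y = s')) := by
    intro u s _ s' _ hne
    rw [Finset.disjoint_left]
    intro y hy hy'
    rw [Finset.mem_filter] at hy hy'
    exact hne (hy.2 ▸ hy'.2)
  have hcntle : ∀ y, cnt y ≤ N := by
    intro y
    calc cnt y ≤ Finset.univ.card := Finset.card_filter_le _ _
      _ = N := by simp
  have hgood : Finset.univ.filter (fun y => t ≤ cnt y)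
      = (Finset.Icc t N).biUnion (fun j => Finset.univ.filter (fun y => cnt y = j)) := by
    ext y
    simp only [Finset.mem_filter, Finset.mem_univ, true_and, Finset.mem_biUnion,
      Finset.mem_Icc]
    constructor
    · intro hy
      exact ⟨cnt y, ⟨hy, hcntle y⟩, rfl⟩
    · rintro ⟨j, ⟨hj, -⟩, rfl⟩
      exact hj
  have hbad : Finset.univ.filter (fun y => ¬ t ≤ cnt y)
      = (Finset.range t).biUnion (fun j => Finset.univ.filter (fun y => cnt y = j)) := by
    ext y
    simp only [Finset.mem_filter, Finset.mem_univ, true_and, Finset.mem_biUnion,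
      Finset.mem_range, not_le]
    constructor
    · intro hy
      exact ⟨cnt y, hy, rfl⟩
    · rintro ⟨j, hj, rfl⟩
      exact hj
  have hGcard : (Finset.univ.filter (fun y => t ≤ cnt y)).card = ∑ j ∈ Finset.Icc t N, f j := by
    rw [hgood, Finset.card_biUnion (hdisj _)]
    exact Finset.sum_congr rfl (fun j _ => hclass j)
  have hBcard : (Finset.univ.filter (fun y => ¬ t ≤ cnt y)).card
      = ∑ j ∈ Finset.range t, f j := by
    rw [hbad, Finset.card_biUnion (hdisj _)]
    exact Finset.sum_congr rfl (fun j _ => hclass j)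
  have htot : (Finset.univ.filter (fun y => t ≤ cnt y)).card
      + (Finset.univ.filter (fun y => ¬ t ≤ cnt y)).card = 2 ^ (m * N) := by
    rw [Finset.card_filter_add_card_filter_not, Finset.card_univ]
    simp [Fintype.card_fun, ← pow_mul]
  have ha1 : 1 ≤ 2 ^ m - 1 := by
    have : 2 ^ 1 ≤ 2 ^ m := Nat.pow_le_pow_right (by norm_num) hm
    omega
  have haplus : (2 ^ m - 1) + 1 = 2 ^ m := by
    have : 1 ≤ 2 ^ m := Nat.one_le_two_pow
    omega
  have hcomp : (Finset.univ.filter (fun y => ¬ t ≤ cnt y)).card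
      ≤ (Finset.univ.filter (fun y => t ≤ cnt y)).card := by
    rw [hGcard, hBcard]
    exact aux_sum N (2 ^ m - 1) t ha1 ht (by rwa [haplus])
  have hmn : 0 < m * N := Nat.mul_pos hm hN
  have hpow : 2 ^ (m * N - 1) * 2 = 2 ^ (m * N) := by
    rw [← pow_succ]
    congr 1
    omega
  refine Nat.le_of_mul_le_mul_right ?_ (show 0 < 2 by norm_num)
  rw [hpow]
  calc 2 ^ (m * N) = _ + _ := htot.symm
    _ ≤ (Finset.univ.filter (fun y => t ≤ cnt y)).card
        + (Finset.univ.filter (fun y => t ≤ cnt y)).card := Nat.add_le_add_left hcomp _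
    _ = (Finset.univ.filter (fun y => t ≤ cnt y)).card * 2 := by ring

lemma agree_card (N m : ℕ) (J : Finset (Fin N)) (α : Fin N → Fin m → Bool) :
    (Finset.univ.filter (fun y : Fin N → Fin m → Bool => ∀ i ∈ J, y i = α i)).card
      ≤ (2 ^ m) ^ (N - J.card) := by
  classical
  have hinj : Set.InjOn (fun (y : Fin N → Fin m → Bool) (i : {i // i ∈ Jᶜ}) => y i.1)
      ↑(Finset.univ.filter (fun y : Fin N → Fin m → Bool => ∀ i ∈ J, y i = α i)) := by
    intro y₁ h₁ y₂ h₂ heq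
    rw [Finset.mem_coe, Finset.mem_filter] at h₁ h₂
    funext i
    by_cases hi : i ∈ J
    · rw [h₁.2 i hi, h₂.2 i hi]
    · exact congrFun heq ⟨i, Finset.mem_compl.mpr hi⟩
  have hle := Finset.card_le_card_of_injOn
    (t := (Finset.univ : Finset ({i // i ∈ Jᶜ} → Fin m → Bool)))
    _ (fun y _ => Finset.mem_univ _) hinj
  calc (Finset.univ.filter (fun y : Fin N → Fin m → Bool => ∀ i ∈ J, y i = α i)).card
      ≤ (Finset.univ : Finset ({i // i ∈ Jᶜ} → Fin m → Bool)).card := hle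
    _ = (2 ^ m) ^ (N - J.card) := by
      rw [Finset.card_univ, Fintype.card_fun]
      congr 1
      · simp [Fintype.card_fun]
      · simp [Finset.card_compl]


/-- The N-fold Index gadget: `(IND_m^N(x,y)) i = y i (x i)`. -/
def INDN {N m : ℕ} (x : Fin N → Fin m) (y : Fin N → Fin m → Bool) : Fin N → Bool :=
  fun i => y i (x i)

/-- Counterexample distribution for the Index gadget: a set `S` of Bob-inputs with
entropy deficiency at most `Δ`, min-entropy rate at least `1 - 1/m`, such that for
any small `I` the projection of `IND_m^N([m]^N, S)` outside `I` misses the all-zero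
string (indeed every output has a `true` outside `I`). -/
theorem stmt0 (N m Δ : ℕ) (hN : 0 < N) (hm : 0 < m) (hΔ : 0 < Δ) (hdvd : Δ ∣ N)
    (K : ℝ) (hK : 1 ≤ K) (hsize : (2 : ℝ) ^ m ≤ (N : ℝ) / (K * Δ)) :
    ∃ S : Finset (Fin N → Fin m → Bool),
      -- (1) entropy deficiency at most Δ
      2 ^ (m * N - Δ) ≤ S.card ∧
      -- (2) min-entropy rate at least 1 - 1/m
      (∀ J : Finset (Fin N), ∀ α : Fin N → Fin m → Bool,
        (S.filter (fun y => ∀ i ∈ J, y i = α i)).card * 2 ^ ((m - 1) * J.card) ≤ S.card) ∧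
      -- (3) outside any small I, the output is never all-zero
      (∀ I : Finset (Fin N), (I.card : ℝ) ≤ (K - 1) * Δ →
        ∀ x : Fin N → Fin m, ∀ y ∈ S, ∃ i, i ∉ I ∧ INDN x y i = true) := by
  classical
  set t : ℕ := ⌊(K - 1) * (Δ : ℝ)⌋₊ + 1 with hts
  have hΔR : (1 : ℝ) ≤ (Δ : ℝ) := by exact_mod_cast hΔ
  have hK0 : (0 : ℝ) < K := lt_of_lt_of_le one_pos hK
  have hKΔ : (0 : ℝ) < K * Δ := mul_pos hK0 (by linarith)
  have hmulN : (2 : ℝ) ^ m * (K * Δ) ≤ N := (le_div_iff₀ hKΔ).mp hsize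
  have hflo : (⌊(K - 1) * (Δ : ℝ)⌋₊ : ℝ) ≤ (K - 1) * Δ :=
    Nat.floor_le (mul_nonneg (by linarith) (by linarith))
  have htR : (t : ℝ) ≤ K * Δ := by
    rw [hts]; push_cast; nlinarith [hflo, hΔR]
  have htN : t * 2 ^ m ≤ N := by
    have hstep : (t : ℝ) * 2 ^ m ≤ (N : ℝ) := by
      calc (t : ℝ) * 2 ^ m ≤ (K * Δ) * 2 ^ m :=
            mul_le_mul_of_nonneg_right htR (by positivity)
        _ = 2 ^ m * (K * Δ) := by ring
        _ ≤ N := hmulN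
    exact_mod_cast hstep
  have ht1 : 1 ≤ t := by omega
  set S : Finset (Fin N → Fin m → Bool) := Finset.univ.filter (fun y =>
    t ≤ (Finset.univ.filter (fun i => y i = fun _ => true)).card) with hS
  have hg : 2 ^ (m * N - 1) ≤ S.card := good_card N m t hm hN ht1 htN
  have hmn : 0 < m * N := Nat.mul_pos hm hN
  have hpow2 : 2 ^ (m * N - 1) * 2 = 2 ^ (m * N) := by
    rw [← pow_succ]; congr 1; omega
  refine ⟨S, ?_, ?_, ?_⟩
  · refine le_trans ?_ hg
    exact Nat.pow_le_pow_right (by norm_num) (Nat.sub_le_sub_left hΔ (m * N))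
  · intro J α
    rcases Finset.eq_empty_or_nonempty J with rfl | hJ
    · simpa using Finset.card_filter_le S (fun y => ∀ i ∈ (∅ : Finset (Fin N)), y i = α i)
    · have hc1 : 1 ≤ J.card := hJ.card_pos
      have hcN : J.card ≤ N := by
        have := Finset.card_le_univ J
        simpa using this
      have h1 : (S.filter (fun y => ∀ i ∈ J, y i = α i)).card
          ≤ (Finset.univ.filter (fun y : Fin N → Fin m → Bool => ∀ i ∈ J, y i = α i)).card :=
        Finset.card_le_card (Finset.filter_subset_filter _ (Finset.subset_univ S))
      have h2 := agree_card N m J α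
      rw [← pow_mul] at h2
      have h3 : (S.filter (fun y => ∀ i ∈ J, y i = α i)).card ≤ 2 ^ (m * (N - J.card)) :=
        h1.trans h2
      have e1 : (m - 1) * J.card + J.card = m * J.card := by
        have hm1 : m - 1 + 1 = m := Nat.succ_pred_eq_of_pos hm
        calc (m - 1) * J.card + J.card = (m - 1 + 1) * J.card := by ring
          _ = m * J.card := by rw [hm1]
      have e2 : m * (N - J.card) + m * J.card = m * N := by
        rw [← Nat.mul_add, Nat.sub_add_cancel hcN]
      have hE : m * (N - J.card) + (m - 1) * J.card + J.card = m * N := by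
        rw [Nat.add_assoc, e1]; exact e2
      refine Nat.le_of_mul_le_mul_right ?_ (show 0 < 2 by norm_num)
      calc (S.filter (fun y => ∀ i ∈ J, y i = α i)).card * 2 ^ ((m - 1) * J.card) * 2
          ≤ 2 ^ (m * (N - J.card)) * 2 ^ ((m - 1) * J.card) * 2 ^ J.card := by
            refine Nat.mul_le_mul (Nat.mul_le_mul_right _ h3) ?_
            calc 2 = 2 ^ 1 := (pow_one 2).symm
              _ ≤ 2 ^ J.card := Nat.pow_le_pow_right (by norm_num) hc1
        _ = 2 ^ (m * N) := by rw [← pow_add, ← pow_add, hE]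
        _ = 2 ^ (m * N - 1) * 2 := hpow2.symm
        _ ≤ S.card * 2 := Nat.mul_le_mul_right _ hg
  · intro I hI x y hy
    rw [hS, Finset.mem_filter] at hy
    have hIcard : I.card ≤ ⌊(K - 1) * (Δ : ℝ)⌋₊ := Nat.le_floor hI
    have hlt : I.card < t := by rw [hts]; exact Nat.lt_succ_of_le hIcard
    have hnsub : ¬ (Finset.univ.filter (fun i => y i = fun _ => true)) ⊆ I := by
      intro hsub
      have hcc := Finset.card_le_card hsub
      exact absurd (hy.2.trans hcc) (Nat.not_le.mpr hlt)
    obtain ⟨i, hi1, hi2⟩ := Finset.not_subset.mp hnsub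
    refine ⟨i, hi2, ?_⟩
    have hyi : y i = fun _ => true := (Finset.mem_filter.mp hi1).2
    simp [INDN, hyi]
end

section
/- Let N, m, Δ be positive integers with Δ dividing N, and let K ≥ 1 be a real number such that (2^m : ℝ) ≤ N / (K·Δ). Then there exists a finite set S of functions Fin N → (Fin m → Bool) with |S| ≥ 2^(m·N − Δ) such that for every subset I ⊆ Fin N with (|I| : ℝ) ≤ (K−1)·Δ and for every partial assignment γ : Fin N → Bool, there exists z : Fin N → Bool with z i = γ i for all i ∈ I such that no pair (x, y) with x : Fin N → Fin m and y ∈ S satisfies IND_m^N(x,y) = z. (That is, taking 𝒳 to be the full set of Alice inputs, which has entropy deficiency 0, and 𝒴 = S, which has deficiency at most Δ, the set IND_m^N(𝒳, 𝒴) contains no sub-cube of co-dimension at most (K−1)·Δ; this refutes the conjecture of Lovett, Meka, Mertz, Pitassi and Zhang for such parameters.) -/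
open Finset

/-! ### Auxiliary lemmas: a binomial "median" inequality -/

lemma LMMPZ.pair_ineq (M' i u e : ℕ) :
    i * (i + 2*u) * (M'+1)^2 ≤ ((i+u)*(M'+1) + u + e + 1) * ((i+u)*M' + i + e + 1) := by
  have h : ((i+u)*(M'+1) + u + e + 1) * ((i+u)*M' + i + e + 1)
      = i * (i + 2*u) * (M'+1)^2
        + (1 + 2*e + e^2 + 2*u + 2*u*M' + 2*u*e + 2*u*e*M' + 2*u^2*M' + u^2*M'^2
           + 2*i + 2*i*M' + 2*i*e + 2*i*e*M') := by ring
  omega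

/-- the weight of level `j` -/
def LMMPZ.cc (M n j : ℕ) : ℕ := n.choose j * (M-1)^(n-j)

namespace LMMPZ

lemma cc_succ_identity (M n k : ℕ) (hk : k < n) :
    cc M n (k+1) * ((k+1)*(M-1)) = cc M n k * (n - k) := by
  unfold cc
  have h : n - k = (n - (k+1)) + 1 := by omega
  calc n.choose (k+1) * (M-1)^(n-(k+1)) * ((k+1)*(M-1))
      = (n.choose (k+1) * (k+1)) * ((M-1)^(n-(k+1)) * (M-1)) := by ring
    _ = (n.choose k * (n - k)) * (M-1)^(n-k) := by
        rw [Nat.choose_succ_right_eq, h, pow_succ]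
    _ = n.choose k * (M-1)^(n-k) * (n-k) := by ring

lemma cc_reflect (M t n : ℕ) (hM : 2 ≤ M) (ht : 1 ≤ t) (hn : t * M ≤ n) :
    ∀ d, d < t → cc M n (t - 1 - d) ≤ cc M n (t + d) := by
  have h2t : 2 * t ≤ n := by nlinarith
  intro d
  induction d with
  | zero =>
    intro _
    have hid := cc_succ_identity M n (t-1) (by omega)
    have hrw : t - 1 + 1 = t := by omega
    rw [hrw] at hid
    have hle : t * (M-1) ≤ n - (t-1) := by
      have : t * M = t * (M-1) + t := by
        have : M = (M-1) + 1 := by omega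
        nth_rewrite 1 [this]; ring
      omega
    have : cc M n (t-1) * (n - (t-1)) ≤ cc M n t * (n - (t-1)) := by
      rw [← hid]
      exact Nat.mul_le_mul_left _ hle
    exact Nat.le_of_mul_le_mul_right this (by omega)
  | succ d ih =>
    intro hd
    have ihh := ih (by omega)
    set j := t - 1 - (d+1) with hj
    have hj1 : j + 1 = t - 1 - d := by omega
    have hI1 := cc_succ_identity M n j (by omega)
    have hI2 := cc_succ_identity M n (t+d) (by omega)
    have hpair : (j+1) * ((t+d)+1) * (M-1)^2 ≤ (n - j) * (n - (t+d)) := by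
      have key := pair_ineq (M-2) (j+1) (d+1) (n - t*M)
      have e1 : (j+1) + (d+1) = t := by omega
      have e2 : (M-2)+1 = M-1 := by omega
      have e3 : (j+1) + 2*(d+1) = t + d + 1 := by omega
      have e4 : t*(M-1) + (d+1) + (n - t*M) + 1 = n - j := by
        have : t * M = t * (M-1) + t := by
          have : M = (M-1) + 1 := by omega
          nth_rewrite 1 [this]; ring
        omega
      have e5 : t*(M-2) + (j+1) + (n - t*M) + 1 = n - (t+d) := by
        have : t * M = t * (M-2) + 2*t := by
          have : M = (M-2) + 2 := by omega
          nth_rewrite 1 [this]; ring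
        omega
      rw [e1, e2, e3, e4, e5] at key
      exact key
    have chain : cc M n j * ((n - j) * (((t+d)+1)*(M-1)))
        ≤ cc M n (t+d+1) * ((n - j) * (((t+d)+1)*(M-1))) := by
      calc cc M n j * ((n - j) * (((t+d)+1)*(M-1)))
          = (cc M n j * (n - j)) * (((t+d)+1)*(M-1)) := by ring
        _ = (cc M n (j+1) * ((j+1)*(M-1))) * (((t+d)+1)*(M-1)) := by rw [hI1]
        _ = cc M n (j+1) * ((j+1) * ((t+d)+1) * (M-1)^2) := by ring
        _ ≤ cc M n (t+d) * ((j+1) * ((t+d)+1) * (M-1)^2) := by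
            apply Nat.mul_le_mul_right
            rw [hj1]; exact ihh
        _ ≤ cc M n (t+d) * ((n - j) * (n - (t+d))) := Nat.mul_le_mul_left _ hpair
        _ = (cc M n (t+d) * (n - (t+d))) * (n - j) := by ring
        _ = (cc M n (t+d+1) * ((t+d+1)*(M-1))) * (n - j) := by rw [hI2]
        _ = cc M n (t+d+1) * ((n - j) * (((t+d)+1)*(M-1))) := by ring
    have hpos : 0 < (n - j) * (((t+d)+1)*(M-1)) := by
      have h1 : 0 < n - j := by omega
      have h2 : 0 < M - 1 := by omega
      positivity
    exact Nat.le_of_mul_le_mul_right chain hpos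

/-- The binomial median inequality: for `t·M ≤ n`, at least half (by weight) of `[M]^n`
has at least `t` coordinates equal to a fixed symbol. -/
lemma median_sum (M t n : ℕ) (hM : 2 ≤ M) (ht : 1 ≤ t) (hn : t * M ≤ n) :
    M ^ n ≤ 2 * ∑ j ∈ Finset.Icc t n, cc M n j := by
  have h2t : 2 * t ≤ n := by nlinarith
  have htotal : ∑ j ∈ Finset.range (n+1), cc M n j = M ^ n := by
    have h1 : ((M-1) + 1 : ℕ) = M := by omega
    have h2 := add_pow (1 : ℕ) (M-1) n
    simp only [one_pow, one_mul] at h2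
    rw [add_comm] at h2
    rw [h1] at h2
    rw [h2]
    exact Finset.sum_congr rfl (fun j _ => by simp only [LMMPZ.cc, Nat.cast_id]; ring)
  have hsplit : ∑ j ∈ Finset.range t, cc M n j + ∑ j ∈ Finset.Ico t (n+1), cc M n j
      = ∑ j ∈ Finset.range (n+1), cc M n j :=
    Finset.sum_range_add_sum_Ico _ (by omega)
  rw [Finset.Ico_add_one_right_eq_Icc] at hsplit
  have hlow : ∑ j ∈ Finset.range t, cc M n j ≤ ∑ j ∈ Finset.Icc t n, cc M n j := by
    have h1 : ∑ j ∈ Finset.range t, cc M n j = ∑ d ∈ Finset.range t, cc M n (t - 1 - d) :=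
      (Finset.sum_range_reflect (fun j => cc M n j) t).symm
    have h2 : ∑ d ∈ Finset.range t, cc M n (t - 1 - d) ≤ ∑ d ∈ Finset.range t, cc M n (t + d) :=
      Finset.sum_le_sum (fun d hd => cc_reflect M t n hM ht hn d (Finset.mem_range.mp hd))
    have h3 : ∑ d ∈ Finset.range t, cc M n (t + d) = ∑ j ∈ Finset.Ico t (2*t), cc M n j := by
      rw [Finset.sum_Ico_eq_sum_range]
      apply Finset.sum_congr (by congr 1; omega) (fun d _ => by rw [add_comm])
    have h4 : ∑ j ∈ Finset.Ico t (2*t), cc M n j ≤ ∑ j ∈ Finset.Icc t n, cc M n j := by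
      apply Finset.sum_le_sum_of_subset
      intro x hx
      simp only [Finset.mem_Ico, Finset.mem_Icc] at *
      omega
    omega
  omega

/-! ### Counting functions by the number of all-`false` rows -/

def zrow (m : ℕ) : Fin m → Bool := fun _ => false

def zset (N m : ℕ) (y : Fin N → Fin m → Bool) : Finset (Fin N) :=
  Finset.univ.filter (fun i => y i = zrow m)

lemma card_fiber (N m : ℕ) (s : Finset (Fin N)) :
    ((Finset.univ : Finset (Fin N → Fin m → Bool)).filter (fun y => zset N m y = s)).card
      = (2^m - 1)^(N - s.card) := by
  have hset : (Finset.univ : Finset (Fin N → Fin m → Bool)).filter (fun y => zset N m y = s)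
      = Fintype.piFinset
          (fun i => if i ∈ s then ({zrow m} : Finset (Fin m → Bool)) else {zrow m}ᶜ) := by
    ext y
    simp only [Finset.mem_filter, Finset.mem_univ, true_and, Fintype.mem_piFinset, zset,
      Finset.ext_iff, Finset.mem_filter, Finset.mem_univ, true_and]
    constructor
    · intro h i
      by_cases hi : i ∈ s
      · simp [hi, (h i).mpr hi]
      · simp only [hi, if_neg, Finset.mem_compl, Finset.mem_singleton]
        simpa [hi] using (h i)
    · intro h i
      have hi := h i
      by_cases his : i ∈ s <;> simp [his] at hi <;> simp [his, hi]
  rw [hset, Fintype.card_piFinset]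
  have hcardrow : Fintype.card (Fin m → Bool) = 2^m := by simp
  have h1 : ∀ i : Fin N, (if i ∈ s then ({zrow m} : Finset (Fin m → Bool)) else {zrow m}ᶜ).card
      = if i ∈ s then 1 else 2^m - 1 := by
    intro i
    by_cases hi : i ∈ s <;> simp [hi, Finset.card_compl, hcardrow]
  rw [Finset.prod_congr rfl (fun i _ => h1 i), Finset.prod_ite]
  simp only [Finset.prod_const_one, one_mul, Finset.prod_const]
  congr 1
  have h2 : Finset.univ.filter (fun i => ¬ i ∈ s) = sᶜ := by
    ext i; simp [Finset.mem_compl]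
  rw [h2, Finset.card_compl]
  simp

lemma card_level (N m j : ℕ) :
    ((Finset.univ : Finset (Fin N → Fin m → Bool)).filter
        (fun y => (zset N m y).card = j)).card
      = N.choose j * (2^m - 1)^(N - j) := by
  rw [Finset.card_eq_sum_card_fiberwise
    (f := fun y => zset N m y) (t := Finset.powersetCard j Finset.univ)
    (fun y hy => by
      simp only [Finset.mem_coe, Finset.mem_filter] at hy
      simpa [Finset.mem_powersetCard_univ] using hy.2)]
  have hfib : ∀ s ∈ Finset.powersetCard j (Finset.univ : Finset (Fin N)),
      (((Finset.univ : Finset (Fin N → Fin m → Bool)).filter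
          (fun y => (zset N m y).card = j)).filter (fun y => zset N m y = s)).card
        = (2^m - 1)^(N - j) := by
    intro s hs
    have hsc : s.card = j := (Finset.mem_powersetCard_univ).mp hs
    rw [Finset.filter_filter]
    have hiff : ∀ y : Fin N → Fin m → Bool,
        ((zset N m y).card = j ∧ zset N m y = s) ↔ zset N m y = s := by
      intro y; constructor
      · exact fun h => h.2
      · intro h; exact ⟨by rw [h, hsc], h⟩
    simp only [hiff]
    rw [card_fiber N m s, hsc]
  rw [Finset.sum_congr rfl hfib, Finset.sum_const, Finset.card_powersetCard, Finset.card_univ,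
    Fintype.card_fin, smul_eq_mul]

/-- the set of Bob inputs with at least `t` all-`false` rows is at least half of all inputs -/
lemma card_S (N m t : ℕ) (hm : 1 ≤ m) (ht : 1 ≤ t) (hn : t * 2^m ≤ N) :
    2^(m*N) ≤ 2 * ((Finset.univ : Finset (Fin N → Fin m → Bool)).filter
        (fun y => t ≤ (zset N m y).card)).card := by
  have hM : 2 ≤ 2^m := by
    calc 2 = 2^1 := (pow_one 2).symm
    _ ≤ 2^m := Nat.pow_le_pow_right (by norm_num) hm
  have hcard : ((Finset.univ : Finset (Fin N → Fin m → Bool)).filter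
      (fun y => t ≤ (zset N m y).card)).card = ∑ j ∈ Finset.Icc t N, cc (2^m) N j := by
    rw [Finset.card_eq_sum_card_fiberwise
      (f := fun y => (zset N m y).card) (t := Finset.Icc t N)
      (fun y hy => by
        simp only [Finset.mem_coe, Finset.mem_filter] at hy
        simp only [Finset.mem_coe, Finset.mem_Icc]
        exact ⟨hy.2, by
          calc (zset N m y).card ≤ (Finset.univ : Finset (Fin N)).card :=
            Finset.card_le_card (Finset.filter_subset _ _)
          _ = N := by simp⟩)]
    apply Finset.sum_congr rfl
    intro j hj
    have hjt : t ≤ j := (Finset.mem_Icc.mp hj).1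
    rw [Finset.filter_filter]
    have hiff : ∀ y : Fin N → Fin m → Bool,
        (t ≤ (zset N m y).card ∧ (zset N m y).card = j) ↔ (zset N m y).card = j := by
      intro y; constructor
      · exact fun h => h.2
      · intro h; exact ⟨by omega, h⟩
    simp only [hiff]
    rw [card_level N m j]
    rfl
  rw [hcard]
  calc 2^(m*N) = (2^m)^N := by rw [← pow_mul]
  _ ≤ 2 * ∑ j ∈ Finset.Icc t N, cc (2^m) N j := median_sum (2^m) t N hM ht hn

end LMMPZ

/-- Refutation of the LMMPZ conjecture: there is a set `S` of Bob-inputs with entropy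
deficiency at most `Δ` such that, with Alice's side being the full set `[m]^N` (of
deficiency 0), the set `IND_m^N([m]^N, S)` contains no sub-cube of co-dimension at
most `(K-1)·Δ`. -/
theorem stmt1 (N m Δ : ℕ) (hN : 0 < N) (hm : 0 < m) (hΔ : 0 < Δ) (hdvd : Δ ∣ N)
    (K : ℝ) (hK : 1 ≤ K) (hsize : (2 : ℝ) ^ m ≤ (N : ℝ) / (K * Δ)) :
    ∃ S : Finset (Fin N → Fin m → Bool),
      2 ^ (m * N - Δ) ≤ S.card ∧
      ∀ I : Finset (Fin N), (I.card : ℝ) ≤ (K - 1) * Δ →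
        ∀ γ : Fin N → Bool,
          ∃ z : Fin N → Bool, (∀ i ∈ I, z i = γ i) ∧
            ∀ (x : Fin N → Fin m), ∀ y ∈ S, INDN x y ≠ z := by
  classical
  set t : ℕ := Nat.floor ((K-1) * Δ) + 1 with htdef
  use (Finset.univ : Finset (Fin N → Fin m → Bool)).filter
    (fun y => t ≤ (LMMPZ.zset N m y).card)
  have hKΔ : (0:ℝ) < K * Δ := by
    have : (0:ℝ) < (Δ:ℝ) := by exact_mod_cast hΔ
    nlinarith
  -- the key size hypothesis: t * 2^m ≤ N
  have htN : t * 2^m ≤ N := by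
    have h1 : ((t:ℝ)) ≤ K * Δ := by
      have hfl : (Nat.floor ((K-1) * Δ) : ℝ) ≤ (K-1) * Δ :=
        Nat.floor_le (by
          have : (0:ℝ) ≤ (Δ:ℝ) := by positivity
          nlinarith)
      have hΔ1 : (1:ℝ) ≤ (Δ:ℝ) := by exact_mod_cast hΔ
      have : (t:ℝ) = (Nat.floor ((K-1) * Δ) : ℝ) + 1 := by
        rw [htdef]; push_cast; ring
      rw [this]
      nlinarith
    have h2 : K * Δ * 2^m ≤ N := by
      rw [le_div_iff₀ hKΔ] at hsize
      calc K * Δ * 2^m = 2^m * (K * Δ) := by ring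
      _ ≤ N := hsize
    have h3 : ((t * 2^m : ℕ) : ℝ) ≤ (N:ℝ) := by
      rw [Nat.cast_mul, Nat.cast_pow, Nat.cast_ofNat]
      calc (t:ℝ) * 2^m ≤ (K * Δ) * 2^m := by
            apply mul_le_mul_of_nonneg_right h1 (by positivity)
      _ ≤ N := h2
    exact_mod_cast h3
  constructor
  · -- size bound
    have hhalf := LMMPZ.card_S N m t hm (by omega) htN
    have hmN : 1 ≤ m * N := Nat.one_le_iff_ne_zero.mpr (by positivity)
    have hsplit : 2^(m*N) = 2^(m*N-1) * 2 := by
      rw [← pow_succ]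
      congr 1
      omega
    have h1 : 2^(m*N-1) ≤ ((Finset.univ : Finset (Fin N → Fin m → Bool)).filter
        (fun y => t ≤ (LMMPZ.zset N m y).card)).card := by omega
    calc (2:ℕ)^(m*N-Δ) ≤ 2^(m*N-1) := Nat.pow_le_pow_right (by norm_num) (by omega)
    _ ≤ _ := h1
  · -- avoidance
    intro I hI γ
    have hIt : I.card < t := by
      have : I.card ≤ Nat.floor ((K-1) * Δ) := Nat.le_floor hI
      omega
    refine ⟨fun i => if i ∈ I then γ i else true, fun i hi => by simp [hi], ?_⟩
    intro x y hy heq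
    simp only [Finset.mem_filter, Finset.mem_univ, true_and] at hy
    -- find an all-false row outside I
    have hnot : ¬ (LMMPZ.zset N m y ⊆ I) := by
      intro hsub
      have := Finset.card_le_card hsub
      omega
    obtain ⟨i, hiz, hiI⟩ := Finset.not_subset.mp hnot
    have hrow : y i = LMMPZ.zrow m := (Finset.mem_filter.mp hiz).2
    have := congrFun heq i
    simp only [INDN, hrow, LMMPZ.zrow, hiI, if_neg] at this
    exact Bool.false_ne_true this
end

section
/- Let N ≥ 1 and m be natural numbers and let α be a real number with 0 < α ≤ 1 such that (2^m : ℝ) ≤ N^(1−α). Then there exists a finite set S of functions Fin N → (Fin m → Bool) with |S| ≥ 2^(m·N − 1) such that for every subset I ⊆ Fin N: if there exist x : Fin N → Fin m and y ∈ S with y i (x i) = false for all i ∉ I, then (|I| : ℝ) ≥ N^α − 1. (Hence when m ≤ (1−α)·log₂ N, any set I of coordinates witnessing the disperser condition in the conjecture of Lovett et al. must have size Ω(N^α), independent of the deficiency bound.) -/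
open Finset

private lemma fstep2 (n k d : ℕ) (hk : k < n) :
    n.choose k * d ^ (n - k) * (n - k) = n.choose (k+1) * d ^ (n - (k+1)) * ((k+1) * d) := by
  have h1 : n.choose (k+1) * (k+1) = n.choose k * (n - k) := Nat.choose_succ_right_eq n k
  have h2 : n - k = (n - (k+1)) + 1 := by omega
  calc n.choose k * d ^ (n - k) * (n - k)
      = (n.choose k * (n - k)) * d ^ (n - k) := by ring
    _ = (n.choose (k+1) * (k+1)) * (d ^ (n - (k+1)) * d) := by rw [← h1, h2, pow_succ]
    _ = n.choose (k+1) * d ^ (n - (k+1)) * ((k+1) * d) := by ring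

private lemma arith2 (t d j nn : ℤ) (hd : 1 ≤ d) (hj : 0 ≤ j) (hjt : j + 2 ≤ t)
    (hn : (d+1)*t ≤ nn) :
    (t-1-j)*d*((t+j+1)*d) ≤ (nn-(t+j))*(nn-(t-2-j)) := by
  have hdt : d * t ≤ nn - t := by nlinarith
  have hdt0 : 0 ≤ d * t := by nlinarith
  have hX2 : (d*t)*(d*t) ≤ (nn-t)*(nn-t) := mul_le_mul hdt hdt hdt0 (le_trans hdt0 hdt)
  have hdd : (1:ℤ) ≤ d * d := by nlinarith
  have h2 : 0 ≤ (d*d - 1) * ((j+1)*(j+1)) := mul_nonneg (by linarith) (mul_self_nonneg _)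
  nlinarith [hX2, h2, hdt, hdt0]

private lemma fpair2 (n t d : ℕ) (hd : 1 ≤ d) (ht : 1 ≤ t) (hn : (d+1)*t ≤ n) :
    ∀ j, j ≤ t - 1 →
      n.choose (t - 1 - j) * d ^ (n - (t - 1 - j)) ≤ n.choose (t + j) * d ^ (n - (t + j)) := by
  have h2t : 2 * t ≤ n := le_trans (Nat.mul_le_mul_right t (by omega)) hn
  have hdt : d * t + t ≤ n := by
    calc d * t + t = (d+1) * t := by ring
      _ ≤ n := hn
  intro j
  induction j with
  | zero =>
    intro _
    have e := fstep2 n (t-1) d (by omega)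
    have ht1 : t - 1 + 1 = t := by omega
    rw [ht1] at e
    have hge : t * d + 1 ≤ n - (t-1) := by
      have : d * t = t * d := by ring
      omega
    have hle : n.choose (t-1) * d ^ (n - (t-1)) * (t * d)
        ≤ n.choose t * d ^ (n - t) * (t * d) := by
      calc n.choose (t-1) * d ^ (n - (t-1)) * (t * d)
          ≤ n.choose (t-1) * d ^ (n - (t-1)) * (n - (t-1)) :=
            Nat.mul_le_mul_left _ (by omega)
        _ = n.choose t * d ^ (n - t) * (t * d) := e
    have hpos : 0 < t * d := by positivity
    simpa using Nat.le_of_mul_le_mul_right hle hpos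
  | succ j ih =>
    intro hj
    have hjt : j + 2 ≤ t := by omega
    have IH := ih (by omega)
    have e1 : t - 1 - (j+1) + 1 = t - 1 - j := by omega
    set A := t - 1 - (j+1) with hA
    rw [← e1] at IH
    have hAn : A < n := by omega
    have hbn : t + j < n := by omega
    have I1 := fstep2 n A d hAn
    have I2 := fstep2 n (t+j) d hbn
    have harith : ((A+1)*d) * ((t+j+1)*d) ≤ (n - (t+j)) * (n - A) := by
      have hz := arith2 (t:ℤ) (d:ℤ) (j:ℤ) (n:ℤ) (by exact_mod_cast hd) (by positivity)
        (by exact_mod_cast hjt) (by exact_mod_cast hn)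
      have hA' : (A:ℤ) = (t:ℤ) - 2 - (j:ℤ) := by omega
      have h1 : ((A:ℤ)+1) = (t:ℤ) - 1 - j := by omega
      have h2 : ((n:ℤ) - (t+j)) = ((n - (t+j) : ℕ) : ℤ) := by omega
      have h3 : ((n:ℤ) - A) = ((n - A : ℕ) : ℤ) := by omega
      have hfin : (((A+1)*d : ℕ) : ℤ) * (((t+j+1)*d : ℕ) : ℤ)
          ≤ (((n-(t+j)) : ℕ) : ℤ) * (((n - A) : ℕ) : ℤ) := by
        push_cast
        rw [← h2, ← h3]
        calc ((A:ℤ)+1)*d*(((t:ℤ)+j+1)*d) = ((t:ℤ)-1-j)*d*(((t:ℤ)+j+1)*d) := by rw [h1]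
          _ ≤ ((n:ℤ)-(t+j))*((n:ℤ)-(t-2-j)) := hz
          _ = ((n:ℤ) - (t+j)) * ((n:ℤ) - A) := by rw [hA']
      exact_mod_cast hfin
    set f : ℕ → ℕ := fun k => n.choose k * d ^ (n - k) with hf
    have goalmul : f A * ((n - A) * ((t+j+1)*d)) ≤ f (t+j+1) * ((n - A) * ((t+j+1)*d)) := by
      calc f A * ((n - A) * ((t+j+1)*d))
          = (f A * (n - A)) * ((t+j+1)*d) := by ring
        _ = (f (A+1) * ((A+1)*d)) * ((t+j+1)*d) := by rw [hf]; simp only []; rw [I1]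
        _ = f (A+1) * (((A+1)*d) * ((t+j+1)*d)) := by ring
        _ ≤ f (t+j) * ((n - (t+j)) * (n - A)) := Nat.mul_le_mul IH harith
        _ = (f (t+j) * (n - (t+j))) * (n - A) := by ring
        _ = (f (t+j+1) * ((t+j+1)*d)) * (n - A) := by rw [hf]; simp only []; rw [I2]
        _ = f (t+j+1) * ((n - A) * ((t+j+1)*d)) := by ring
    have hpos : 0 < (n - A) * ((t+j+1)*d) := by
      have : 0 < n - A := by omega
      positivity
    have hres := Nat.le_of_mul_le_mul_right goalmul hpos
    have e2 : t + (j+1) = t + j + 1 := by omega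
    rw [e2]
    exact hres

private lemma halfsum2 (n t d : ℕ) (hd : 1 ≤ d) (ht : 1 ≤ t) (hn : (d+1)*t ≤ n) :
    (d+1)^n ≤ 2 * ∑ k ∈ Ico t (n+1), n.choose k * d^(n-k) := by
  set f : ℕ → ℕ := fun k => n.choose k * d ^ (n - k) with hf
  have h2t : 2 * t ≤ n := le_trans (Nat.mul_le_mul_right t (by omega)) hn
  have htot : ∑ k ∈ range (n+1), f k = (d+1)^n := by
    have h := add_pow (1:ℕ) d n
    rw [add_comm] at h
    rw [h]
    refine sum_congr rfl fun k _ => ?_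
    simp [hf, mul_comm]
  have hsplit : (∑ k ∈ Ico 0 t, f k) + (∑ k ∈ Ico t (n+1), f k) = ∑ k ∈ Ico 0 (n+1), f k :=
    sum_Ico_consecutive f (Nat.zero_le t) (by omega)
  have hpair : ∑ k ∈ Ico 0 t, f k ≤ ∑ k ∈ Ico t (n+1), f k := by
    calc ∑ k ∈ Ico 0 t, f k = ∑ k ∈ range t, f k := by rw [range_eq_Ico]
      _ = ∑ j ∈ range t, f (t-1-j) := (sum_range_reflect f t).symm
      _ ≤ ∑ j ∈ range t, f (t+j) := by
          refine sum_le_sum fun j hj => ?_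
          exact fpair2 n t d hd ht hn j (by have := mem_range.1 hj; omega)
      _ = ∑ k ∈ Ico t (t+t), f k := by
          rw [sum_Ico_eq_sum_range]
          simp
      _ ≤ ∑ k ∈ Ico t (n+1), f k :=
          sum_le_sum_of_subset (Ico_subset_Ico le_rfl (by omega))
  have hr : ∑ k ∈ Ico 0 (n+1), f k = ∑ k ∈ range (n+1), f k := by rw [range_eq_Ico]
  have hfin : (d+1)^n ≤ 2 * ∑ k ∈ Ico t (n+1), f k := by
    rw [← htot, ← hr, ← hsplit]; omega
  exact hfin

private lemma countS2 (N m t : ℕ) :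
    ∑ k ∈ Ico t (N+1), N.choose k * (2^m - 1)^(N-k) ≤
      (univ.filter (fun y : Fin N → Fin m → Bool =>
        t ≤ (univ.filter (fun i => y i = fun _ => true)).card)).card := by
  set d := 2^m - 1 with hd
  set allT : Fin m → Bool := fun _ => true with hallT
  have hcardfun : Fintype.card (Fin m → Bool) = 2^m := by simp
  set part : Finset (Fin N) → Finset (Fin N → Fin m → Bool) :=
    fun T => Fintype.piFinset (fun i => if i ∈ T then {allT} else {allT}ᶜ) with hpart
  have hmem : ∀ T y, y ∈ part T → (univ.filter fun i => y i = allT) = T := by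
    intro T y hy
    ext i
    simp only [mem_filter, mem_univ, true_and]
    have hi := Fintype.mem_piFinset.1 hy i
    by_cases hiT : i ∈ T
    · simp only [hiT, if_pos] at hi
      simp only [mem_singleton] at hi
      simp [hiT, hi]
    · simp only [hiT, if_neg, not_false_iff] at hi
      simp only [mem_compl, mem_singleton] at hi
      simp [hiT, hi]
  have hcardpart : ∀ T : Finset (Fin N), (part T).card = d ^ (N - T.card) := by
    intro T
    rw [hpart]
    simp only []
    rw [Fintype.card_piFinset]
    have he : ∀ i : Fin N, ((if i ∈ T then ({allT} : Finset (Fin m → Bool)) else {allT}ᶜ)).card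
        = if i ∈ T then 1 else d := by
      intro i
      split
      · simp
      · rw [card_compl, hcardfun]; simp [hd]
    rw [Finset.prod_congr rfl (fun i _ => he i), Finset.prod_ite, prod_const_one, one_mul,
      prod_const]
    have h3 : univ.filter (fun i => ¬ i ∈ T) = Tᶜ := by ext i; simp
    rw [h3, card_compl]
    simp
  set KS := (univ.powerset.filter fun T : Finset (Fin N) => t ≤ T.card) with hKS
  have hdisj : ∀ T ∈ KS, ∀ T' ∈ KS, T ≠ T' → Disjoint (part T) (part T') := by
    intro T _ T' _ hne
    rw [Finset.disjoint_left]
    intro y hy hy'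
    exact hne ((hmem T y hy).symm.trans (hmem T' y hy'))
  have hBsub : KS.biUnion part ⊆
      univ.filter (fun y : Fin N → Fin m → Bool =>
        t ≤ (univ.filter (fun i => y i = allT)).card) := by
    intro y hy
    rcases Finset.mem_biUnion.1 hy with ⟨T, hT, hyT⟩
    rw [mem_filter]
    refine ⟨mem_univ _, ?_⟩
    rw [hmem T y hyT]
    exact (Finset.mem_filter.1 hT).2
  have hcardB : (KS.biUnion part).card = ∑ T ∈ KS, d ^ (N - T.card) := by
    rw [Finset.card_biUnion hdisj]
    exact sum_congr rfl fun T _ => hcardpart T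
  have hsum1 : ∑ T ∈ KS, d ^ (N - T.card) = ∑ k ∈ Ico t (N+1), N.choose k * d^(N-k) := by
    have hdecomp : KS = (Ico t (N+1)).biUnion
        (fun k => (univ : Finset (Fin N)).powersetCard k) := by
      ext T
      simp only [hKS, mem_filter, mem_powerset, mem_biUnion, mem_Ico, mem_powersetCard]
      constructor
      · rintro ⟨hsub, hle⟩
        exact ⟨T.card, ⟨hle, by have := card_le_univ T; simp at this; omega⟩, hsub, rfl⟩
      · rintro ⟨k, ⟨h1, _⟩, hsub, hk⟩
        exact ⟨hsub, hk ▸ h1⟩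
    rw [hdecomp, Finset.sum_biUnion]
    · refine sum_congr rfl fun k hk => ?_
      rw [Finset.sum_congr rfl (fun T hT => by rw [(mem_powersetCard.1 hT).2])]
      rw [sum_const, Finset.card_powersetCard, card_univ, Fintype.card_fin, smul_eq_mul]
    · intro k hk k' hk' hne
      rw [Function.onFun, Finset.disjoint_left]
      intro T hT hT'
      exact hne (((mem_powersetCard.1 hT).2.symm).trans (mem_powersetCard.1 hT').2)
  calc ∑ k ∈ Ico t (N+1), N.choose k * d^(N-k)
      = (KS.biUnion part).card := by rw [hcardB, hsum1]
    _ ≤ _ := card_le_card hBsub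

/-- When `2^m ≤ N^(1-α)`, there is a set `S` of Bob-inputs of deficiency at most 1
such that any set `I` of coordinates witnessing the disperser condition of the
LMMPZ conjecture (the all-zero string appearing outside `I`) must have size at
least `N^α - 1`. -/
theorem stmt2 (N m : ℕ) (hN : 1 ≤ N) (α : ℝ) (hα0 : 0 < α) (hα1 : α ≤ 1)
    (hsize : (2 : ℝ) ^ m ≤ (N : ℝ) ^ ((1 : ℝ) - α)) :
    ∃ S : Finset (Fin N → Fin m → Bool),
      2 ^ (m * N - 1) ≤ S.card ∧
      ∀ I : Finset (Fin N),
        (∃ x : Fin N → Fin m, ∃ y ∈ S, ∀ i, i ∉ I → y i (x i) = false) →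
        (N : ℝ) ^ α - 1 ≤ (I.card : ℝ) := by
  by_cases hm : m = 0
  · subst hm
    refine ⟨univ, ?_, ?_⟩
    · have : (0:ℕ) * N - 1 = 0 := by omega
      rw [this, pow_zero]
      have : 0 < (univ : Finset (Fin N → Fin 0 → Bool)).card := by
        rw [card_univ]
        exact Fintype.card_pos
      omega
    · rintro I ⟨x, -⟩
      exact (x ⟨0, hN⟩).elim0
  · -- m ≥ 1
    have hm1 : 1 ≤ m := by omega
    have hq2 : 2 ≤ 2^m := by
      calc 2 = 2^1 := by norm_num
        _ ≤ 2^m := Nat.pow_le_pow_right (by norm_num) hm1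
    set t := N / 2^m with hts
    set S := univ.filter (fun y : Fin N → Fin m → Bool =>
      t ≤ (univ.filter (fun i => y i = fun _ => true)).card) with hS
    refine ⟨S, ?_, ?_⟩
    · -- cardinality bound
      by_cases ht0 : t = 0
      · have hSu : S = univ := by
          rw [hS, ht0]
          simp
        rw [hSu, card_univ]
        have hc : Fintype.card (Fin N → Fin m → Bool) = 2^(m*N) := by
          rw [Fintype.card_fun]
          simp [← pow_mul]
        rw [hc]
        exact Nat.pow_le_pow_right (by norm_num) (by omega)
      · set d := 2^m - 1 with hd
        have hd1 : 1 ≤ d := by omega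
        have hqt : (d+1)*t ≤ N := by
          have h1 : d+1 = 2^m := by omega
          rw [h1]
          calc 2^m * t = t * 2^m := by ring
            _ ≤ N := Nat.div_mul_le_self N (2^m)
        have hdq : d + 1 = 2^m := by omega
        have hpow : (d+1)^N = 2^(m*N) := by
          rw [hdq, ← pow_mul]
        have hmN : 1 ≤ m*N := by
          have := Nat.mul_pos (by omega : 0 < m) (by omega : 0 < N)
          omega
        have h2 : 2^(m*N) = 2 * 2^(m*N - 1) := by
          rw [← pow_succ']
          congr 1
          omega
        have hhalf := halfsum2 N t d hd1 (Nat.one_le_iff_ne_zero.2 ht0) hqt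
        have hcount := countS2 N m t
        rw [← hd, ← hS] at hcount
        rw [hpow, h2] at hhalf
        linarith
    · -- the disperser condition
      rintro I ⟨x, y, hyS, hxy⟩
      have hyt : t ≤ (univ.filter (fun i => y i = fun _ => true)).card :=
        (mem_filter.1 hyS).2
      have hsub : (univ.filter fun i => y i = fun _ => true) ⊆ I := by
        intro i hi
        by_contra hiI
        have h1 := hxy i hiI
        have h2 : y i = fun _ => true := (mem_filter.1 hi).2
        rw [h2] at h1
        simp at h1
      have htI : t ≤ I.card := le_trans hyt (card_le_card hsub)
      have hN0 : (0:ℝ) < N := by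
        have : (0:ℕ) < N := hN
        exact_mod_cast this
      have hlt : N < 2^m * (t+1) := by
        have h1 := Nat.div_add_mod N (2^m)
        rw [← hts] at h1
        have h2 : N % 2^m < 2^m := Nat.mod_lt _ (by omega)
        have he : 2^m*(t+1) = 2^m*t + 2^m := by ring
        omega
      have hltR : (N:ℝ) < (2:ℝ)^m * ((t:ℝ)+1) := by
        have := hlt
        push_cast
        exact_mod_cast hlt
      have hp : (0:ℝ) < (N:ℝ)^((1:ℝ)-α) := Real.rpow_pos_of_pos hN0 _
      have hmain : (N:ℝ)^α < (t:ℝ)+1 := by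
        have h1 : (N:ℝ)^α * (N:ℝ)^((1:ℝ)-α) = N := by
          rw [← Real.rpow_add hN0]
          norm_num
        have h2 : (N:ℝ) < (N:ℝ)^((1:ℝ)-α) * ((t:ℝ)+1) := by
          have h3 : (2:ℝ)^m * ((t:ℝ)+1) ≤ (N:ℝ)^((1:ℝ)-α) * ((t:ℝ)+1) :=
            mul_le_mul_of_nonneg_right hsize (by positivity)
          linarith
        have h4 : (N:ℝ)^α * (N:ℝ)^((1:ℝ)-α) < ((t:ℝ)+1) * (N:ℝ)^((1:ℝ)-α) := by
          rw [h1]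
          linarith
        exact lt_of_mul_lt_mul_right h4 (le_of_lt hp)
      have htIR : (t:ℝ) ≤ (I.card:ℝ) := by exact_mod_cast htI
      linarith
end

section
/- Let N, m be natural numbers and let K ≥ 1 be a real number with (2^m : ℝ) · K ≤ N. Then at least half of all functions y : Fin N → (Fin m → Bool) have more than K − 1 all-one blocks; that is, 2 · |{ y : Fin N → (Fin m → Bool) | ((number of indices i with y i j = true for all j) : ℝ) > K − 1 }| ≥ 2^(m·N). -/
lemma pair_nat (s j u Q : ℕ) (hu : 1 ≤ u) (h : (s + j) * u ≤ Q + j) :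
    s * (s + 2 * j) * u ^ 2 ≤ (Q + 2 * j) * Q := by
  have h2 : j ^ 2 * 1 ≤ j ^ 2 * u ^ 2 := Nat.mul_le_mul_left _ (by nlinarith)
  nlinarith [Nat.mul_le_mul h h]

/-- Key pairing inequality: `C(N,T-1-i) * (M-1)^(2i+1) ≤ C(N,T+i)` when `T*M ≤ N`. -/
lemma choose_key (N M T : ℕ) (hT : 1 ≤ T) (hTM : T * M ≤ N) :
    ∀ i, i + 1 ≤ T → N.choose (T - 1 - i) * (M - 1) ^ (2 * i + 1) ≤ N.choose (T + i) := by
  have hsub : T * (M - 1) + T = T * M ∨ M = 0 := by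
    rcases Nat.eq_zero_or_pos M with h | h
    · exact Or.inr h
    · left
      have hm : M - 1 + 1 = M := by omega
      calc T*(M-1) + T = T*((M-1)+1) := by ring
        _ = T * M := by rw [hm]
  intro i
  induction i with
  | zero =>
    intro _
    rcases le_or_gt M 1 with hM | hM
    · have : M - 1 = 0 := by omega
      simp [this]
    · have hid : N.choose ((T-1) + 1) * ((T-1)+1) = N.choose (T-1) * (N - (T-1)) :=
        Nat.choose_succ_right_eq N (T-1)
      have hT1 : (T - 1) + 1 = T := by omega
      rw [hT1] at hid
      have hle : (M - 1) * T ≤ N - (T - 1) := by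
        rcases hsub with h | h
        · have : (M-1)*T = T*(M-1) := mul_comm _ _
          omega
        · omega
      have key : N.choose (T-1) * (M-1)^(2*0+1) * T ≤ N.choose T * T := by
        calc N.choose (T-1) * (M-1)^(2*0+1) * T
            = N.choose (T-1) * ((M-1) * T) := by ring
          _ ≤ N.choose (T-1) * (N - (T-1)) := Nat.mul_le_mul_left _ hle
          _ = N.choose T * T := hid.symm
      exact Nat.le_of_mul_le_mul_right key (by omega)
  | succ i ih =>
    intro hi1
    have ih' := ih (by omega)
    rcases le_or_gt M 1 with hM | hM
    · have : M - 1 = 0 := by omega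
      simp [this]
    · set a := T - 1 - (i+1) with ha_def
      have ha1 : a + 1 = T - 1 - i := by omega
      set b := T + i with hb_def
      have hMT : T * M ≤ N := hTM
      have h2T : 2 * T ≤ N := by nlinarith
      have haN : a < N := by omega
      have hbN : b + 1 ≤ N := by omega
      have hid1 : N.choose (a + 1) * (a+1) = N.choose a * (N - a) :=
        Nat.choose_succ_right_eq N a
      have hid2 : N.choose (b + 1) * (b+1) = N.choose b * (N - b) :=
        Nat.choose_succ_right_eq N b
      have hpair : (a+1) * (b+1) * (M-1)^2 ≤ (N - a) * (N - b) := by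
        have hs : (a+1) + (i+1) = T := by omega
        have hQ : N - a = (N - b) + 2*(i+1) := by omega
        have hb2 : b + 1 = (a+1) + 2*(i+1) := by omega
        have hTu : T * (M-1) ≤ (N - b) + (i+1) := by
          rcases hsub with h | h
          · omega
          · omega
        have hp := pair_nat (a+1) (i+1) (M-1) (N-b) (by omega)
          (by rw [hs]; exact hTu)
        rw [hb2, hQ]
        exact hp
      have hpos : 0 < (b+1) * (N - a) := Nat.mul_pos (by omega) (by omega)
      have hmain : N.choose a * (M-1)^(2*(i+1)+1) * ((b+1) * (N - a)) ≤
          N.choose (b+1) * ((b+1) * (N - a)) := by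
        calc N.choose a * (M-1)^(2*(i+1)+1) * ((b+1) * (N - a))
            = (N.choose a * (N-a)) * ((b+1) * ((M-1)^(2*i+1) * (M-1)^2)) := by ring
          _ = (N.choose (a+1) * (a+1)) * ((b+1) * ((M-1)^(2*i+1) * (M-1)^2)) := by rw [hid1]
          _ = (N.choose (a+1) * (M-1)^(2*i+1)) * ((a+1) * (b+1) * (M-1)^2) := by ring
          _ ≤ N.choose b * ((N - a) * (N - b)) := by
              apply Nat.mul_le_mul
              · rw [ha1]; exact ih'
              · exact hpair
          _ = (N.choose (b+1) * (b+1)) * (N - a) := by rw [hid2]; ring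
          _ = N.choose (b+1) * ((b+1) * (N - a)) := by ring
      exact Nat.le_of_mul_le_mul_right hmain hpos


open Finset
open scoped Classical

lemma fiber_card (N m : ℕ) (S : Finset (Fin N)) :
    ((univ : Finset (Fin N → Fin m → Bool)).filter
      (fun y => (univ.filter fun i => y i = fun _ => true) = S)).card
      = (2 ^ m - 1) ^ (N - S.card) := by
  classical
  have hset : ((univ : Finset (Fin N → Fin m → Bool)).filter
      (fun y => (univ.filter fun i => y i = fun _ => true) = S))
      = Fintype.piFinset (fun i : Fin N =>
          if i ∈ S then {fun _ => true} else Finset.univ.erase (fun _ => true)) := by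
    ext y
    simp only [mem_filter, mem_univ, true_and, Fintype.mem_piFinset]
    constructor
    · intro h i
      have := Finset.ext_iff.mp h i
      simp only [mem_filter, mem_univ, true_and] at this
      by_cases hi : i ∈ S
      · simp [hi, this.mpr hi]
      · simp only [hi, if_neg, not_false_iff, mem_erase, mem_univ, and_true]
        exact fun h' => hi (this.mp h')
    · intro h
      ext i
      simp only [mem_filter, mem_univ, true_and]
      have := h i
      by_cases hi : i ∈ S
      · simp only [hi, if_pos] at this
        simp only [mem_singleton] at this
        simp [hi, this]
      · simp only [hi, if_neg, not_false_iff, mem_erase] at this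
        simp [hi, this.1]
  rw [hset, Fintype.card_piFinset]
  have hcard : ∀ i : Fin N,
      ((if i ∈ S then ({fun _ => true} : Finset (Fin m → Bool))
        else Finset.univ.erase (fun _ => true)).card)
      = if i ∈ S then 1 else 2 ^ m - 1 := by
    intro i
    by_cases hi : i ∈ S
    · simp [hi]
    · simp only [hi, if_neg, not_false_iff]
      rw [Finset.card_erase_of_mem (mem_univ _), Finset.card_univ]
      congr 1
      simp [Fintype.card_fun]
  simp_rw [hcard]
  rw [← Finset.prod_mul_prod_compl S]
  rw [Finset.prod_ite_of_true (fun i hi => hi),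
      Finset.prod_ite_of_false (fun i hi => by simpa using hi)]
  simp [Finset.card_compl]

lemma count_card (N m c : ℕ) :
    ((univ : Finset (Fin N → Fin m → Bool)).filter
      (fun y => (univ.filter fun i => y i = fun _ => true).card = c)).card
      = N.choose c * (2 ^ m - 1) ^ (N - c) := by
  classical
  rw [Finset.card_eq_sum_card_fiberwise
    (f := fun y : Fin N → Fin m → Bool => univ.filter fun i => y i = fun _ => true)
    (t := powersetCard c univ)
    (fun y hy => by
      simp only [Finset.mem_coe] at hy ⊢
      rw [Finset.mem_powersetCard_univ]
      exact (mem_filter.mp hy).2)]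
  have hterm : ∀ S ∈ powersetCard c (univ : Finset (Fin N)),
      ((filter (fun y : Fin N → Fin m → Bool =>
          (univ.filter fun i => y i = fun _ => true).card = c) univ).filter
        (fun y => (univ.filter fun i => y i = fun _ => true) = S)).card
      = (2 ^ m - 1) ^ (N - c) := by
    intro S hS
    rw [Finset.mem_powersetCard_univ] at hS
    rw [Finset.filter_filter]
    have heq : filter (fun y : Fin N → Fin m → Bool =>
        (univ.filter fun i => y i = fun _ => true).card = c ∧
        (univ.filter fun i => y i = fun _ => true) = S) univ
        = filter (fun y => (univ.filter fun i => y i = fun _ => true) = S) univ := by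
      apply Finset.filter_congr
      intro y _
      constructor
      · exact fun h => h.2
      · intro h
        exact ⟨by rw [h, hS], h⟩
    rw [heq, fiber_card, hS]
  rw [Finset.sum_congr rfl hterm, Finset.sum_const, Finset.card_powersetCard,
    Finset.card_univ, Fintype.card_fin, smul_eq_mul]


open Finset
open scoped Classical

open scoped Classical in
/-- If `2^m · K ≤ N` then at least half of all `y : Fin N → (Fin m → Bool)` have
more than `K - 1` all-one blocks. -/
theorem stmt5 (N m : ℕ) (K : ℝ) (hK : 1 ≤ K) (hsize : (2 : ℝ) ^ m * K ≤ (N : ℝ)) :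
    2 ^ (m * N) ≤
      2 * (Finset.univ.filter (fun y : Fin N → Fin m → Bool =>
        K - 1 < ((Finset.univ.filter
          (fun i : Fin N => ∀ j : Fin m, y i j = true)).card : ℝ))).card := by
  classical
  have hcnt_eq : ∀ y : Fin N → Fin m → Bool,
      (univ.filter fun i => ∀ j, y i j = true) = (univ.filter fun i => y i = fun _ => true) :=
    fun y => Finset.filter_congr (fun i _ => by
      constructor
      · intro h; funext j; exact h j
      · intro h j; rw [h])
  by_cases hm : m = 0
  · subst hm
    have hfull : (Finset.univ.filter (fun y : Fin N → Fin 0 → Bool =>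
        K - 1 < ((Finset.univ.filter
          (fun i : Fin N => ∀ j : Fin 0, y i j = true)).card : ℝ))) = univ := by
      apply Finset.filter_true_of_mem
      intro y _
      have h1 : (univ.filter fun i : Fin N => ∀ j : Fin 0, y i j = true) = univ :=
        Finset.filter_true_of_mem (fun i _ => fun j => j.elim0)
      rw [h1]
      simp only [Finset.card_univ, Fintype.card_fin]
      have : K ≤ N := by simpa using hsize
      linarith
    rw [hfull]
    have : (univ : Finset (Fin N → Fin 0 → Bool)).card = 1 := by
      rw [Finset.card_univ]
      simp [Fintype.card_fun]
    rw [this]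
    simp
  · have hm1 : 1 ≤ m := Nat.one_le_iff_ne_zero.mpr hm
    set M := 2 ^ m with hM_def
    have hM2 : 2 ≤ M := by
      calc 2 = 2^1 := (pow_one 2).symm
        _ ≤ 2^m := Nat.pow_le_pow_right (by norm_num) hm1
    set T := ⌊K⌋₊ with hT_def
    have hT1 : 1 ≤ T := Nat.le_floor (by exact_mod_cast hK)
    have hTK : (T : ℝ) ≤ K := Nat.floor_le (by linarith)
    have hTM : T * M ≤ N := by
      have h1 : ((T * M : ℕ) : ℝ) ≤ (N : ℝ) := by
        rw [hM_def]
        push_cast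
        calc (T : ℝ) * (2:ℝ)^m ≤ K * 2^m := by
              apply mul_le_mul_of_nonneg_right hTK (by positivity)
          _ = 2^m * K := by ring
          _ ≤ N := hsize
      exact_mod_cast h1
    set cnt : (Fin N → Fin m → Bool) → ℕ :=
      fun y => (univ.filter fun i => y i = fun _ => true).card with hcnt_def
    have hcnt_le : ∀ y, cnt y ≤ N := fun y => by
      calc (univ.filter fun i => y i = fun _ => true).card ≤ (univ : Finset (Fin N)).card :=
            Finset.card_filter_le _ _
        _ = N := by simp
    set F : ℕ → ℕ := fun c => N.choose c * (M - 1) ^ (N - c) with hF_def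
    have hFc : ∀ c, (univ.filter fun y : Fin N → Fin m → Bool => cnt y = c).card = F c :=
      fun c => count_card N m c
    have h2T : 2 * T ≤ N := by nlinarith
    -- B card
    have hB : (univ.filter fun y : Fin N → Fin m → Bool => cnt y < T).card
        = ∑ c ∈ Finset.range T, F c := by
      rw [Finset.card_eq_sum_card_fiberwise (f := cnt) (t := Finset.range T)
        (fun y hy => Finset.mem_range.mpr (Finset.mem_filter.mp hy).2)]
      apply Finset.sum_congr rfl
      intro c hc
      rw [Finset.filter_filter, ← hFc c]
      congr 1
      apply Finset.filter_congr
      intro y _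
      constructor
      · exact fun h => h.2
      · exact fun h => ⟨by rw [h]; exact Finset.mem_range.mp hc, h⟩
    -- G card
    have hG : (univ.filter fun y : Fin N → Fin m → Bool => ¬ cnt y < T).card
        = ∑ c ∈ Finset.Icc T N, F c := by
      rw [Finset.card_eq_sum_card_fiberwise (f := cnt) (t := Finset.Icc T N)
        (fun y hy => Finset.mem_Icc.mpr
          ⟨Nat.le_of_not_lt (Finset.mem_filter.mp hy).2, hcnt_le y⟩)]
      apply Finset.sum_congr rfl
      intro c hc
      rw [Finset.filter_filter, ← hFc c]
      congr 1
      apply Finset.filter_congr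
      intro y _
      constructor
      · exact fun h => h.2
      · exact fun h => ⟨by rw [h]; exact Nat.not_lt.mpr (Finset.mem_Icc.mp hc).1, h⟩
    -- B ≤ G
    have hBG : ∑ c ∈ Finset.range T, F c ≤ ∑ c ∈ Finset.Icc T N, F c := by
      calc ∑ c ∈ Finset.range T, F c
          = ∑ i ∈ Finset.range T, F (T - 1 - i) := (Finset.sum_range_reflect F T).symm
        _ ≤ ∑ i ∈ Finset.range T, F (T + i) := by
            apply Finset.sum_le_sum
            intro i hi
            have hi1 : i + 1 ≤ T := Finset.mem_range.mp hi
            have hkey := choose_key N M T hT1 hTM i hi1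
            have hTiN : T + i ≤ N := by omega
            have hexp : N - (T - 1 - i) = (2*i+1) + (N - (T + i)) := by omega
            calc F (T - 1 - i)
                = N.choose (T-1-i) * ((M-1)^(2*i+1) * (M-1)^(N-(T+i))) := by
                  rw [hF_def]; simp only []; rw [hexp, pow_add]
              _ = (N.choose (T-1-i) * (M-1)^(2*i+1)) * (M-1)^(N-(T+i)) := by ring
              _ ≤ N.choose (T+i) * (M-1)^(N-(T+i)) := Nat.mul_le_mul_right _ hkey
              _ = F (T + i) := rfl
        _ = ∑ c ∈ Finset.Ico T (T + T), F c := by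
            rw [Finset.sum_Ico_eq_sum_range]
            simp
        _ ≤ ∑ c ∈ Finset.Icc T N, F c := by
            apply Finset.sum_le_sum_of_subset
            intro c hc
            rw [Finset.mem_Ico] at hc
            rw [Finset.mem_Icc]
            omega
    -- G subset of statement set
    have hGsub : (univ.filter fun y : Fin N → Fin m → Bool => ¬ cnt y < T) ⊆
        (Finset.univ.filter (fun y : Fin N → Fin m → Bool =>
          K - 1 < ((Finset.univ.filter
            (fun i : Fin N => ∀ j : Fin m, y i j = true)).card : ℝ))) := by
      intro y hy
      rw [Finset.mem_filter] at hy ⊢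
      refine ⟨Finset.mem_univ _, ?_⟩
      rw [hcnt_eq y]
      have hTy : T ≤ cnt y := Nat.le_of_not_lt hy.2
      have h1 : K < (T : ℝ) + 1 := Nat.lt_floor_add_one K
      have h2 : (T : ℝ) ≤ (cnt y : ℝ) := by exact_mod_cast hTy
      linarith
    -- assemble
    have hsplit : (univ.filter fun y : Fin N → Fin m → Bool => cnt y < T).card
        + (univ.filter fun y : Fin N → Fin m → Bool => ¬ cnt y < T).card
        = (univ : Finset (Fin N → Fin m → Bool)).card :=
      Finset.card_filter_add_card_filter_not _
    have huniv : (univ : Finset (Fin N → Fin m → Bool)).card = 2 ^ (m * N) := by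
      rw [Finset.card_univ]
      rw [Fintype.card_fun]
      simp [pow_mul]
    calc 2^(m*N) = (univ : Finset (Fin N → Fin m → Bool)).card := huniv.symm
      _ = (univ.filter fun y : Fin N → Fin m → Bool => cnt y < T).card
          + (univ.filter fun y : Fin N → Fin m → Bool => ¬ cnt y < T).card := hsplit.symm
      _ ≤ (univ.filter fun y : Fin N → Fin m → Bool => ¬ cnt y < T).card
          + (univ.filter fun y : Fin N → Fin m → Bool => ¬ cnt y < T).card := by
          apply Nat.add_le_add_right
          rw [hB, hG]; exact hBG
      _ = 2 * (univ.filter fun y : Fin N → Fin m → Bool => ¬ cnt y < T).card := by ring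
      _ ≤ 2 * (Finset.univ.filter (fun y : Fin N → Fin m → Bool =>
            K - 1 < ((Finset.univ.filter
              (fun i : Fin N => ∀ j : Fin m, y i j = true)).card : ℝ))).card := by
          exact Nat.mul_le_mul_left _ (Finset.card_le_card hGsub)
end

section
/- For every natural number n and every real number p with 0 ≤ p ≤ 1, the median of the binomial distribution B(n,p) lies between ⌊n·p⌋ and ⌈n·p⌉; precisely, ∑_{k=0}^{min(⌈n·p⌉, n)} (n choose k) · p^k · (1−p)^(n−k) ≥ 1/2 and ∑_{k=⌊n·p⌋}^{n} (n choose k) · p^k · (1−p)^(n−k) ≥ 1/2. -/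
namespace Stmt6Aux
open Finset

noncomputable def W (n : ℕ) (p q : ℝ) (j : ℕ) : ℝ := (n.choose j : ℝ) * p ^ j * q ^ (n - j)

lemma nonneg_cancel {a s : ℝ} (hs : 0 < s) (h : 0 ≤ a * s) : 0 ≤ a := by
  have h2 : 0 ≤ a * s / s := div_nonneg h hs.le
  rwa [mul_div_cancel_right₀ _ (ne_of_gt hs)] at h2

lemma le_cancel {a b s : ℝ} (hs : 0 < s) (h : a * s ≤ b * s) : a ≤ b :=
  le_of_mul_le_mul_right h hs

lemma lt_cancel {a b s : ℝ} (hs : 0 < s) (h : a * s < b * s) : a < b :=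
  lt_of_mul_lt_mul_right h hs.le

lemma cast_sub' {a b : ℕ} (h : b ≤ a) : ((a - b : ℕ) : ℝ) = (a : ℝ) - (b : ℝ) :=
  Nat.cast_sub h

variable {n : ℕ} {p q : ℝ}

lemma W_nonneg (hp : 0 ≤ p) (hq : 0 ≤ q) (j : ℕ) : 0 ≤ W n p q j := by
  unfold W; positivity

lemma W_pos (hp : 0 < p) (hq : 0 < q) {j : ℕ} (hj : j ≤ n) : 0 < W n p q j := by
  unfold W
  have h1 : (0:ℝ) < (n.choose j : ℝ) := by exact_mod_cast Nat.choose_pos hj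
  positivity

lemma W_rec (j : ℕ) (hj : j + 1 ≤ n) :
    W n p q (j + 1) * ((j + 1 : ℕ) : ℝ) * q = W n p q j * ((n - j : ℕ) : ℝ) * p := by
  unfold W
  have hch : ((n.choose (j+1) : ℕ) : ℝ) * ((j+1 : ℕ) : ℝ)
      = ((n.choose j : ℕ) : ℝ) * ((n - j : ℕ) : ℝ) := by
    exact_mod_cast congrArg (Nat.cast (R := ℝ)) (Nat.choose_succ_right_eq n j)
  have he : n - j = (n - (j+1)) + 1 := by omega
  rw [he] at hch ⊢
  rw [pow_succ, pow_succ]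
  push_cast at hch ⊢
  linear_combination (p^j * p * q^(n-(j+1)) * q) * hch

lemma sum_W (hpq : p + q = 1) : ∑ j ∈ range (n + 1), W n p q j = 1 := by
  have h := add_pow p q n
  rw [hpq, one_pow] at h
  rw [h]
  exact Finset.sum_congr rfl fun j _ => by unfold W; ring

lemma mean_W (hpq : p + q = 1) (hn : 1 ≤ n) :
    ∑ j ∈ range (n + 1), (j : ℝ) * W n p q j = n * p := by
  obtain ⟨m, rfl⟩ : ∃ m, n = m + 1 := ⟨n - 1, by omega⟩
  rw [Finset.sum_range_succ']
  simp only [Nat.cast_zero, zero_mul, add_zero]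
  have hcongr : ∀ i ∈ range (m + 1),
      ((i + 1 : ℕ) : ℝ) * W (m+1) p q (i + 1) = ((m : ℝ) + 1) * p * W m p q i := by
    intro i hi
    rw [Finset.mem_range] at hi
    unfold W
    have hch : ((m+1 : ℕ) : ℝ) * ((m.choose i : ℕ) : ℝ)
        = (((m+1).choose (i+1) : ℕ) : ℝ) * ((i+1 : ℕ) : ℝ) := by
      exact_mod_cast congrArg (Nat.cast (R := ℝ)) (Nat.add_one_mul_choose_eq m i)
    have he : (m + 1) - (i + 1) = m - i := by omega
    rw [he, pow_succ]
    push_cast at hch ⊢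
    linear_combination (-(p^i * p * q^(m-i))) * hch
  rw [Finset.sum_congr rfl hcongr, ← Finset.mul_sum, sum_W hpq]
  push_cast; ring

lemma cheb {N : ℕ} (h : ℕ → ℝ)
    (hs : ∑ i ∈ range N, ((i : ℝ) + 1) * h i ≤ 0)
    (hper : ∀ i, i + 1 < N → 0 ≤ h i → 0 ≤ h (i + 1)) :
    ∑ i ∈ range N, h i ≤ 0 := by
  by_cases hex : ∀ i ∈ range N, h i ≤ 0
  · exact Finset.sum_nonpos hex
  push_neg at hex
  obtain ⟨i₀, hi₀N, hi₀⟩ := hex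
  set S : Finset ℕ := (range N).filter (fun i => 0 < h i) with hS
  have hSne : S.Nonempty := ⟨i₀, by simp [hS, hi₀N, hi₀]⟩
  set m : ℕ := S.min' hSne with hm
  have hmS : m ∈ S := Finset.min'_mem S hSne
  have hmN : m < N := by
    have := hmS; rw [hS, Finset.mem_filter, Finset.mem_range] at this; exact this.1
  have hmpos : 0 < h m := by
    have := hmS; rw [hS, Finset.mem_filter] at this; exact this.2
  have hneg : ∀ i < m, h i ≤ 0 := by
    intro i him
    by_contra hcon
    push_neg at hcon
    have hiS : i ∈ S := by
      rw [hS, Finset.mem_filter, Finset.mem_range]; exact ⟨lt_trans him hmN, hcon⟩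
    exact absurd (Finset.min'_le S i hiS) (by omega)
  have hpos : ∀ i, m ≤ i → i < N → 0 ≤ h i := by
    intro i hmi hiN
    induction i, hmi using Nat.le_induction with
    | base => exact hmpos.le
    | succ j hj ih => exact hper j hiN (ih (by omega))
  have key : ∀ i ∈ range N, h i ≤ ((i : ℝ) + 1) * h i / ((m : ℝ) + 1) := by
    intro i hi
    rw [Finset.mem_range] at hi
    rcases lt_or_ge i m with hlt | hle
    · have h1 : h i ≤ 0 := hneg i hlt
      have h2 : (i : ℝ) + 1 ≤ (m : ℝ) + 1 := by
        have : (i:ℝ) ≤ m := by exact_mod_cast hlt.le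
        linarith
      rw [le_div_iff₀ (by positivity)]
      nlinarith
    · have h1 : 0 ≤ h i := hpos i hle hi
      have h2 : (m : ℝ) + 1 ≤ (i : ℝ) + 1 := by
        have : (m:ℝ) ≤ i := by exact_mod_cast hle
        linarith
      rw [le_div_iff₀ (by positivity)]
      nlinarith
  calc ∑ i ∈ range N, h i ≤ ∑ i ∈ range N, ((i : ℝ) + 1) * h i / ((m : ℝ) + 1) :=
        Finset.sum_le_sum key
    _ = (∑ i ∈ range N, ((i : ℝ) + 1) * h i) / ((m : ℝ) + 1) := by
        rw [Finset.sum_div]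
    _ ≤ 0 := div_nonpos_of_nonpos_of_nonneg hs (by positivity)

lemma Gs_transfer {U C I : ℝ} (hI : 0 ≤ I) (hpq2 : p^2 ≤ q^2)
    (h : (C-I)*(C+1+I)*q^2 ≤ (U+1+I)*(U-I)*p^2) :
    (C-(I+1))*(C+1+(I+1))*q^2 ≤ (U+1+(I+1))*(U-(I+1))*p^2 := by
  nlinarith [mul_le_mul_of_nonneg_left hpq2 (by linarith : (0:ℝ) ≤ 2*(I+1))]

set_option maxHeartbeats 1600000 in
lemma case2 (hp : 0 < p) (hq : 0 < q) (hpq : p + q = 1) {c u : ℕ} (hcu : c + u = n)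
    (hc1 : 1 ≤ c) (hcult : c < u) (hmean : (n:ℝ) * p ≤ c) (hpu : p * u ≤ c * q) :
    ∑ j ∈ Ico (c+1) (n+1), W n p q j ≤ ∑ j ∈ range (c+1), W n p q j := by
  have hn1 : 1 ≤ n := by omega
  have hpltq : p < q := by
    have h1 : p * (u:ℝ) ≤ c * q := hpu
    have hu0 : (0:ℝ) < u := by exact_mod_cast (by omega : 0 < u)
    have hcu' : (c:ℝ) < u := by exact_mod_cast hcult
    nlinarith
  have hpq2 : p^2 ≤ q^2 := by nlinarith [hpltq, hp.le]
  set Lb : ℕ → ℝ := fun i => if i < c then W n p q (c-1-i) else 0 with hLb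
  -- the invariant claim
  have claim : ∀ i, i < c → i < u →
      W n p q (c-1-i) ≤ W n p q (c+1+i) →
      ((c:ℝ)-i)*((c:ℝ)+1+i)*q^2 ≤ ((u:ℝ)+1+i)*((u:ℝ)-i)*p^2 := by
    intro i
    induction i with
    | zero =>
      intro _ _ hRL
      simp only [Nat.cast_zero, sub_zero, add_zero]
      -- recurrences
      have r1 := W_rec (n := n) (p := p) (q := q) c (by omega)
      rw [(show n - c = u by omega)] at r1
      have r2 := W_rec (n := n) (p := p) (q := q) (c-1) (by omega)
      rw [(show c-1+1 = c by omega), (show n - (c-1) = u+1 by omega)] at r2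
      -- multiply
      have hWc : 0 < W n p q c := W_pos hp hq (by omega)
      have hmul : W n p q (c-1-0) * (((c+1:ℕ):ℝ)*q*(((u+1:ℕ):ℝ)*p))
          ≤ W n p q (c+1+0) * (((c+1:ℕ):ℝ)*q*(((u+1:ℕ):ℝ)*p)) := by
        apply mul_le_mul_of_nonneg_right hRL
        have c1 : (0:ℝ) < ((c+1:ℕ):ℝ) := by exact_mod_cast Nat.succ_pos c
        have c2 : (0:ℝ) < ((u+1:ℕ):ℝ) := by exact_mod_cast Nat.succ_pos u
        positivity
      rw [(show c-1-0 = c-1 by omega), (show c+1+0 = c+1 by omega)] at hmul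
      have t1 : W n p q (c+1) * (((c+1:ℕ):ℝ)*q*(((u+1:ℕ):ℝ)*p))
          = W n p q c * ((u:ℝ)*((u:ℝ)+1)*p^2) := by
        push_cast at r1 ⊢
        linear_combination (((u:ℝ)+1)*p) * r1
      have t2 : W n p q (c-1) * (((c+1:ℕ):ℝ)*q*(((u+1:ℕ):ℝ)*p))
          = W n p q c * ((c:ℝ)*((c:ℝ)+1)*q^2) := by
        push_cast at r2 ⊢
        linear_combination (-(((c:ℝ)+1)*q)) * r2
      rw [t1, t2] at hmul
      rw [mul_comm (W n p q c) ((c:ℝ)*((c:ℝ)+1)*q^2),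
        mul_comm (W n p q c) ((u:ℝ)*((u:ℝ)+1)*p^2)] at hmul
      have := le_cancel hWc hmul
      nlinarith [this]
    | succ i ih =>
      intro hic hiu hRL
      -- contradiction route
      by_contra hG
      push_neg at hG
      -- ¬ Gs (i+1)  ⇒ ¬ Gs i (contrapositive of transfer)
      have hGi : ¬ (((c:ℝ)-i)*((c:ℝ)+1+i)*q^2 ≤ ((u:ℝ)+1+i)*((u:ℝ)-i)*p^2) := by
        intro hGs
        have := Gs_transfer (U := (u:ℝ)) (C := (c:ℝ)) (I := (i:ℝ))
          (by positivity) hpq2 hGs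
        push_cast at this hG ⊢
        nlinarith [this, hG]
      -- hence W(c+1+i) < W(c-1-i)
      have hRLi : W n p q (c+1+i) < W n p q (c-1-i) := by
        by_contra hcon
        push_neg at hcon
        exact hGi (ih (by omega) (by omega) hcon)
      -- recurrences
      have r1 := W_rec (n := n) (p := p) (q := q) (c+1+i) (by omega)
      rw [(show c+1+i+1 = c+2+i by omega), (show n - (c+1+i) = u-1-i by omega)] at r1
      have r2 := W_rec (n := n) (p := p) (q := q) (c-2-i) (by omega)
      rw [(show c-2-i+1 = c-1-i by omega), (show n - (c-2-i) = u+2+i by omega)] at r2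
      -- casts
      have cE : ((c+2+i:ℕ):ℝ) = (c:ℝ)+2+(i:ℝ) := by push_cast; ring
      have cC : ((c-1-i:ℕ):ℝ) = (c:ℝ)-1-(i:ℝ) := by
        rw [(show c-1-i = c-(1+i) by omega), cast_sub' (by omega)]; push_cast; ring
      have cF : ((u-1-i:ℕ):ℝ) = (u:ℝ)-1-(i:ℝ) := by
        rw [(show u-1-i = u-(1+i) by omega), cast_sub' (by omega)]; push_cast; ring
      have cG : ((u+2+i:ℕ):ℝ) = (u:ℝ)+2+(i:ℝ) := by push_cast; ring
      -- strict scalar from ¬Gs(i+1)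
      have hscal : ((u:ℝ)-1-i)*((u:ℝ)+2+i)*p^2 < ((c:ℝ)-1-i)*((c:ℝ)+2+i)*q^2 := by
        push_cast at hG
        nlinarith [hG]
      -- assemble: W(c+2+i) < W(c-1-(i+1)) = W(c-2-i)
      have hL : 0 < W n p q (c-1-i) := W_pos hp hq (by omega)
      have hR0 : 0 ≤ W n p q (c+1+i) := W_nonneg hp.le hq.le _
      have key : W n p q (c+2+i) * (((c+2+i:ℕ):ℝ)*q*(((u+2+i:ℕ):ℝ)*p))
          < W n p q (c-2-i) * (((c+2+i:ℕ):ℝ)*q*(((u+2+i:ℕ):ℝ)*p)) := by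
        have t1 : W n p q (c+2+i) * (((c+2+i:ℕ):ℝ)*q*(((u+2+i:ℕ):ℝ)*p))
            = W n p q (c+1+i) * (((u-1-i:ℕ):ℝ)*((u+2+i:ℕ):ℝ)*p^2) := by
          linear_combination (((u+2+i:ℕ):ℝ)*p) * r1
        have t2 : W n p q (c-2-i) * (((c+2+i:ℕ):ℝ)*q*(((u+2+i:ℕ):ℝ)*p))
            = W n p q (c-1-i) * (((c-1-i:ℕ):ℝ)*((c+2+i:ℕ):ℝ)*q^2) := by
          linear_combination (-(((c+2+i:ℕ):ℝ)*q)) * r2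
        rw [t1, t2]
        calc W n p q (c+1+i) * (((u-1-i:ℕ):ℝ)*((u+2+i:ℕ):ℝ)*p^2)
            ≤ W n p q (c-1-i) * (((u-1-i:ℕ):ℝ)*((u+2+i:ℕ):ℝ)*p^2) := by
              apply mul_le_mul_of_nonneg_right hRLi.le
              rw [cF, cG]
              have : (0:ℝ) ≤ (u:ℝ)-1-(i:ℝ) := by
                have : (i:ℝ)+1 ≤ (u:ℝ) := by exact_mod_cast (by omega : i+1 ≤ u)
                linarith
              positivity
          _ < W n p q (c-1-i) * (((c-1-i:ℕ):ℝ)*((c+2+i:ℕ):ℝ)*q^2) := by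
              apply mul_lt_mul_of_pos_left _ hL
              rw [cF, cG, cC, cE]
              linarith [hscal]
      have hcancel : (0:ℝ) < ((c+2+i:ℕ):ℝ)*q*(((u+2+i:ℕ):ℝ)*p) := by
        rw [cE, cG]
        have h1 : (0:ℝ) ≤ (c:ℝ) := by positivity
        have h2 : (0:ℝ) ≤ (u:ℝ) := by positivity
        positivity
      have hlt := lt_cancel hcancel key
      -- contradiction with hRL : W(c-1-(i+1)) ≤ W(c+1+(i+1))
      rw [(show c-1-(i+1) = c-2-i by omega), (show c+1+(i+1) = c+2+i by omega)] at hRL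
      linarith [hlt, hRL]
  -- persistence
  have hper : ∀ i, i + 1 < u →
      0 ≤ W n p q (c+1+i) - Lb i → 0 ≤ W n p q (c+1+(i+1)) - Lb (i+1) := by
    intro i hiu hhi
    by_cases hic : i + 1 < c
    · -- both Lb's are W's
      have hLbi : Lb i = W n p q (c-1-i) := by simp [hLb, if_pos (by omega : i < c)]
      have hLbi1 : Lb (i+1) = W n p q (c-2-i) := by
        simp only [hLb, if_pos hic]
        rw [(show c-1-(i+1) = c-2-i by omega)]
      rw [hLbi] at hhi
      rw [hLbi1]
      have hRL : W n p q (c-1-i) ≤ W n p q (c+1+i) := by linarith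
      have hGs := claim i (by omega) (by omega) hRL
      have hGs1 := Gs_transfer (U := (u:ℝ)) (C := (c:ℝ)) (I := (i:ℝ)) (by positivity) hpq2 hGs
      -- recurrences
      have r1 := W_rec (n := n) (p := p) (q := q) (c+1+i) (by omega)
      rw [(show c+1+i+1 = c+2+i by omega), (show n - (c+1+i) = u-1-i by omega)] at r1
      have r2 := W_rec (n := n) (p := p) (q := q) (c-2-i) (by omega)
      rw [(show c-2-i+1 = c-1-i by omega), (show n - (c-2-i) = u+2+i by omega)] at r2
      have cE : ((c+2+i:ℕ):ℝ) = (c:ℝ)+2+(i:ℝ) := by push_cast; ring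
      have cC : ((c-1-i:ℕ):ℝ) = (c:ℝ)-1-(i:ℝ) := by
        rw [(show c-1-i = c-(1+i) by omega), cast_sub' (by omega)]; push_cast; ring
      have cF : ((u-1-i:ℕ):ℝ) = (u:ℝ)-1-(i:ℝ) := by
        rw [(show u-1-i = u-(1+i) by omega), cast_sub' (by omega)]; push_cast; ring
      have cG : ((u+2+i:ℕ):ℝ) = (u:ℝ)+2+(i:ℝ) := by push_cast; ring
      have hscal : ((c:ℝ)-1-i)*((c:ℝ)+2+i)*q^2 ≤ ((u:ℝ)-1-i)*((u:ℝ)+2+i)*p^2 := by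
        push_cast at hGs1
        nlinarith [hGs1]
      have hLnn : 0 ≤ W n p q (c-1-i) := W_nonneg hp.le hq.le _
      have key : W n p q (c-2-i) * (((c+2+i:ℕ):ℝ)*q*(((u+2+i:ℕ):ℝ)*p))
          ≤ W n p q (c+2+i) * (((c+2+i:ℕ):ℝ)*q*(((u+2+i:ℕ):ℝ)*p)) := by
        have t1 : W n p q (c+2+i) * (((c+2+i:ℕ):ℝ)*q*(((u+2+i:ℕ):ℝ)*p))
            = W n p q (c+1+i) * (((u-1-i:ℕ):ℝ)*((u+2+i:ℕ):ℝ)*p^2) := by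
          linear_combination (((u+2+i:ℕ):ℝ)*p) * r1
        have t2 : W n p q (c-2-i) * (((c+2+i:ℕ):ℝ)*q*(((u+2+i:ℕ):ℝ)*p))
            = W n p q (c-1-i) * (((c-1-i:ℕ):ℝ)*((c+2+i:ℕ):ℝ)*q^2) := by
          linear_combination (-(((c+2+i:ℕ):ℝ)*q)) * r2
        rw [t1, t2]
        calc W n p q (c-1-i) * (((c-1-i:ℕ):ℝ)*((c+2+i:ℕ):ℝ)*q^2)
            ≤ W n p q (c-1-i) * (((u-1-i:ℕ):ℝ)*((u+2+i:ℕ):ℝ)*p^2) := by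
              apply mul_le_mul_of_nonneg_left _ hLnn
              rw [cF, cG, cC, cE]
              linarith [hscal]
          _ ≤ W n p q (c+1+i) * (((u-1-i:ℕ):ℝ)*((u+2+i:ℕ):ℝ)*p^2) := by
              apply mul_le_mul_of_nonneg_right hRL
              rw [cF, cG]
              have : (0:ℝ) ≤ (u:ℝ)-1-(i:ℝ) := by
                have : (i:ℝ)+1 ≤ (u:ℝ) := by exact_mod_cast (by omega : i+1 ≤ u)
                linarith
              positivity
      have hcancel : (0:ℝ) < ((c+2+i:ℕ):ℝ)*q*(((u+2+i:ℕ):ℝ)*p) := by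
        rw [cE, cG]
        have h1 : (0:ℝ) ≤ (c:ℝ) := by positivity
        have h2 : (0:ℝ) ≤ (u:ℝ) := by positivity
        positivity
      have hle := le_cancel hcancel key
      rw [(show c+1+(i+1) = c+2+i by omega)]
      linarith [hle]
    · -- Lb (i+1) = 0
      have hLbi1 : Lb (i+1) = 0 := by simp [hLb, if_neg hic]
      rw [hLbi1, sub_zero]
      exact W_nonneg hp.le hq.le _
  -- weighted sum inequality
  have hsplit : ∑ j ∈ range (c+1), ((j:ℝ) - c) * W n p q j
      + ∑ j ∈ Ico (c+1) (n+1), ((j:ℝ) - c) * W n p q j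
      = ∑ j ∈ range (n+1), ((j:ℝ) - c) * W n p q j := by
    simp only [Finset.range_eq_Ico]
    exact Finset.sum_Ico_consecutive _ (by omega) (by omega)
  have htotal : ∑ j ∈ range (n+1), ((j:ℝ) - c) * W n p q j = (n:ℝ)*p - c := by
    have e1 : ∀ j ∈ range (n+1), ((j:ℝ) - c) * W n p q j
        = (j:ℝ) * W n p q j - (c:ℝ) * W n p q j := by intro j _; ring
    rw [Finset.sum_congr rfl e1, Finset.sum_sub_distrib, mean_W hpq hn1,
      ← Finset.mul_sum, sum_W hpq, mul_one]
  have hlast : ∑ j ∈ range (c+1), ((j:ℝ) - c) * W n p q j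
      = ∑ j ∈ range c, ((j:ℝ) - c) * W n p q j := by
    rw [Finset.sum_range_succ]
    simp
  have hreflect : ∑ i ∈ range c, ((i:ℝ)+1) * W n p q (c-1-i)
      = ∑ j ∈ range c, ((c:ℝ) - j) * W n p q j := by
    rw [← Finset.sum_range_reflect (fun j => ((c:ℝ) - j) * W n p q j) c]
    apply Finset.sum_congr rfl
    intro i hi
    rw [Finset.mem_range] at hi
    have : ((c-1-i:ℕ):ℝ) = (c:ℝ)-1-(i:ℝ) := by
      rw [(show c-1-i = c-(1+i) by omega), cast_sub' (by omega)]; push_cast; ring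
    rw [this]
    ring
  have hIco : ∑ j ∈ Ico (c+1) (n+1), ((j:ℝ) - c) * W n p q j
      = ∑ i ∈ range u, ((i:ℝ)+1) * W n p q (c+1+i) := by
    rw [Finset.sum_Ico_eq_sum_range, (show n+1-(c+1) = u by omega)]
    apply Finset.sum_congr rfl
    intro i _
    have : ((c+1+i:ℕ):ℝ) - (c:ℝ) = (i:ℝ)+1 := by push_cast; ring
    rw [this]
  have hLbsum : ∑ i ∈ range u, ((i:ℝ)+1) * Lb i
      = ∑ i ∈ range c, ((i:ℝ)+1) * W n p q (c-1-i) := by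
    rw [← Finset.sum_subset (Finset.range_subset_range.mpr (by omega : c ≤ u))]
    · apply Finset.sum_congr rfl
      intro i hi
      rw [Finset.mem_range] at hi
      simp [hLb, if_pos hi]
    · intro x _ hx
      rw [Finset.mem_range] at hx
      push_neg at hx
      simp [hLb, if_neg (by omega : ¬ x < c)]
  have hws : ∑ i ∈ range u, ((i:ℝ)+1) * (W n p q (c+1+i) - Lb i) ≤ 0 := by
    have e1 : ∀ i ∈ range u, ((i:ℝ)+1) * (W n p q (c+1+i) - Lb i)
        = ((i:ℝ)+1) * W n p q (c+1+i) - ((i:ℝ)+1) * Lb i := by intro i _; ring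
    rw [Finset.sum_congr rfl e1, Finset.sum_sub_distrib, hLbsum, hreflect, ← hIco]
    have h2 : ∑ j ∈ Ico (c+1) (n+1), ((j:ℝ) - c) * W n p q j
        = ((n:ℝ)*p - c) - ∑ j ∈ range c, ((j:ℝ) - c) * W n p q j := by
      rw [← htotal, ← hsplit, hlast]; ring
    rw [h2]
    have h3 : ∑ j ∈ range c, ((c:ℝ) - j) * W n p q j
        = - ∑ j ∈ range c, ((j:ℝ) - c) * W n p q j := by
      rw [← Finset.sum_neg_distrib]
      apply Finset.sum_congr rfl
      intro j _; ring
    rw [h3]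
    linarith [hmean]
  -- apply cheb
  have hcheb := cheb (fun i => W n p q (c+1+i) - Lb i) hws hper
  -- final comparison
  have hB : ∑ j ∈ Ico (c+1) (n+1), W n p q j = ∑ i ∈ range u, W n p q (c+1+i) := by
    rw [Finset.sum_Ico_eq_sum_range, (show n+1-(c+1) = u by omega)]
  have hLbsum2 : ∑ i ∈ range u, Lb i = ∑ i ∈ range c, W n p q (c-1-i) := by
    rw [← Finset.sum_subset (Finset.range_subset_range.mpr (by omega : c ≤ u))]
    · apply Finset.sum_congr rfl
      intro i hi
      rw [Finset.mem_range] at hi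
      simp [hLb, if_pos hi]
    · intro x _ hx
      rw [Finset.mem_range] at hx
      push_neg at hx
      simp [hLb, if_neg (by omega : ¬ x < c)]
  have hreflect2 : ∑ i ∈ range c, W n p q (c-1-i) = ∑ j ∈ range c, W n p q j :=
    Finset.sum_range_reflect (fun j => W n p q j) c
  have hsum_sub : ∑ i ∈ range u, (W n p q (c+1+i) - Lb i)
      = ∑ i ∈ range u, W n p q (c+1+i) - ∑ i ∈ range u, Lb i :=
    Finset.sum_sub_distrib _ _
  rw [hB]
  have hWc : 0 ≤ W n p q c := W_nonneg hp.le hq.le c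
  have hA : ∑ j ∈ range (c+1), W n p q j = ∑ j ∈ range c, W n p q j + W n p q c :=
    Finset.sum_range_succ _ _
  -- combine
  have : ∑ i ∈ range u, W n p q (c+1+i) ≤ ∑ j ∈ range c, W n p q j := by
    have := hcheb
    rw [hsum_sub] at this
    rw [hLbsum2, hreflect2] at this
    linarith
  linarith


lemma case1 (hp : 0 < p) (hq : 0 < q) {c u : ℕ} (hcu : c + u = n) (hu1 : 1 ≤ u)
    (huc : u ≤ c) (hpu : p * u ≤ c * q) :
    ∑ j ∈ Ico (c+1) (n+1), W n p q j ≤ ∑ j ∈ range (c+1), W n p q j := by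
  have hT : ∀ i, i < u → W n p q (c+1+i) ≤ W n p q (c-i) := by
    intro i
    induction i with
    | zero =>
      intro _
      have r1 := W_rec (n := n) (p := p) (q := q) c (by omega)
      have e1 : n - c = u := by omega
      rw [e1] at r1
      have hWc : 0 ≤ W n p q c := W_nonneg hp.le hq.le c
      have hkey : W n p q (c+1) * (((c+1:ℕ):ℝ) * q) ≤ W n p q c * (((c+1:ℕ):ℝ) * q) := by
        have h2 : W n p q c * ((u:ℕ):ℝ) * p = W n p q c * (p * ((u:ℕ):ℝ)) := by ring
        have h3 : p * ((u:ℕ):ℝ) ≤ ((c+1:ℕ):ℝ) * q := by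
          push_cast
          push_cast at hpu
          linarith [hq.le]
        calc W n p q (c+1) * (((c+1:ℕ):ℝ) * q) = W n p q c * (p * ((u:ℕ):ℝ)) := by
              linear_combination r1
          _ ≤ W n p q c * (((c+1:ℕ):ℝ) * q) := by
              exact mul_le_mul_of_nonneg_left h3 hWc
      have hpos : (0:ℝ) < ((c+1:ℕ):ℝ) * q := by
        have h4 : (0:ℝ) < ((c+1:ℕ):ℝ) := by exact_mod_cast Nat.succ_pos c
        positivity
      have hfin : W n p q (c+1) ≤ W n p q c := le_cancel hpos hkey
      simpa using hfin
    | succ i ih =>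
      intro hi
      have ihh := ih (by omega)
      -- recurrences
      have r1 := W_rec (n := n) (p := p) (q := q) (c+1+i) (by omega)
      have e4 : n - (c+1+i) = u-1-i := by omega
      have e5 : c+1+i+1 = c+2+i := by omega
      rw [e4, e5] at r1
      have r2 := W_rec (n := n) (p := p) (q := q) (c-1-i) (by omega)
      have e2 : c-1-i+1 = c-i := by omega
      have e3 : n - (c-1-i) = u+1+i := by omega
      rw [e2, e3] at r2
      have e6 : c+1+(i+1) = c+2+i := by omega
      have e7 : c-(i+1) = c-1-i := by omega
      rw [e6, e7]
      -- casts
      have cX : ((c+2+i:ℕ):ℝ) = (c:ℝ)+2+(i:ℝ) := by push_cast; ring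
      have cY : ((u-1-i:ℕ):ℝ) = (u:ℝ)-(1+(i:ℝ)) := by
        have e : u-1-i = u-(1+i) := by omega
        rw [e, Nat.cast_sub (by omega)]
        push_cast; ring
      have cZ : ((u+1+i:ℕ):ℝ) = (u:ℝ)+1+(i:ℝ) := by push_cast; ring
      have cV : ((c-i:ℕ):ℝ) = (c:ℝ)-(i:ℝ) := by
        rw [Nat.cast_sub (by omega)]
      -- scalar inequality
      have hUC : (u:ℝ) ≤ (c:ℝ) := by exact_mod_cast huc
      have hIU : (i:ℝ)+2 ≤ (u:ℝ) := by exact_mod_cast (by omega : i+2 ≤ u)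
      have hU0 : (0:ℝ) < (u:ℝ) := by exact_mod_cast hu1
      have hup : (u:ℝ)*p ≤ (c:ℝ)*q := by linarith [hpu, (by ring : p*(u:ℝ) = (u:ℝ)*p)]
      have hsq : (u:ℝ)*p*((u:ℝ)*p) ≤ (c:ℝ)*q*((c:ℝ)*q) :=
        mul_self_le_mul_self (by positivity) hup
      have scalar : ((u-1-i:ℕ):ℝ) * ((u+1+i:ℕ):ℝ) * p^2 ≤ ((c-i:ℕ):ℝ) * ((c+2+i:ℕ):ℝ) * q^2 := by
        rw [cX, cY, cZ, cV]
        set U := (u:ℝ); set C := (c:ℝ); set I := (i:ℝ)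
        have hI0 : (0:ℝ) ≤ I + 1 := by positivity
        have hA : 0 ≤ (C*q*(C*q) - U*p*(U*p)) * (U*U - (I+1)*(I+1)) := by
          apply mul_nonneg
          · linarith [hsq]
          · have := mul_self_le_mul_self hI0 (by linarith [hIU] : I + 1 ≤ U)
            linarith
        have hB : 0 ≤ q*q*(U*U*(2*C+1) + (I+1)*(I+1)*(C*C - U*U)) := by
          apply mul_nonneg (by positivity)
          have h1 : 0 ≤ C*C - U*U := by
            have := mul_self_le_mul_self hU0.le hUC
            linarith
          have h2 : (0:ℝ) ≤ U*U*(2*C+1) := by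
            have hC0 : (0:ℝ) ≤ C := by positivity
            positivity
          have h3 : 0 ≤ (I+1)*(I+1)*(C*C - U*U) := mul_nonneg (mul_self_nonneg _) h1
          linarith
        have hid : ((C-I)*(C+2+I)*q^2 - (U-(1+I))*(U+1+I)*p^2) * (U*U)
            = (C*q*(C*q) - U*p*(U*p))*(U*U - (I+1)*(I+1))
              + q*q*(U*U*(2*C+1) + (I+1)*(I+1)*(C*C - U*U)) := by ring
        have hDU : 0 ≤ ((C-I)*(C+2+I)*q^2 - (U-(1+I))*(U+1+I)*p^2) * (U*U) := by
          rw [hid]; linarith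
        have hUU : (0:ℝ) < U*U := mul_pos hU0 hU0
        have := nonneg_cancel hUU hDU
        linarith
      -- assembly
      set a := W n p q (c+2+i)
      set b := W n p q (c+1+i)
      set d := W n p q (c-i)
      set e := W n p q (c-1-i)
      set X := ((c+2+i:ℕ):ℝ)
      set Y := ((u-1-i:ℕ):ℝ)
      set Z := ((u+1+i:ℕ):ℝ)
      set V := ((c-i:ℕ):ℝ)
      have hXpos : (0:ℝ) < X := by rw [cX]; positivity
      have hZpos : (0:ℝ) < Z := by rw [cZ]; positivity
      have hd : 0 ≤ d := W_nonneg hp.le hq.le _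
      have key : a * (X*q*(Z*p)) ≤ e * (X*q*(Z*p)) := by
        have t1 : a * (X*q*(Z*p)) = b * (Y*Z*p^2) := by linear_combination (Z*p) * r1
        have t2 : e * (X*q*(Z*p)) = d * (V*X*q^2) := by linear_combination (-(X*q)) * r2
        rw [t1, t2]
        have hYZ : 0 ≤ Y*Z*p^2 := by
          rw [cY, cZ]
          have : (0:ℝ) ≤ (u:ℝ)-(1+(i:ℝ)) := by linarith [hIU]
          positivity
        calc b*(Y*Z*p^2) ≤ d*(Y*Z*p^2) := mul_le_mul_of_nonneg_right ihh hYZ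
          _ ≤ d*(V*X*q^2) := mul_le_mul_of_nonneg_left scalar hd
      have hposm : (0:ℝ) < X*q*(Z*p) := by positivity
      exact le_cancel hposm key
  -- sum comparison
  have hs1 : ∑ j ∈ Ico (c+1) (n+1), W n p q j = ∑ i ∈ range u, W n p q (c+1+i) := by
    rw [Finset.sum_Ico_eq_sum_range, (show n+1-(c+1) = u by omega)]
  rw [hs1]
  calc ∑ i ∈ range u, W n p q (c+1+i) ≤ ∑ i ∈ range u, W n p q (c-i) := by
        apply Finset.sum_le_sum
        intro i hi
        exact hT i (Finset.mem_range.mp hi)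
    _ = ∑ j ∈ (range u).image (fun i => c - i), W n p q j := by
        rw [Finset.sum_image]
        intro x hx y hy hxy
        rw [Finset.mem_coe, Finset.mem_range] at hx hy
        simp only at hxy
        omega
    _ ≤ ∑ j ∈ range (c+1), W n p q j := by
        apply Finset.sum_le_sum_of_subset_of_nonneg
        · intro j hj
          rw [Finset.mem_image] at hj
          obtain ⟨x, hx, rfl⟩ := hj
          rw [Finset.mem_range] at hx ⊢
          omega
        · intro j _ _
          exact W_nonneg hp.le hq.le j


set_option maxHeartbeats 800000 in
lemma lowerTail (n c : ℕ) (p : ℝ) (h0 : 0 ≤ p) (h1 : p ≤ 1) (hcn : c ≤ n)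
    (hnp : (n:ℝ) * p ≤ c) :
    1/2 ≤ ∑ j ∈ range (c+1), (n.choose j : ℝ) * p ^ j * (1 - p) ^ (n - j) := by
  set q : ℝ := 1 - p with hqdef
  have hq0 : 0 ≤ q := by rw [hqdef]; linarith
  have hpq : p + q = 1 := by rw [hqdef]; ring
  show 1/2 ≤ ∑ j ∈ range (c+1), W n p q j
  have htot := sum_W (n := n) hpq
  have hsplit : ∑ j ∈ range (c+1), W n p q j + ∑ j ∈ Ico (c+1) (n+1), W n p q j
      = ∑ j ∈ range (n+1), W n p q j := by
    simp only [Finset.range_eq_Ico]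
    exact Finset.sum_Ico_consecutive _ (by omega) (by omega)
  suffices hBA : ∑ j ∈ Ico (c+1) (n+1), W n p q j ≤ ∑ j ∈ range (c+1), W n p q j by
    linarith
  rcases eq_or_lt_of_le hcn with hceq | hclt
  · subst hceq
    have : Ico (c+1) (c+1) = (∅ : Finset ℕ) := by simp
    rw [this, Finset.sum_empty]
    exact Finset.sum_nonneg fun j _ => W_nonneg h0 hq0 j
  · by_cases hp0 : p ≤ 0
    · have hpe : p = 0 := le_antisymm hp0 h0
      have hB0 : ∑ j ∈ Ico (c+1) (n+1), W n p q j = 0 := by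
        apply Finset.sum_eq_zero
        intro j hj
        rw [Finset.mem_Ico] at hj
        unfold W
        rw [hpe, zero_pow (by omega : j ≠ 0)]
        ring
      rw [hB0]
      exact Finset.sum_nonneg fun j _ => W_nonneg h0 hq0 j
    · push_neg at hp0
      have hn0 : (0:ℝ) < n := by exact_mod_cast (by omega : 0 < n)
      have hc1 : 1 ≤ c := by
        rcases Nat.eq_zero_or_pos c with hc0 | hc; swap
        · omega
        · exfalso
          rw [hc0] at hnp
          simp only [Nat.cast_zero] at hnp
          nlinarith
      have hcltr : (c:ℝ) < n := by exact_mod_cast hclt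
      have hq : 0 < q := by
        rw [hqdef]
        nlinarith
      have hcu : c + (n - c) = n := by omega
      have hu1 : 1 ≤ n - c := by omega
      have hpu : p * ((n-c:ℕ):ℝ) ≤ c * q := by
        have hcast : (c:ℝ) + ((n-c:ℕ):ℝ) = n := by exact_mod_cast hcu
        have h2 : c * q = c - c * p := by rw [hqdef]; ring
        nlinarith
      rcases le_or_gt (n - c) c with huc | hcu'
      · exact case1 hp0 hq hcu hu1 huc hpu
      · exact case2 hp0 hq hpq hcu hc1 hcu' hnp hpu

end Stmt6Aux

/-- The median of the binomial distribution `B(n,p)` lies between `⌊n·p⌋` and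
`⌈n·p⌉`: both the lower tail up to `min(⌈n·p⌉, n)` and the upper tail from
`⌊n·p⌋` have probability at least `1/2`. -/
theorem stmt6 (n : ℕ) (p : ℝ) (h0 : 0 ≤ p) (h1 : p ≤ 1) :
    (1 : ℝ) / 2 ≤ ∑ k ∈ Finset.range (min ⌈(n : ℝ) * p⌉₊ n + 1),
        (n.choose k : ℝ) * p ^ k * (1 - p) ^ (n - k) ∧
    (1 : ℝ) / 2 ≤ ∑ k ∈ Finset.Icc ⌊(n : ℝ) * p⌋₊ n,
        (n.choose k : ℝ) * p ^ k * (1 - p) ^ (n - k) := by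
  have hnp_nonneg : 0 ≤ (n:ℝ) * p := by positivity
  have hnpn : (n:ℝ) * p ≤ n := by nlinarith [Nat.cast_nonneg (α := ℝ) n]
  constructor
  · apply Stmt6Aux.lowerTail n (min ⌈(n : ℝ) * p⌉₊ n) p h0 h1 (min_le_right _ _)
    rw [Nat.cast_min]
    apply le_min (Nat.le_ceil _)
    exact hnpn
  · set f := ⌊(n : ℝ) * p⌋₊ with hf
    have hfnp : (f:ℝ) ≤ (n:ℝ) * p := Nat.floor_le hnp_nonneg
    have hfn : f ≤ n := by
      have : (f:ℝ) ≤ (n:ℝ) := by linarith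
      exact_mod_cast this
    have key := Stmt6Aux.lowerTail n (n - f) (1 - p) (by linarith) (by linarith)
      (by omega) (by
        rw [Stmt6Aux.cast_sub' hfn]
        linarith)
    have hsum : ∑ j ∈ Finset.range (n - f + 1),
        (n.choose j : ℝ) * (1-p) ^ j * (1 - (1-p)) ^ (n - j)
        = ∑ k ∈ Finset.Icc f n, (n.choose k : ℝ) * p ^ k * (1 - p) ^ (n - k) := by
      apply Finset.sum_nbij' (i := fun j => n - j) (j := fun k => n - k)
      · intro a ha
        rw [Finset.mem_range] at ha
        rw [Finset.mem_Icc]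
        omega
      · intro a ha
        rw [Finset.mem_Icc] at ha
        rw [Finset.mem_range]
        omega
      · intro a ha
        rw [Finset.mem_range] at ha
        omega
      · intro a ha
        rw [Finset.mem_Icc] at ha
        omega
      · intro a ha
        rw [Finset.mem_range] at ha
        rw [Nat.choose_symm (by omega : a ≤ n), (show n - (n - a) = a by omega),
          (show (1:ℝ) - (1 - p) = p by ring)]
        ring
    rw [← hsum]
    exact key
end

section
/- Let N, b be natural numbers and let K ≥ 1 be a real number with (2^b : ℝ) · K ≤ N. Then at least half of all functions y : Fin N → (Fin b → Bool) have more than K − 1 all-zero blocks; that is, 2 · |{ y : Fin N → (Fin b → Bool) | ((number of indices i with y i j = false for all j) : ℝ) > K − 1 }| ≥ 2^(b·N). -/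
open Finset

-- j²a² ≤ j²b² cross-multiplied form
private lemma arith_step (a b j : ℕ) (h1 : j + 1 ≤ a) (hab : a ≤ b) :
    (a - j) * (a + j) * b ^ 2 ≤ (b - j) * (b + j) * a ^ 2 := by
  have hja : j ≤ a := by omega
  have hjb : j ≤ b := by omega
  zify [hja, hjb]
  have hab' : (a : ℤ) ≤ b := by exact_mod_cast hab
  have h0 : (0:ℤ) ≤ a := by positivity
  nlinarith [mul_le_mul_of_nonneg_left (mul_le_mul hab' hab' h0 (by linarith) : (a:ℤ)*a ≤ b*b) (sq_nonneg (j:ℤ))]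

private lemma pair_ineq (a b : ℕ) (ha : 1 ≤ a) (hab : a ≤ b) :
    ∀ j, 1 ≤ j → j ≤ a →
      Nat.choose (a + b - 1) (a - j) * a ^ (a - j) * b ^ (b - 1 + j) ≤
      Nat.choose (a + b - 1) (a + j - 1) * a ^ (a + j - 1) * b ^ (b - j) := by
  set n := a + b - 1 with hn
  intro j
  induction j with
  | zero => omega
  | succ d ih =>
    intro _ hda
    rcases Nat.eq_zero_or_pos d with hd | hd
    · -- base case j = 1
      subst hd
      have e1 : a + 1 - 1 = a := by omega
      have e2 : b - 1 + 1 = b := by omega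
      rw [e1, e2]
      have key : Nat.choose n a * a = Nat.choose n (a - 1) * b := by
        have h := Nat.choose_succ_right_eq n (a - 1)
        rw [show a - 1 + 1 = a by omega, show n - (a-1) = b by omega] at h
        exact h
      have pa : a ^ a = a ^ (a - 1) * a := by
        rw [← pow_succ]; congr 1; omega
      have pb : b ^ b = b ^ (b - 1) * b := by
        rw [← pow_succ]; congr 1; omega
      apply le_of_eq
      calc Nat.choose n (a-1) * a ^ (a-1) * b ^ b
          = (Nat.choose n (a-1) * b) * a ^ (a-1) * b ^ (b-1) := by rw [pb]; ring
        _ = (Nat.choose n a * a) * a ^ (a-1) * b ^ (b-1) := by rw [key]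
        _ = Nat.choose n a * a ^ a * b ^ (b-1) := by rw [pa]; ring
    · -- inductive step: d ≥ 1, j = d + 1
      have hIH := ih hd (by omega)
      -- notation
      have hd1a : d + 1 ≤ a := hda
      have c1 : Nat.choose n (a - d - 1) * (b + d) = Nat.choose n (a - d) * (a - d) := by
        have h := Nat.choose_succ_right_eq n (a - d - 1)
        rw [show a - d - 1 + 1 = a - d by omega, show n - (a - d - 1) = b + d by omega] at h
        exact h.symm
      have c2 : Nat.choose n (a + d) * (a + d) = Nat.choose n (a + d - 1) * (b - d) := by
        have h := Nat.choose_succ_right_eq n (a + d - 1)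
        rw [show a + d - 1 + 1 = a + d by omega, show n - (a + d - 1) = b - d by omega] at h
        exact h
      have p1 : a ^ (a - d) = a ^ (a - d - 1) * a := by
        rw [← pow_succ]; congr 1; omega
      have p2 : b ^ (b + d) = b ^ (b - 1 + d) * b := by
        rw [← pow_succ]; congr 1; omega
      have p3 : a ^ (a + d) = a ^ (a + d - 1) * a := by
        rw [← pow_succ]; congr 1; omega
      have p4 : b ^ (b - d) = b ^ (b - d - 1) * b := by
        rw [← pow_succ]; congr 1; omega
      have e1 : a - (d+1) = a - d - 1 := by omega
      have e2 : b - 1 + (d+1) = b + d := by omega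
      have e3 : a + (d+1) - 1 = a + d := by omega
      have e4 : b - (d+1) = b - d - 1 := by omega
      rw [e1, e2, e3, e4]
      have hc : 0 < (b+d)*(a+d)*a*b := by
        apply Nat.mul_pos
        apply Nat.mul_pos
        apply Nat.mul_pos
        all_goals omega
      refine Nat.le_of_mul_le_mul_right ?_ hc
      calc Nat.choose n (a-d-1) * a ^ (a-d-1) * b ^ (b+d) * ((b+d)*(a+d)*a*b)
          = (Nat.choose n (a-d-1) * (b+d)) * (a ^ (a-d-1) * a) * (b ^ (b-1+d) * b) * ((a+d)*b) := by
            rw [p2]; ring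
        _ = (Nat.choose n (a-d) * (a-d)) * a ^ (a-d) * (b ^ (b-1+d) * b) * ((a+d)*b) := by
            rw [c1, p1]
        _ = (Nat.choose n (a-d) * a ^ (a-d) * b ^ (b-1+d)) * ((a-d)*(a+d)*b^2) := by ring
        _ ≤ (Nat.choose n (a+d-1) * a ^ (a+d-1) * b ^ (b-d)) * ((a-d)*(a+d)*b^2) := by
            exact Nat.mul_le_mul_right _ hIH
        _ ≤ (Nat.choose n (a+d-1) * a ^ (a+d-1) * b ^ (b-d)) * ((b-d)*(b+d)*a^2) := by
            exact Nat.mul_le_mul_left _ (arith_step a b d hd1a hab)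
        _ = (Nat.choose n (a+d-1) * (b-d)) * (a ^ (a+d-1) * a) * (b ^ (b-d-1) * b) * ((b+d)*a) := by
            rw [p4]; ring
        _ = (Nat.choose n (a+d) * (a+d)) * a ^ (a+d) * (b ^ (b-d-1) * b) * ((b+d)*a) := by
            rw [← c2, p3]
        _ = Nat.choose n (a+d) * a ^ (a+d) * b ^ (b-d-1) * ((b+d)*(a+d)*a*b) := by ring


private lemma half_sum (a b : ℕ) (ha : 1 ≤ a) (hab : a ≤ b) :
    (a + b) ^ (a + b - 1) ≤
      2 * ∑ k ∈ Ico a (a + b), Nat.choose (a + b - 1) k * a ^ k * b ^ (a + b - 1 - k) := by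
  set n := a + b - 1 with hn
  have hbt : (a + b) ^ n = ∑ k ∈ range (n + 1), Nat.choose n k * a ^ k * b ^ (n - k) := by
    rw [add_pow]
    exact Finset.sum_congr rfl fun k _ => by push_cast; ring
  have hsplit : (∑ k ∈ Ico 0 a, Nat.choose n k * a ^ k * b ^ (n - k)) +
      (∑ k ∈ Ico a (n + 1), Nat.choose n k * a ^ k * b ^ (n - k)) =
      ∑ k ∈ Ico 0 (n + 1), Nat.choose n k * a ^ k * b ^ (n - k) :=
    Finset.sum_Ico_consecutive _ (by omega) (by omega)
  have hlow : (∑ k ∈ range a, Nat.choose n k * a ^ k * b ^ (n - k)) ≤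
      ∑ k ∈ Ico a (n + 1), Nat.choose n k * a ^ k * b ^ (n - k) := by
    have hrefl : (∑ k ∈ range a, Nat.choose n k * a ^ k * b ^ (n - k)) =
        ∑ j ∈ range a, Nat.choose n (a - 1 - j) * a ^ (a - 1 - j) * b ^ (n - (a - 1 - j)) :=
      (Finset.sum_range_reflect (fun k => Nat.choose n k * a ^ k * b ^ (n - k)) a).symm
    rw [hrefl]
    have hpair : ∀ j ∈ range a,
        Nat.choose n (a - 1 - j) * a ^ (a - 1 - j) * b ^ (n - (a - 1 - j)) ≤
        Nat.choose n (a + j) * a ^ (a + j) * b ^ (n - (a + j)) := by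
      intro j hj
      have hj' : j < a := Finset.mem_range.mp hj
      have h := pair_ineq a b ha hab (j + 1) (by omega) (by omega)
      rw [show a - (j+1) = a - 1 - j by omega, show b - 1 + (j+1) = n - (a - 1 - j) by omega,
        show a + (j+1) - 1 = a + j by omega, show b - (j+1) = n - (a + j) by omega] at h
      exact h
    calc (∑ j ∈ range a, Nat.choose n (a - 1 - j) * a ^ (a - 1 - j) * b ^ (n - (a - 1 - j)))
        ≤ ∑ j ∈ range a, Nat.choose n (a + j) * a ^ (a + j) * b ^ (n - (a + j)) :=
          Finset.sum_le_sum hpair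
      _ = ∑ k ∈ Ico a (a + a), Nat.choose n k * a ^ k * b ^ (n - k) := by
          rw [Finset.sum_Ico_eq_sum_range]
          exact Finset.sum_congr (by congr 1; omega) fun j _ => rfl
      _ ≤ ∑ k ∈ Ico a (n + 1), Nat.choose n k * a ^ k * b ^ (n - k) := by
          apply Finset.sum_le_sum_of_subset
          apply Finset.Ico_subset_Ico le_rfl
          omega
  have hend : Ico a (a + b) = Ico a (n + 1) := by congr 1; omega
  rw [hend, hbt, ← Finset.range_eq_Ico] at *
  have hr : Ico 0 (n + 1) = range (n + 1) := by ext; simp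
  simp only [hr] at *
  omega


private lemma core_base (q m : ℕ) (hq : 2 ≤ q) (hm : 1 ≤ m) :
    q ^ (q * m - 1) ≤ 2 * ∑ k ∈ Ico m (q * m), Nat.choose (q * m - 1) k * (q - 1) ^ (q * m - 1 - k) := by
  obtain ⟨q', rfl⟩ : ∃ q', q = q' + 1 := ⟨q - 1, by omega⟩
  have hq' : 1 ≤ q' := by omega
  have h := half_sum m (q' * m) hm (Nat.le_mul_of_pos_left m hq')
  have hab : m + q' * m = (q' + 1) * m := by ring
  rw [hab] at h
  set n := (q' + 1) * m - 1 with hn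
  have hsum : ∀ k ∈ Ico m ((q' + 1) * m),
      Nat.choose n k * m ^ k * (q' * m) ^ (n - k) =
      (Nat.choose n k * q' ^ (n - k)) * m ^ n := by
    intro k hk
    have hk' : k ≤ n := by
      have := (Finset.mem_Ico.mp hk).2
      omega
    rw [mul_pow]
    have : m ^ k * m ^ (n - k) = m ^ n := by
      rw [← pow_add]; congr 1; omega
    calc Nat.choose n k * m ^ k * (q' ^ (n - k) * m ^ (n - k))
        = (Nat.choose n k * q' ^ (n - k)) * (m ^ k * m ^ (n - k)) := by ring
      _ = (Nat.choose n k * q' ^ (n - k)) * m ^ n := by rw [this]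
  rw [Finset.sum_congr rfl hsum, ← Finset.sum_mul] at h
  have hpow : ((q' + 1) * m) ^ n = (q' + 1) ^ n * m ^ n := mul_pow _ _ _
  rw [hpow] at h
  have hmn : 0 < m ^ n := Nat.pow_pos hm
  have h2 : (q' + 1) ^ n ≤ 2 * ∑ k ∈ Ico m ((q' + 1) * m), Nat.choose n k * q' ^ (n - k) := by
    refine Nat.le_of_mul_le_mul_right ?_ hmn
    calc (q' + 1) ^ n * m ^ n ≤ (2 * ((∑ k ∈ Ico m ((q' + 1) * m), Nat.choose n k * q' ^ (n - k)) * m ^ n)) := h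
      _ = (2 * ∑ k ∈ Ico m ((q' + 1) * m), Nat.choose n k * q' ^ (n - k)) * m ^ n := by ring
  simpa using h2

private lemma core (q m : ℕ) (hq : 2 ≤ q) (hm : 1 ≤ m) :
    ∀ N, q * m - 1 ≤ N →
      q ^ N ≤ 2 * ∑ k ∈ Ico m (N + 1), Nat.choose N k * (q - 1) ^ (N - k) := by
  refine Nat.le_induction ?_ ?_
  · have := core_base q m hq hm
    have hqm : 2 ≤ q * m := le_trans hq (Nat.le_mul_of_pos_right q (by omega))
    rw [show q * m - 1 + 1 = q * m by omega]
    exact this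
  · intro N hN ih
    have hqm : m ≤ q * m := Nat.le_mul_of_pos_left m (by omega)
    set x := q - 1 with hx
    -- Pascal split
    have hsplit : ∀ k ∈ Ico m (N + 2),
        Nat.choose (N + 1) k * x ^ (N + 1 - k) =
        Nat.choose N (k - 1) * x ^ (N + 1 - k) + Nat.choose N k * x ^ (N + 1 - k) := by
      intro k hk
      have hk1 : 1 ≤ k := le_trans hm (Finset.mem_Ico.mp hk).1
      have : Nat.choose (N + 1) k = Nat.choose N (k - 1) + Nat.choose N k := by
        rw [show k = (k - 1) + 1 by omega, Nat.choose_succ_succ]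
        simp
      rw [this, add_mul]
    rw [Finset.sum_congr rfl hsplit, Finset.sum_add_distrib]
    -- second piece: equals x * S(N) after dropping top term
    have hA : (∑ k ∈ Ico m (N + 2), Nat.choose N k * x ^ (N + 1 - k)) =
        x * ∑ k ∈ Ico m (N + 1), Nat.choose N k * x ^ (N - k) := by
      rw [Finset.sum_Ico_succ_top (by omega : m ≤ N + 1), Nat.choose_succ_self, Finset.mul_sum]
      simp only [zero_mul, add_zero]
      refine Finset.sum_congr rfl fun k hk => ?_
      have hk' : k ≤ N := by have := (Finset.mem_Ico.mp hk).2; omega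
      rw [show N + 1 - k = (N - k) + 1 by omega, pow_succ]
      ring
    -- first piece: reindex, ≥ S(N)
    have hB : (∑ k ∈ Ico m (N + 2), Nat.choose N (k - 1) * x ^ (N + 1 - k)) =
        ∑ j ∈ Ico (m - 1) (N + 1), Nat.choose N j * x ^ (N - j) := by
      rw [Finset.sum_Ico_eq_sum_range, Finset.sum_Ico_eq_sum_range]
      refine Finset.sum_congr (by congr 1; omega) fun i hi => ?_
      have e1 : m + i - 1 = m - 1 + i := by omega
      have e2 : N + 1 - (m + i) = N - (m - 1 + i) := by omega
      rw [e1, e2]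
    have hBge : (∑ j ∈ Ico m (N + 1), Nat.choose N j * x ^ (N - j)) ≤
        ∑ j ∈ Ico (m - 1) (N + 1), Nat.choose N j * x ^ (N - j) :=
      Finset.sum_le_sum_of_subset (Finset.Ico_subset_Ico (by omega) le_rfl)
    rw [hA, hB]
    have hq1 : x + 1 = q := by omega
    calc q ^ (N + 1) = q * q ^ N := by rw [pow_succ]; ring
      _ ≤ q * (2 * ∑ k ∈ Ico m (N + 1), Nat.choose N k * x ^ (N - k)) := Nat.mul_le_mul_left q ih
      _ = 2 * ((x + 1) * ∑ k ∈ Ico m (N + 1), Nat.choose N k * x ^ (N - k)) := by rw [hq1]; ring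
      _ = 2 * (x * (∑ k ∈ Ico m (N + 1), Nat.choose N k * x ^ (N - k)) +
            ∑ k ∈ Ico m (N + 1), Nat.choose N k * x ^ (N - k)) := by ring
      _ ≤ 2 * (x * (∑ k ∈ Ico m (N + 1), Nat.choose N k * x ^ (N - k)) +
            ∑ j ∈ Ico (m - 1) (N + 1), Nat.choose N j * x ^ (N - j)) := by
          exact Nat.mul_le_mul_left 2 (Nat.add_le_add_left hBge _)
      _ = 2 * (∑ j ∈ Ico (m - 1) (N + 1), Nat.choose N j * x ^ (N - j) +
            x * (∑ k ∈ Ico m (N + 1), Nat.choose N k * x ^ (N - k))) := by ring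


open scoped Classical in
private lemma count_lemma (N b m : ℕ) :
    (Finset.univ.filter (fun y : Fin N → Fin b → Bool =>
        m ≤ (Finset.univ.filter (fun i : Fin N => ∀ j : Fin b, y i j = false)).card)).card
      = ∑ k ∈ Ico m (N + 1), Nat.choose N k * (2 ^ b - 1) ^ (N - k) := by
  classical
  set Z : (Fin N → Fin b → Bool) → Finset (Fin N) :=
    fun y => Finset.univ.filter (fun i : Fin N => ∀ j : Fin b, y i j = false) with hZ
  set t : Finset (Finset (Fin N)) :=
    Finset.univ.filter (fun s : Finset (Fin N) => m ≤ s.card) with ht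
  have hmaps : ∀ y ∈ Finset.univ.filter (fun y : Fin N → Fin b → Bool => m ≤ (Z y).card),
      Z y ∈ t := by
    intro y hy
    simp only [ht, Finset.mem_filter, Finset.mem_univ, true_and] at hy ⊢
    exact hy
  rw [Finset.card_eq_sum_card_fiberwise hmaps]
  -- fiber cardinalities
  have fib : ∀ s ∈ t,
      ((Finset.univ.filter (fun y : Fin N → Fin b → Bool => m ≤ (Z y).card)).filter
        (fun y => Z y = s)).card = (2 ^ b - 1) ^ (N - s.card) := by
    intro s hs
    have hs' : m ≤ s.card := by
      simpa [ht] using hs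
    have hfil : ((Finset.univ.filter (fun y : Fin N → Fin b → Bool => m ≤ (Z y).card)).filter
        (fun y => Z y = s)) = Finset.univ.filter (fun y => Z y = s) := by
      rw [Finset.filter_filter]
      apply Finset.filter_congr
      intro y _
      constructor
      · rintro ⟨-, h⟩; exact h
      · intro h; exact ⟨by rw [h]; exact hs', h⟩
    rw [hfil, ← Fintype.card_subtype]
    have e : ∀ y : Fin N → Fin b → Bool,
        (Z y = s) ↔ ∀ i : Fin N, ((∀ j : Fin b, y i j = false) ↔ i ∈ s) := by
      intro y
      rw [Finset.ext_iff]
      apply forall_congr'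
      intro i
      simp [hZ]
    calc Fintype.card {y : Fin N → Fin b → Bool // Z y = s}
        = Fintype.card {y : Fin N → Fin b → Bool //
            ∀ i : Fin N, ((∀ j : Fin b, y i j = false) ↔ i ∈ s)} :=
          Fintype.card_congr (Equiv.subtypeEquivRight e)
      _ = Fintype.card (∀ i : Fin N, {v : Fin b → Bool // (∀ j : Fin b, v j = false) ↔ i ∈ s}) :=
          Fintype.card_congr (Equiv.subtypePiEquivPi
            (p := fun (i : Fin N) (v : Fin b → Bool) => (∀ j : Fin b, v j = false) ↔ i ∈ s))
      _ = ∏ i : Fin N, Fintype.card {v : Fin b → Bool // (∀ j : Fin b, v j = false) ↔ i ∈ s} :=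
          Fintype.card_pi
      _ = ∏ i : Fin N, (if i ∈ s then 1 else 2 ^ b - 1) := by
          refine Finset.prod_congr rfl fun i _ => ?_
          by_cases hi : i ∈ s
          · simp only [hi, if_pos, iff_true]
            have : Fintype.card {v : Fin b → Bool // ∀ j : Fin b, v j = false} =
                Fintype.card {v : Fin b → Bool // v = fun _ => false} := by
              apply Fintype.card_congr
              apply Equiv.subtypeEquivRight
              intro v
              rw [funext_iff]
            rw [this, Fintype.card_subtype_eq]
          · simp only [hi, if_neg, iff_false]
            have h1 : Fintype.card {v : Fin b → Bool // ¬ ∀ j : Fin b, v j = false} =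
                Fintype.card (Fin b → Bool) -
                Fintype.card {v : Fin b → Bool // ∀ j : Fin b, v j = false} :=
              Fintype.card_subtype_compl _
            have h2 : Fintype.card {v : Fin b → Bool // ∀ j : Fin b, v j = false} = 1 := by
              have : Fintype.card {v : Fin b → Bool // ∀ j : Fin b, v j = false} =
                  Fintype.card {v : Fin b → Bool // v = fun _ => false} := by
                apply Fintype.card_congr
                apply Equiv.subtypeEquivRight
                intro v
                rw [funext_iff]
              rw [this, Fintype.card_subtype_eq]
            have h3 : Fintype.card (Fin b → Bool) = 2 ^ b := by
              simp [Fintype.card_fun]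
            rw [h1, h2, h3]
            simp
      _ = (2 ^ b - 1) ^ (N - s.card) := by
          rw [← Finset.prod_mul_prod_compl s]
          rw [Finset.prod_congr rfl (fun i hi => if_pos hi), Finset.prod_const, one_pow,
            one_mul, Finset.prod_congr rfl
              (fun i hi => if_neg (Finset.mem_compl.mp hi)), Finset.prod_const,
            Finset.card_compl]
          congr 1
          simp
  rw [Finset.sum_congr rfl fib]
  -- group subsets by cardinality
  have hmaps2 : ∀ s ∈ t, s.card ∈ Ico m (N + 1) := by
    intro s hs
    have hs' : m ≤ s.card := by simpa [ht] using hs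
    have : s.card ≤ N := by
      have := Finset.card_le_univ s
      simpa using this
    simp [Finset.mem_Ico]
    omega
  rw [← Finset.sum_fiberwise_of_maps_to hmaps2 (fun s => (2 ^ b - 1) ^ (N - s.card))]
  refine Finset.sum_congr rfl fun k hk => ?_
  have hk' : m ≤ k := (Finset.mem_Ico.mp hk).1
  calc (∑ s ∈ t.filter (fun s => s.card = k), (2 ^ b - 1) ^ (N - s.card))
      = ∑ s ∈ t.filter (fun s => s.card = k), (2 ^ b - 1) ^ (N - k) := by
        refine Finset.sum_congr rfl fun s hs => ?_
        have : s.card = k := (Finset.mem_filter.mp hs).2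
        rw [this]
    _ = (t.filter (fun s => s.card = k)).card * (2 ^ b - 1) ^ (N - k) := by
        rw [Finset.sum_const, smul_eq_mul]
    _ = Nat.choose N k * (2 ^ b - 1) ^ (N - k) := by
        congr 1
        have : t.filter (fun s => s.card = k) = Finset.powersetCard k Finset.univ := by
          ext s
          simp only [ht, Finset.mem_filter, Finset.mem_univ, true_and,
            Finset.mem_powersetCard, Finset.subset_univ, true_and]
          omega
        rw [this, Finset.card_powersetCard]
        simp


open scoped Classical in
/-- If `2^b · K ≤ N` then at least half of all `y : Fin N → (Fin b → Bool)` have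
more than `K - 1` all-zero blocks. -/
theorem stmt10 (N b : ℕ) (K : ℝ) (hK : 1 ≤ K) (hsize : (2 : ℝ) ^ b * K ≤ (N : ℝ)) :
    2 ^ (b * N) ≤
      2 * (Finset.univ.filter (fun y : Fin N → Fin b → Bool =>
        K - 1 < ((Finset.univ.filter
          (fun i : Fin N => ∀ j : Fin b, y i j = false)).card : ℝ))).card := by
  classical
  set m : ℕ := ⌊K⌋₊ with hm
  have hK0 : (0:ℝ) ≤ K := le_trans zero_le_one hK
  have hm1 : 1 ≤ m := Nat.le_floor (by exact_mod_cast hK)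
  rcases Nat.eq_zero_or_pos b with hb | hb
  · -- b = 0 : every block is vacuously all-zero
    subst hb
    have hNK : K ≤ (N : ℝ) := by simpa using hsize
    have hfull : (Finset.univ.filter (fun y : Fin N → Fin 0 → Bool =>
        K - 1 < ((Finset.univ.filter
          (fun i : Fin N => ∀ j : Fin 0, y i j = false)).card : ℝ))) = Finset.univ := by
      apply Finset.filter_true_of_mem
      intro y _
      have : (Finset.univ.filter (fun i : Fin N => ∀ j : Fin 0, y i j = false)) =
          (Finset.univ : Finset (Fin N)) := by
        apply Finset.filter_true_of_mem
        intro i _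
        intro j
        exact j.elim0
      rw [this]
      simp only [Finset.card_univ, Fintype.card_fin]
      have h1 : (1:ℝ) ≤ K := hK
      linarith
    rw [hfull]
    have : (Finset.univ : Finset (Fin N → Fin 0 → Bool)).card = 1 := by
      rw [Finset.card_univ]
      rw [Fintype.card_fun]
      simp
    rw [this]
    simp
  · -- main case: b ≥ 1, q = 2^b ≥ 2
    set q : ℕ := 2 ^ b with hq
    have hq2 : 2 ≤ q := by
      calc 2 = 2 ^ 1 := (pow_one 2).symm
        _ ≤ 2 ^ b := Nat.pow_le_pow_right (by omega) hb
    have hqmN : q * m ≤ N := by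
      have h1 : ((q * m : ℕ) : ℝ) ≤ (N : ℝ) := by
        push_cast
        have hfloor : (m : ℝ) ≤ K := Nat.floor_le hK0
        have hqR : ((2:ℝ) ^ b) = (q : ℝ) := by push_cast [hq]; ring
        nlinarith [pow_pos (by norm_num : (0:ℝ) < 2) b]
      exact_mod_cast h1
    have hcore := core q m hq2 hm1 N (by omega)
    have hcount := count_lemma N b m
    -- the subset relation
    have hsub : (Finset.univ.filter (fun y : Fin N → Fin b → Bool =>
        m ≤ (Finset.univ.filter (fun i : Fin N => ∀ j : Fin b, y i j = false)).card)) ⊆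
        (Finset.univ.filter (fun y : Fin N → Fin b → Bool =>
        K - 1 < ((Finset.univ.filter
          (fun i : Fin N => ∀ j : Fin b, y i j = false)).card : ℝ))) := by
      intro y hy
      simp only [Finset.mem_filter, Finset.mem_univ, true_and] at hy ⊢
      have h1 : K < (m : ℝ) + 1 := by
        have := Nat.lt_floor_add_one K
        exact_mod_cast this
      have h2 : (m : ℝ) ≤ ((Finset.univ.filter
          (fun i : Fin N => ∀ j : Fin b, y i j = false)).card : ℝ) := by exact_mod_cast hy
      linarith
    have hcard := Finset.card_le_card hsub
    calc (2:ℕ) ^ (b * N) = q ^ N := by rw [hq, ← pow_mul]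
      _ ≤ 2 * ∑ k ∈ Ico m (N + 1), Nat.choose N k * (q - 1) ^ (N - k) := hcore
      _ = 2 * (Finset.univ.filter (fun y : Fin N → Fin b → Bool =>
            m ≤ (Finset.univ.filter (fun i : Fin N => ∀ j : Fin b, y i j = false)).card)).card := by
          rw [hcount]
      _ ≤ 2 * (Finset.univ.filter (fun y : Fin N → Fin b → Bool =>
          K - 1 < ((Finset.univ.filter
            (fun i : Fin N => ∀ j : Fin b, y i j = false)).card : ℝ))).card := by
          exact Nat.mul_le_mul_left 2 hcard
end

section
/- Let N, m be positive integers, let τ be a real number, and let μ be a probability mass function on functions Fin N → Fin m. Suppose I' ⊆ Fin N and α : Fin N → Fin m satisfy μ{ x | ∀ i ∈ I', x i = α i } ≥ m^(−τ·|I'|), and suppose I' is maximal in the sense that for every I'' ⊆ Fin N strictly containing I' and every α'' : Fin N → Fin m, μ{ x | ∀ i ∈ I'', x i = α'' i } < m^(−τ·|I''|). Then the conditional distribution given the event { x | ∀ i ∈ I', x i = α i } has min-entropy rate at least τ on the remaining blocks: for every nonempty J' ⊆ Fin N with J' disjoint from I' and every β : Fin N → Fin m, μ{ x | (∀ i ∈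 I', x i = α i) ∧ (∀ i ∈ J', x i = β i) } / μ{ x | ∀ i ∈ I', x i = α i } < m^(−τ·|J'|). -/
open scoped ENNReal

/-- Density restoration: if `I'` is a set on which some outcome `α` has probability
at least `m^(-τ·|I'|)`, and `I'` is maximal with this property (every strictly
larger set has all outcomes lighter than required), then conditioning on the event
`{x | ∀ i ∈ I', x i = α i}` yields min-entropy rate at least `τ` on the remaining
blocks. -/
theorem stmt13 (N m : ℕ) (hN : 0 < N) (hm : 0 < m) (τ : ℝ)
    (μ : PMF (Fin N → Fin m)) (I' : Finset (Fin N)) (α : Fin N → Fin m)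
    (hheavy : (m : ℝ≥0∞) ^ (-(τ * (I'.card : ℝ))) ≤
      μ.toOuterMeasure {x | ∀ i ∈ I', x i = α i})
    (hmax : ∀ I'' : Finset (Fin N), I' ⊂ I'' → ∀ α'' : Fin N → Fin m,
      μ.toOuterMeasure {x | ∀ i ∈ I'', x i = α'' i} <
        (m : ℝ≥0∞) ^ (-(τ * (I''.card : ℝ)))) :
    ∀ J' : Finset (Fin N), J'.Nonempty → Disjoint I' J' →
      ∀ β : Fin N → Fin m,
        μ.toOuterMeasure {x | (∀ i ∈ I', x i = α i) ∧ (∀ i ∈ J', x i = β i)} /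
            μ.toOuterMeasure {x | ∀ i ∈ I', x i = α i} <
          (m : ℝ≥0∞) ^ (-(τ * (J'.card : ℝ))) := by

  intro J' hJne hdisj β
  classical
  set B := μ.toOuterMeasure {x | ∀ i ∈ I', x i = α i} with hB
  have hm0 : (m : ℝ≥0∞) ≠ 0 := by exact_mod_cast hm.ne'
  have hmtop : (m : ℝ≥0∞) ≠ ⊤ := ENNReal.natCast_ne_top m
  have hpow_ne : ∀ r : ℝ, (m : ℝ≥0∞) ^ r ≠ 0 := fun r =>
    (ENNReal.rpow_pos (zero_lt_iff.mpr hm0) hmtop).ne'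
  have hpow_top : ∀ r : ℝ, (m : ℝ≥0∞) ^ r ≠ ⊤ := fun r h => by
    rcases ENNReal.rpow_eq_top_iff.mp h with ⟨h0, _⟩ | ⟨h0, _⟩
    · exact hm0 h0
    · exact hmtop h0
  have hB0 : B ≠ 0 := fun h => by
    have := hheavy; rw [h, le_zero_iff] at this
    exact hpow_ne _ this
  have hBtop : B ≠ ⊤ := by
    have h1 : B ≤ μ.toOuterMeasure Set.univ := μ.toOuterMeasure.mono (Set.subset_univ _)
    rw [(μ.toOuterMeasure_apply_eq_one_iff _).mpr (Set.subset_univ _)] at h1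
    exact (lt_of_le_of_lt h1 ENNReal.one_lt_top).ne
  set α'' : Fin N → Fin m := fun i => if i ∈ I' then α i else β i with hα''
  have hsub : I' ⊂ I' ∪ J' := by
    obtain ⟨j, hj⟩ := hJne
    refine Finset.ssubset_iff_of_subset Finset.subset_union_left |>.mpr
      ⟨j, Finset.mem_union_right _ hj, fun hjI => ?_⟩
    exact (Finset.disjoint_left.mp hdisj hjI) hj
  have hset : {x : Fin N → Fin m | ∀ i ∈ (I' ∪ J' : Finset (Fin N)), x i = α'' i}
      = {x | (∀ i ∈ I', x i = α i) ∧ (∀ i ∈ J', x i = β i)} := by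
    ext x
    simp only [Set.mem_setOf_eq, Finset.mem_union]
    constructor
    · intro h
      refine ⟨fun i hi => ?_, fun i hi => ?_⟩
      · have := h i (Or.inl hi); simpa [hα'', hi] using this
      · have := h i (Or.inr hi)
        have hni : i ∉ I' := Finset.disjoint_right.mp hdisj hi
        simpa [hα'', hni] using this
    · rintro ⟨h1, h2⟩ i hi
      rcases hi with hi | hi
      · simpa [hα'', hi] using h1 i hi
      · have hni : i ∉ I' := Finset.disjoint_right.mp hdisj hi
        simpa [hα'', hni] using h2 i hi
  have hlt := hmax (I' ∪ J') hsub α''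
  rw [hset] at hlt
  have hcard : ((I' ∪ J').card : ℝ) = (I'.card : ℝ) + (J'.card : ℝ) := by
    rw [Finset.card_union_of_disjoint hdisj]; push_cast; ring
  have hsplit : (m : ℝ≥0∞) ^ (-(τ * ((I' ∪ J').card : ℝ)))
      = (m : ℝ≥0∞) ^ (-(τ * (J'.card : ℝ))) * (m : ℝ≥0∞) ^ (-(τ * (I'.card : ℝ))) := by
    rw [← ENNReal.rpow_add _ _ hm0 hmtop, hcard]; ring_nf
  rw [ENNReal.div_lt_iff (Or.inl hB0) (Or.inl hBtop)]
  calc μ.toOuterMeasure {x | (∀ i ∈ I', x i = α i) ∧ (∀ i ∈ J', x i = β i)}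
      < (m : ℝ≥0∞) ^ (-(τ * (J'.card : ℝ))) * (m : ℝ≥0∞) ^ (-(τ * (I'.card : ℝ))) := by
        rw [← hsplit]; exact hlt
    _ ≤ (m : ℝ≥0∞) ^ (-(τ * (J'.card : ℝ))) * B := by
        exact mul_le_mul_right hheavy _
end

section
/- Let m ≥ 4 and N be positive integers, let f : (Fin N → Bool) → Bool, and let F : (Fin N → Fin m) × (Fin N → (Fin m → Bool)) → Bool be the lifted function F(x,y) = f(IND_m^N(x,y)). If there is a semi-structured protocol of cost c computing F, then there is a decision tree of height at most 2·c / log₂ m computing f. Equivalently, C^{*,⊕}(f ∘ IND_m^N) ≥ (1/2) · C^{dt}(f) · log₂ m, where C^{*,⊕} denotes the minimum cost of a semi-structured protocol and C^{dt} the minimum height of a decision tree. -/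
/-- Semi-structured (`(*,⊕)`) communication protocols for the lifted function
`f ∘ IND_m^N`: Alice-nodes branch on an arbitrary function of Alice's input
`x : Fin N → Fin m`; Bob-nodes branch on a parity `⨁_{(i,j) ∈ S} y i j` of Bob's
input bits. -/
inductive SSProtocol (N m : ℕ) : Type where
  | leaf : Bool → SSProtocol N m
  | alice : ((Fin N → Fin m) → Bool) → SSProtocol N m → SSProtocol N m → SSProtocol N m
  | bob : Finset (Fin N × Fin m) → SSProtocol N m → SSProtocol N m → SSProtocol N m

/-- Evaluation of a semi-structured protocol on inputs `(x, y)`. -/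
def SSProtocol.eval {N m : ℕ} :
    SSProtocol N m → (Fin N → Fin m) → (Fin N → Fin m → Bool) → Bool
  | .leaf o, _, _ => o
  | .alice a t0 t1, x, y => if a x then t1.eval x y else t0.eval x y
  | .bob S t0 t1, x, y =>
      if (S.filter (fun p => y p.1 p.2 = true)).card % 2 = 1 then t1.eval x y
      else t0.eval x y

/-- Cost (height) of a semi-structured protocol. -/
def SSProtocol.cost {N m : ℕ} : SSProtocol N m → ℕ
  | .leaf _ => 0
  | .alice _ t0 t1 => max t0.cost t1.cost + 1
  | .bob _ t0 t1 => max t0.cost t1.cost + 1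

/-- Decision trees over inputs `z : Fin N → Bool`. -/
inductive DTree (N : ℕ) : Type where
  | leaf : Bool → DTree N
  | node : Fin N → DTree N → DTree N → DTree N

/-- Evaluation of a decision tree. -/
def DTree.eval {N : ℕ} : DTree N → (Fin N → Bool) → Bool
  | .leaf o, _ => o
  | .node i t0 t1, z => if z i then t1.eval z else t0.eval z

/-- Height of a decision tree. -/
def DTree.height {N : ℕ} : DTree N → ℕ
  | .leaf _ => 0
  | .node _ t0 t1 => max t0.height t1.height + 1

namespace SSAux

variable {N m : ℕ}

structure Row (N m : ℕ) where
  supp : Finset (Fin N × Fin m)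
  rhs : ZMod 2
  piv : Fin N × Fin m

/-- parity (over `ZMod 2`) of the bits of `y` indexed by `S`. -/
def parz (y : Fin N → Fin m → Bool) (S : Finset (Fin N × Fin m)) : ZMod 2 :=
  ∑ e ∈ S, (if y e.1 e.2 then 1 else 0)

lemma parz_eq_one_iff (y : Fin N → Fin m → Bool) (S : Finset (Fin N × Fin m)) :
    parz y S = 1 ↔ (S.filter (fun p => y p.1 p.2 = true)).card % 2 = 1 := by
  have h : parz y S = ((S.filter (fun p => y p.1 p.2 = true)).card : ZMod 2) := by
    rw [parz, Finset.sum_boole]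
  rw [h]
  constructor
  · intro h1
    rcases Nat.mod_two_eq_zero_or_one (S.filter (fun p => y p.1 p.2 = true)).card with h0 | h0
    · exfalso
      rw [← ZMod.natCast_mod _ 2, h0] at h1
      simpa using h1
    · exact h0
  · intro h0
    rw [← ZMod.natCast_mod _ 2, h0]
    simp

lemma parz_congr {y y' : Fin N → Fin m → Bool} {S : Finset (Fin N × Fin m)}
    (h : ∀ e ∈ S, y e.1 e.2 = y' e.1 e.2) : parz y S = parz y' S := by
  exact Finset.sum_congr rfl (fun e he => by rw [h e he])

lemma parz_erase {y : Fin N → Fin m → Bool} {S : Finset (Fin N × Fin m)}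
    {e : Fin N × Fin m} (he : e ∈ S) :
    parz y S = (if y e.1 e.2 then 1 else 0) + parz y (S.erase e) := by
  rw [parz, parz, ← Finset.add_sum_erase _ _ he]

lemma parz_symmDiff (y : Fin N → Fin m → Bool) (S T : Finset (Fin N × Fin m)) :
    parz y (symmDiff S T) = parz y S + parz y T := by
  have h1 : symmDiff S T ⊔ (S ⊓ T) = S ⊔ T := symmDiff_sup_inf S T
  have h2 : Disjoint (symmDiff S T) (S ⊓ T) := disjoint_symmDiff_inf S T
  have h3 : parz y (symmDiff S T) + parz y (S ⊓ T) = parz y (S ⊔ T) := by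
    unfold parz
    rw [← Finset.sum_union h2]
    congr 1
  have h4 : parz y (S ⊔ T) + parz y (S ⊓ T) = parz y S + parz y T :=
    Finset.sum_union_inter
  have hchar : ∀ a : ZMod 2, a + a = 0 := by decide
  calc parz y (symmDiff S T) = parz y (symmDiff S T) + (parz y (S ⊓ T) + parz y (S ⊓ T)) := by
        rw [hchar]; ring
    _ = (parz y (symmDiff S T) + parz y (S ⊓ T)) + parz y (S ⊓ T) := by ring
    _ = parz y (S ⊔ T) + parz y (S ⊓ T) := by rw [h3]
    _ = parz y S + parz y T := h4


/-- whether all rows are satisfied by `y`. -/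
def Sat (rows : List (Row N m)) (y : Fin N → Fin m → Bool) : Prop :=
  ∀ r ∈ rows, parz y r.supp = r.rhs

def boolOf (a : ZMod 2) : Bool := a = 1

lemma ind_boolOf (a : ZMod 2) : (if boolOf a then (1 : ZMod 2) else 0) = a := by
  revert a; decide

/-- Solve a triangular system by back-substitution on the pivots, starting
from a default assignment `y`. -/
def solve : List (Row N m) → (Fin N → Fin m → Bool) → Fin N → Fin m → Bool
  | [], y => y
  | r :: rest, y =>
      let y' := solve rest y
      fun i j => if (i, j) = r.piv then boolOf (r.rhs + parz y' (r.supp.erase r.piv))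
        else y' i j

lemma solve_eq_of_ne_piv (rows : List (Row N m)) (y : Fin N → Fin m → Bool)
    (i : Fin N) (j : Fin m) (h : ∀ r ∈ rows, (i, j) ≠ r.piv) :
    solve rows y i j = y i j := by
  induction rows with
  | nil => rfl
  | cons r rest ih =>
      have h1 : (i, j) ≠ r.piv := h r (by simp)
      simp only [solve, if_neg h1]
      exact ih (fun r' hr' => h r' (by simp [hr']))

lemma solve_sat (rows : List (Row N m)) (y : Fin N → Fin m → Bool)
    (hmem : ∀ r ∈ rows, r.piv ∈ r.supp)
    (hpair : rows.Pairwise (fun r r' => r.piv ∉ r'.supp)) :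
    Sat rows (solve rows y) := by
  induction rows with
  | nil => intro r hr; simp at hr
  | cons r rest ih =>
      have hpair' := (List.pairwise_cons.mp hpair)
      have ihsat : Sat rest (solve rest y) :=
        ih (fun r' hr' => hmem r' (by simp [hr'])) hpair'.2
      set y' := solve rest y with hy'
      intro r' hr'
      rcases List.mem_cons.mp hr' with h | h
      · subst h
        have hem : ∀ e ∈ r'.supp.erase r'.piv, (solve (r' :: rest) y) e.1 e.2 = y' e.1 e.2 := by
          intro e he
          have : (e.1, e.2) ≠ r'.piv := by
            have := Finset.ne_of_mem_erase he
            simpa using this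
          simp only [solve, if_neg this]; rfl
        have hself : (solve (r' :: rest) y) r'.piv.1 r'.piv.2
            = boolOf (r'.rhs + parz y' (r'.supp.erase r'.piv)) := by
          simp only [solve, Prod.mk.eta, if_pos rfl]; rfl
        rw [parz_erase (hmem r' (by simp))]
        rw [parz_congr hem, hself, ind_boolOf]
        have hchar : ∀ a b : ZMod 2, a + b + b = a := by decide
        exact hchar _ _
      · -- r' in rest; solve (r :: rest) agrees with y' on r'.supp since r.piv ∉ r'.supp
        have hnotin : r.piv ∉ r'.supp := hpair'.1 r' h
        have hag : ∀ e ∈ r'.supp, (solve (r :: rest) y) e.1 e.2 = y' e.1 e.2 := by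
          intro e he
          have hne : (e.1, e.2) ≠ r.piv := by
            intro hh
            apply hnotin
            rw [← hh]
            simpa using he
          simp only [solve, if_neg hne]; rfl
        rw [parz_congr hag]
        exact ihsat r' h


/-- One elimination step against a row. -/
def redStep : (Finset (Fin N × Fin m) × ZMod 2) → Row N m → (Finset (Fin N × Fin m) × ZMod 2) :=
  fun p r => if r.piv ∈ p.1 then (symmDiff p.1 r.supp, p.2 + r.rhs) else p

/-- Reduce a parity constraint against a list of rows. -/
def reduce (rows : List (Row N m)) (p : Finset (Fin N × Fin m) × ZMod 2) :
    Finset (Fin N × Fin m) × ZMod 2 :=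
  rows.foldl redStep p

lemma redStep_mem {p : Finset (Fin N × Fin m) × ZMod 2} {r : Row N m}
    {e : Fin N × Fin m} (h : e ∈ (redStep p r).1) : e ∈ p.1 ∨ e ∈ r.supp := by
  unfold redStep at h
  split at h
  · rcases Finset.mem_symmDiff.mp h with h1 | h1
    · exact Or.inl h1.1
    · exact Or.inr h1.1
  · exact Or.inl h

lemma reduce_mem {rows : List (Row N m)} {p : Finset (Fin N × Fin m) × ZMod 2}
    {e : Fin N × Fin m} (h : e ∈ (reduce rows p).1) :
    e ∈ p.1 ∨ ∃ r ∈ rows, e ∈ r.supp := by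
  induction rows generalizing p with
  | nil => exact Or.inl h
  | cons r rest ih =>
      rcases ih (p := redStep p r) h with h1 | h1
      · rcases redStep_mem h1 with h2 | h2
        · exact Or.inl h2
        · exact Or.inr ⟨r, by simp, h2⟩
      · rcases h1 with ⟨r', hr', he⟩
        exact Or.inr ⟨r', by simp [hr'], he⟩

lemma reduce_not_mem {rows : List (Row N m)} {p : Finset (Fin N × Fin m) × ZMod 2}
    {e : Fin N × Fin m} (h1 : e ∉ p.1) (h2 : ∀ r ∈ rows, e ∉ r.supp) :
    e ∉ (reduce rows p).1 := by
  intro hmem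
  rcases reduce_mem hmem with h | ⟨r, hr, he⟩
  · exact h1 h
  · exact h2 r hr he

lemma reduce_piv {rows : List (Row N m)} {p : Finset (Fin N × Fin m) × ZMod 2}
    (hmem : ∀ r ∈ rows, r.piv ∈ r.supp)
    (hpair : rows.Pairwise (fun r r' => r.piv ∉ r'.supp)) :
    ∀ r ∈ rows, r.piv ∉ (reduce rows p).1 := by
  induction rows generalizing p with
  | nil => intro r hr; simp at hr
  | cons r rest ih =>
      have hpair' := List.pairwise_cons.mp hpair
      intro r' hr'
      have hred : reduce (r :: rest) p = reduce rest (redStep p r) := rfl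
      rcases List.mem_cons.mp hr' with h | h
      · subst h
        have hp1 : r'.piv ∉ (redStep p r').1 := by
          unfold redStep
          split
          · rw [Finset.mem_symmDiff]
            rename_i hin
            push_neg
            refine ⟨fun _ => hmem r' (by simp), fun _ => hin⟩
          · assumption
        rw [hred]
        exact reduce_not_mem hp1 (fun r'' hr'' => hpair'.1 r'' hr'')
      · rw [hred]
        exact ih (fun r'' hr'' => hmem r'' (by simp [hr''])) hpair'.2 r' h

lemma reduce_sat {rows : List (Row N m)} {p : Finset (Fin N × Fin m) × ZMod 2}
    {y : Fin N → Fin m → Bool} (hsat : Sat rows y) :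
    parz y (reduce rows p).1 + (reduce rows p).2 = parz y p.1 + p.2 := by
  induction rows generalizing p with
  | nil => rfl
  | cons r rest ih =>
      have hsat' : Sat rest y := fun r' hr' => hsat r' (by simp [hr'])
      have hstep : parz y (redStep p r).1 + (redStep p r).2 = parz y p.1 + p.2 := by
        unfold redStep
        split
        · simp only
          rw [parz_symmDiff, hsat r (by simp)]
          have hchar : ∀ a b c : ZMod 2, a + b + (c + b) = a + c := by decide
          exact hchar _ _ _
        · rfl
      calc parz y (reduce (r :: rest) p).1 + (reduce (r :: rest) p).2
          = parz y (redStep p r).1 + (redStep p r).2 := ih hsat'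
        _ = parz y p.1 + p.2 := hstep


/-- Substitute a pinned value into a row. -/
def subst (e : Fin N × Fin m) (w : Bool) (r : Row N m) : Row N m :=
  ⟨r.supp.erase e, if e ∈ r.supp then r.rhs + (if w then 1 else 0) else r.rhs, r.piv⟩

lemma subst_sat {rows : List (Row N m)} {e : Fin N × Fin m} {w : Bool}
    {y : Fin N → Fin m → Bool} (hy : y e.1 e.2 = w)
    (hsat : Sat (rows.map (subst e w)) y) : Sat rows y := by
  intro r hr
  have h2 : parz y (r.supp.erase e) = (subst e w r).rhs :=
    hsat (subst e w r) (List.mem_map_of_mem hr)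
  by_cases hmem : e ∈ r.supp
  · rw [parz_erase hmem, h2, subst, if_pos hmem, hy]
    have hchar : ∀ a b : ZMod 2, a + (b + a) = b := by decide
    exact hchar _ _
  · rw [← Finset.erase_eq_of_notMem hmem, h2, subst, if_neg hmem]

lemma card_le_pow (A : Finset (Fin N → Fin m)) (free : Finset (Fin N))
    (xfix : Fin N → Fin m) (h : ∀ x ∈ A, ∀ i, i ∉ free → x i = xfix i) :
    A.card ≤ m ^ free.card := by
  classical
  have h1 : A.card ≤ Fintype.card ({i // i ∈ free} → Fin m) := by
    rw [← Finset.card_univ]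
    apply Finset.card_le_card_of_injOn (fun x (i : {i // i ∈ free}) => x i.1)
      (fun x _ => Finset.mem_univ _)
    intro x hx x' hx' hxy
    funext i
    by_cases hi : i ∈ free
    · exact congrFun hxy ⟨i, hi⟩
    · rw [h x hx i hi, h x' hx' i hi]
  calc A.card ≤ Fintype.card ({i // i ∈ free} → Fin m) := h1
    _ = m ^ free.card := by rw [Fintype.card_fun]; simp


lemma arith1 (a b c : ℕ) (h1 : a + b = c) (h2 : 2 * a < c) : c ≤ 2 * b := by omega

lemma arith2 (a b : ℕ) (h2 : a ≤ 2 * b) (h3 : 1 ≤ a) : 0 < b := by omega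

lemma arith3 (q a b n : ℕ) (h1 : a + 1 = b) (h2 : q + b ≤ n) : q + a < n := by omega

lemma main_sim (f : (Fin N → Bool) → Bool) :
    ∀ (n : ℕ) (Q : SSProtocol N m) (free : Finset (Fin N)) (A : Finset (Fin N → Fin m))
      (rows : List (Row N m)) (xfix : Fin N → Fin m) (zfix : Fin N → Bool),
      Q.cost + free.card ≤ n →
      (∀ x ∈ A, ∀ i, i ∉ free → x i = xfix i) →
      A.Nonempty →
      (∀ r ∈ rows, r.piv ∈ r.supp) →
      rows.Pairwise (fun r r' => r.piv ∉ r'.supp) →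
      (∀ r ∈ rows, ∀ i, i ∉ free → (i, xfix i) ∉ r.supp) →
      (∀ r ∈ rows, r.piv.1 ∈ free → ∀ x ∈ A, x r.piv.1 ≠ r.piv.2) →
      (∀ x ∈ A, ∀ y : Fin N → Fin m → Bool,
        Sat rows y → (∀ i, i ∉ free → y i (xfix i) = zfix i) →
        Q.eval x y = f (fun i => y i (x i))) →
      ∃ T : DTree N,
        m ^ T.height * A.card ≤ 2 ^ (T.height + Q.cost) * m ^ free.card ∧
        ∀ z : Fin N → Bool, (∀ i, i ∉ free → z i = zfix i) → T.eval z = f z := by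
  intro n
  induction n using Nat.strong_induction_on with
  | _ n IH =>
  intro Q free A rows xfix zfix hn hfix hne hpivmem hpair hpin havoid hcorr
  classical
  by_cases hbal : ∃ i ∈ free, ∃ j : Fin m, A.card ≤ 2 * (A.filter (fun x => x i = j)).card
  · -- query case
    obtain ⟨i, hi, j, hij⟩ := hbal
    set Af := A.filter (fun x => x i = j) with hAf
    have hAfne : Af.Nonempty := by
      rw [← Finset.card_pos]
      exact arith2 _ _ hij (Finset.card_pos.mpr hne)
    obtain ⟨x0, hx0⟩ := hAfne
    have hAfne : Af.Nonempty := ⟨x0, hx0⟩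
    have hx0A : x0 ∈ A := (Finset.mem_filter.mp hx0).1
    have hx0i : x0 i = j := (Finset.mem_filter.mp hx0).2
    have hpivne : ∀ r ∈ rows, r.piv ≠ (i, j) := by
      intro r hr heq
      have h1 : r.piv.1 ∈ free := by rw [heq]; exact hi
      apply havoid r hr h1 x0 hx0A
      rw [heq]
      exact hx0i
    set free' := free.erase i with hfree'
    have hfcard : free'.card + 1 = free.card := by
      rw [hfree']; exact Finset.card_erase_add_one hi
    have hlt : Q.cost + free'.card < n :=
      arith3 _ _ _ _ hfcard hn
    set xf' := Function.update xfix i j with hxf'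
    have hbr : ∀ w : Bool, ∃ T : DTree N,
        m ^ T.height * Af.card ≤ 2 ^ (T.height + Q.cost) * m ^ free'.card ∧
        ∀ z : Fin N → Bool, (∀ i', i' ∉ free' → z i' = Function.update zfix i w i') →
          T.eval z = f z := by
      intro w
      set rows' := rows.map (subst (i, j) w) with hrows'
      refine IH (Q.cost + free'.card) hlt Q free' Af rows' xf'
        (Function.update zfix i w) le_rfl ?_ hAfne ?_ ?_ ?_ ?_ ?_
      · intro x hx i' hi'
        by_cases hii : i' = i
        · subst hii; rw [hxf', Function.update_self]; exact (Finset.mem_filter.mp hx).2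
        · rw [hxf', Function.update_of_ne hii]
          apply hfix x (Finset.mem_filter.mp hx).1
          intro hmem
          exact hi' (Finset.mem_erase.mpr ⟨hii, hmem⟩)
      · intro r hr
        rw [hrows'] at hr
        obtain ⟨r0, hr0, rfl⟩ := List.mem_map.mp hr
        have h1 : r0.piv ∈ r0.supp := hpivmem r0 hr0
        have h2 : r0.piv ≠ (i, j) := hpivne r0 hr0
        exact Finset.mem_erase.mpr ⟨h2, h1⟩
      · rw [hrows']
        refine List.Pairwise.map _ ?_ hpair
        intro r r' h hmem
        exact h (Finset.mem_of_mem_erase hmem)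
      · intro r hr i' hi'
        rw [hrows'] at hr
        obtain ⟨r0, hr0, rfl⟩ := List.mem_map.mp hr
        by_cases hii : i' = i
        · subst hii
          rw [hxf', Function.update_self]
          exact Finset.notMem_erase _ _
        · rw [hxf', Function.update_of_ne hii]
          intro hmem
          exact hpin r0 hr0 i' (fun hmem2 => hi' (Finset.mem_erase.mpr ⟨hii, hmem2⟩))
            (Finset.mem_of_mem_erase hmem)
      · intro r hr h1 x hx
        rw [hrows'] at hr
        obtain ⟨r0, hr0, rfl⟩ := List.mem_map.mp hr
        exact havoid r0 hr0 (Finset.mem_of_mem_erase h1) x (Finset.mem_filter.mp hx).1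
      · intro x hx y hsat' hpins'
        have hyij : y i j = w := by
          have h3 := hpins' i (Finset.notMem_erase i free)
          rw [hxf', Function.update_self, Function.update_self] at h3
          exact h3
        have hsat : Sat rows y := subst_sat hyij (by rw [← hrows']; exact hsat')
        apply hcorr x (Finset.mem_filter.mp hx).1 y hsat
        intro i' hi'
        have hii : i' ≠ i := fun h => hi' (h ▸ hi)
        have h4 := hpins' i' (fun hmem => hi' (Finset.mem_of_mem_erase hmem))
        rw [hxf', Function.update_of_ne hii, Function.update_of_ne hii] at h4
        exact h4
    obtain ⟨T0, hT01, hT02⟩ := hbr false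
    obtain ⟨T1, hT11, hT12⟩ := hbr true
    refine ⟨DTree.node i T0 T1, ?_, ?_⟩
    · have hh : (DTree.node i T0 T1).height = max T0.height T1.height + 1 := rfl
      rcases Nat.le_total T0.height T1.height with hc | hc
      · have hmax : max T0.height T1.height = T1.height := Nat.max_eq_right hc
        calc m ^ (DTree.node i T0 T1).height * A.card
            = m * m ^ T1.height * A.card := by rw [hh, hmax]; ring
          _ ≤ m * m ^ T1.height * (2 * Af.card) := Nat.mul_le_mul_left _ hij
          _ = 2 * m * (m ^ T1.height * Af.card) := by ring
          _ ≤ 2 * m * (2 ^ (T1.height + Q.cost) * m ^ free'.card) :=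
              Nat.mul_le_mul_left _ hT11
          _ = 2 ^ (T1.height + 1 + Q.cost) * (m ^ free'.card * m) := by ring
          _ = 2 ^ ((DTree.node i T0 T1).height + Q.cost) * m ^ free.card := by
              rw [hh, hmax, ← hfcard, pow_succ]
      · have hmax : max T0.height T1.height = T0.height := Nat.max_eq_left hc
        calc m ^ (DTree.node i T0 T1).height * A.card
            = m * m ^ T0.height * A.card := by rw [hh, hmax]; ring
          _ ≤ m * m ^ T0.height * (2 * Af.card) := Nat.mul_le_mul_left _ hij
          _ = 2 * m * (m ^ T0.height * Af.card) := by ring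
          _ ≤ 2 * m * (2 ^ (T0.height + Q.cost) * m ^ free'.card) :=
              Nat.mul_le_mul_left _ hT01
          _ = 2 ^ (T0.height + 1 + Q.cost) * (m ^ free'.card * m) := by ring
          _ = 2 ^ ((DTree.node i T0 T1).height + Q.cost) * m ^ free.card := by
              rw [hh, hmax, ← hfcard, pow_succ]
    · intro z hz
      have hagree : ∀ w : Bool, z i = w →
          ∀ i', i' ∉ free' → z i' = Function.update zfix i w i' := by
        intro w hw i' hi'
        by_cases hii : i' = i
        · subst hii; rw [Function.update_self]; exact hw
        · rw [Function.update_of_ne hii]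
          exact hz i' (fun hmem => hi' (Finset.mem_erase.mpr ⟨hii, hmem⟩))
      cases hzi : z i
      · have := hT02 z (hagree false hzi)
        simpa [DTree.eval, hzi] using this
      · have := hT12 z (hagree true hzi)
        simpa [DTree.eval, hzi] using this
  · push_neg at hbal
    match Q with
    | .leaf o =>
        obtain ⟨x, hx⟩ := hne
        refine ⟨DTree.leaf o, ?_, ?_⟩
        · simpa [DTree.height, SSProtocol.cost] using card_le_pow A free xfix hfix
        · intro z hz
          set y0 : Fin N → Fin m → Bool := fun i' j' => if j' = x i' then z i' else false
            with hy0
          have hnp : ∀ (i' : Fin N), ∀ r ∈ rows, (i', x i') ≠ r.piv := by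
            intro i' r hr heq
            have h1 : i' = r.piv.1 := congrArg Prod.fst heq
            have h2 : x i' = r.piv.2 := congrArg Prod.snd heq
            subst h1
            by_cases hf : r.piv.1 ∈ free
            · exact havoid r hr hf x hx h2
            · have h3 := hfix x hx _ hf
              have h4 := hpin r hr _ hf
              rw [← h3, h2] at h4
              exact h4 (by simpa using hpivmem r hr)
          set y := solve rows y0 with hy
          have hyx : ∀ i', y i' (x i') = z i' := by
            intro i'
            rw [hy, solve_eq_of_ne_piv rows y0 i' (x i') (fun r hr => hnp i' r hr)]
            simp [hy0]
          have hsat : Sat rows y := solve_sat rows y0 hpivmem hpair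
          have hpins : ∀ i', i' ∉ free → y i' (xfix i') = zfix i' := by
            intro i' hi'
            rw [← hfix x hx i' hi', hyx i', hz i' hi']
          have hco := hcorr x hx y hsat hpins
          have hfz : (fun i' => y i' (x i')) = z := funext hyx
          rw [hfz] at hco
          simpa [DTree.eval, SSProtocol.eval] using hco
    | .alice a t0 t1 =>
        obtain ⟨b, hb2⟩ : ∃ b : Bool, A.card ≤ 2 * (A.filter (fun x => a x = b)).card := by
          by_contra hcon
          push_neg at hcon
          have h0 := hcon false
          have h1 := hcon true
          have hsplit : (A.filter (fun x => a x = true)).card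
              + (A.filter (fun x => a x = false)).card = A.card := by
            have := Finset.card_filter_add_card_filter_not
              (s := A) (p := fun x => a x = true)
            simpa using this
          omega
        set Ab := A.filter (fun x => a x = b) with hAb
        set tb := cond b t1 t0 with htb
        have hcost : tb.cost + 1 ≤ SSProtocol.cost (.alice a t0 t1) := by
          cases b <;> simp [htb, SSProtocol.cost] <;> omega
        have hlt : tb.cost + free.card < n := by
          have := hn
          simp [SSProtocol.cost] at this
          cases b <;> simp [htb] <;> omega
        have hAne : Ab.Nonempty := by
          rw [← Finset.card_pos]
          have : 1 ≤ A.card := Finset.card_pos.mpr hne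
          omega
        obtain ⟨T, hT1, hT2⟩ := IH (tb.cost + free.card) hlt tb free Ab rows xfix zfix
          le_rfl
          (fun x hx => hfix x (Finset.mem_filter.mp hx).1)
          hAne hpivmem hpair hpin
          (fun r hr h1 x hx => havoid r hr h1 x (Finset.mem_filter.mp hx).1)
          (by
            intro x hx y hsat hpins
            have hxb : a x = b := (Finset.mem_filter.mp hx).2
            have := hcorr x (Finset.mem_filter.mp hx).1 y hsat hpins
            rw [← this]
            cases b <;> simp [SSProtocol.eval, htb, hxb])
        refine ⟨T, ?_, hT2⟩
        calc m ^ T.height * A.card ≤ m ^ T.height * (2 * Ab.card) :=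
              Nat.mul_le_mul_left _ hb2
          _ = 2 * (m ^ T.height * Ab.card) := by ring
          _ ≤ 2 * (2 ^ (T.height + tb.cost) * m ^ free.card) := Nat.mul_le_mul_left _ hT1
          _ = 2 ^ (T.height + (tb.cost + 1)) * m ^ free.card := by ring
          _ ≤ 2 ^ (T.height + SSProtocol.cost (.alice a t0 t1)) * m ^ free.card := by
              apply Nat.mul_le_mul_right
              apply Nat.pow_le_pow_right (by omega)
              omega
    | .bob S t0 t1 =>
        set Spin := S.filter (fun e => e.1 ∉ free ∧ e.2 = xfix e.1) with hSpin
        set S0 := S.filter (fun e => ¬ (e.1 ∉ free ∧ e.2 = xfix e.1)) with hS0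
        set c0 := parz (fun i _ => zfix i) Spin with hc0
        set p := reduce rows (S0, c0) with hp
        have hkey : ∀ y : Fin N → Fin m → Bool, Sat rows y →
            (∀ i, i ∉ free → y i (xfix i) = zfix i) →
            parz y S = parz y p.1 + p.2 := by
          intro y hsat hpins
          have h1 : parz y S = parz y S0 + parz y Spin := by
            rw [hS0, hSpin, parz, parz, parz, add_comm]
            exact (Finset.sum_filter_add_sum_filter_not S _ _).symm
          have h2 : parz y Spin = c0 := by
            apply parz_congr
            intro e he
            obtain ⟨heS, he1, he2⟩ : e ∈ S ∧ e.1 ∉ free ∧ e.2 = xfix e.1 := by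
              simpa [hSpin] using he
            rw [he2, hpins e.1 he1]
          have h3 : parz y p.1 + p.2 = parz y S0 + c0 := by
            rw [hp]; exact reduce_sat hsat
          rw [h1, h2, h3]
        set tb := if p.2 = 1 then t1 else t0 with htb
        have heval : ∀ (x : Fin N → Fin m) (y : Fin N → Fin m → Bool), parz y S = p.2 →
            SSProtocol.eval (.bob S t0 t1) x y = tb.eval x y := by
          intro x y hpar
          by_cases hc : p.2 = 1
          · have h1 : parz y S = 1 := by rw [hpar, hc]
            rw [parz_eq_one_iff] at h1
            simp [SSProtocol.eval, h1, htb, hc]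
          · have h0 : ¬ ((S.filter (fun pr => y pr.1 pr.2 = true)).card % 2 = 1) := by
              intro hcon
              exact hc (by rw [← hpar, parz_eq_one_iff]; exact hcon)
            simp [SSProtocol.eval, h0, htb, hc]
        have hcost2 : tb.cost + 1 ≤ SSProtocol.cost (.bob S t0 t1) := by
          by_cases hc : p.2 = 1 <;> simp [htb, hc, SSProtocol.cost] <;> omega
        have hlt : tb.cost + free.card < n := by
          have h1 := hn
          simp [SSProtocol.cost] at h1
          omega
        by_cases hT : p.1 = ∅
        · obtain ⟨T, hT1, hT2⟩ := IH (tb.cost + free.card) hlt tb free A rows xfix zfix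
            le_rfl hfix hne hpivmem hpair hpin havoid
            (by
              intro x hx y hsat hpins
              rw [← hcorr x hx y hsat hpins]
              refine (heval x y ?_).symm
              have hk := hkey y hsat hpins
              rw [hT] at hk
              simpa [parz] using hk)
          refine ⟨T, ?_, hT2⟩
          calc m ^ T.height * A.card ≤ 2 ^ (T.height + tb.cost) * m ^ free.card := hT1
            _ ≤ 2 ^ (T.height + SSProtocol.cost (.bob S t0 t1)) * m ^ free.card := by
                apply Nat.mul_le_mul_right
                apply Nat.pow_le_pow_right (by omega)
                omega
        · obtain ⟨e, he⟩ := Finset.nonempty_iff_ne_empty.mpr hT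
          have hTpin : ∀ i, i ∉ free → (i, xfix i) ∉ p.1 := by
            intro i hi hmem
            rcases reduce_mem (by rw [← hp]; exact hmem) with h1 | ⟨r, hr, h2⟩
            · have h2 := (Finset.mem_filter.mp h1).2
              push_neg at h2
              exact hi (by simpa using h2 hi)
            · exact hpin r hr i hi h2
          have hTpiv : ∀ r ∈ rows, r.piv ∉ p.1 := by
            rw [hp]; exact reduce_piv hpivmem hpair
          set nr : Row N m := ⟨p.1, 0, e⟩ with hnr
          set rows' := rows ++ [nr] with hrows'
          have hpivmem' : ∀ r ∈ rows', r.piv ∈ r.supp := by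
            intro r hr
            rcases List.mem_append.mp hr with h | h
            · exact hpivmem r h
            · simp at h; subst h; exact he
          have hpair' : rows'.Pairwise (fun r r' => r.piv ∉ r'.supp) := by
            rw [hrows', List.pairwise_append]
            refine ⟨hpair, by simp, ?_⟩
            intro r hr r' hr'
            simp at hr'; subst hr'
            exact hTpiv r hr
          have hpin' : ∀ r ∈ rows', ∀ i, i ∉ free → (i, xfix i) ∉ r.supp := by
            intro r hr i hi
            rcases List.mem_append.mp hr with h | h
            · exact hpin r h i hi
            · simp at h; subst h; exact hTpin i hi
          have hsat_split : ∀ y : Fin N → Fin m → Bool, Sat rows' y →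
              Sat rows y ∧ parz y p.1 = 0 := by
            intro y hs
            refine ⟨fun r hr => hs r (List.mem_append.mpr (Or.inl hr)), ?_⟩
            have := hs nr (List.mem_append.mpr (Or.inr (by simp)))
            simpa [hnr] using this
          by_cases hef : e.1 ∈ free
          · -- pivot in a live column: prune the fiber x e.1 = e.2
            set A' := A.filter (fun x => ¬ (x e.1 = e.2)) with hA'
            have hcard : A.card ≤ 2 * A'.card := by
              have hsplit : (A.filter (fun x => x e.1 = e.2)).card + A'.card = A.card := by
                rw [hA']
                exact Finset.card_filter_add_card_filter_not
                  (s := A) (p := fun x => x e.1 = e.2)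
              have hb := hbal e.1 hef e.2
              exact arith1 _ _ _ hsplit hb
            have hA'ne : A'.Nonempty := by
              rw [← Finset.card_pos]
              have h1 : 1 ≤ A.card := Finset.card_pos.mpr hne
              exact arith2 _ _ hcard h1
            have havoid' : ∀ r ∈ rows', r.piv.1 ∈ free → ∀ x ∈ A', x r.piv.1 ≠ r.piv.2 := by
              intro r hr h1 x hx
              rcases List.mem_append.mp hr with h | h
              · exact havoid r h h1 x (Finset.mem_filter.mp hx).1
              · simp at h; subst h
                exact (Finset.mem_filter.mp hx).2
            obtain ⟨T, hT1, hT2⟩ := IH (tb.cost + free.card) hlt tb free A' rows' xfix zfix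
              le_rfl
              (fun x hx => hfix x (Finset.mem_filter.mp hx).1)
              hA'ne hpivmem' hpair' hpin' havoid'
              (by
                intro x hx y hsat' hpins
                obtain ⟨hsat, hz0⟩ := hsat_split y hsat'
                rw [← hcorr x (Finset.mem_filter.mp hx).1 y hsat hpins]
                refine (heval x y ?_).symm
                rw [hkey y hsat hpins, hz0, zero_add])
            refine ⟨T, ?_, hT2⟩
            calc m ^ T.height * A.card ≤ m ^ T.height * (2 * A'.card) :=
                  Nat.mul_le_mul_left _ hcard
              _ = 2 * (m ^ T.height * A'.card) := by ring
              _ ≤ 2 * (2 ^ (T.height + tb.cost) * m ^ free.card) := Nat.mul_le_mul_left _ hT1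
              _ = 2 ^ (T.height + (tb.cost + 1)) * m ^ free.card := by ring
              _ ≤ 2 ^ (T.height + SSProtocol.cost (.bob S t0 t1)) * m ^ free.card := by
                  apply Nat.mul_le_mul_right
                  apply Nat.pow_le_pow_right (by omega)
                  omega
          · -- pivot in a fixed column: no pruning needed
            have havoid' : ∀ r ∈ rows', r.piv.1 ∈ free → ∀ x ∈ A, x r.piv.1 ≠ r.piv.2 := by
              intro r hr h1 x hx
              rcases List.mem_append.mp hr with h | h
              · exact havoid r h h1 x hx
              · simp at h; subst h; exact absurd h1 hef
            obtain ⟨T, hT1, hT2⟩ := IH (tb.cost + free.card) hlt tb free A rows' xfix zfix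
              le_rfl hfix hne hpivmem' hpair' hpin' havoid'
              (by
                intro x hx y hsat' hpins
                obtain ⟨hsat, hz0⟩ := hsat_split y hsat'
                rw [← hcorr x hx y hsat hpins]
                refine (heval x y ?_).symm
                rw [hkey y hsat hpins, hz0, zero_add])
            refine ⟨T, ?_, hT2⟩
            calc m ^ T.height * A.card ≤ 2 ^ (T.height + tb.cost) * m ^ free.card := hT1
              _ ≤ 2 ^ (T.height + SSProtocol.cost (.bob S t0 t1)) * m ^ free.card := by
                  apply Nat.mul_le_mul_right
                  apply Nat.pow_le_pow_right (by omega)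
                  omega

end SSAux


/-- Lifting theorem for semi-structured protocols: for `m ≥ 4`, from any
semi-structured protocol of cost `c` computing `f ∘ IND_m^N` one obtains a
decision tree computing `f` of height at most `2·c / log₂ m`; equivalently
`C^{*,⊕}(f ∘ IND_m^N) ≥ (1/2)·C^{dt}(f)·log₂ m`. -/


theorem stmt16 (N m : ℕ) (hm : 4 ≤ m) (hN : 0 < N)
    (f : (Fin N → Bool) → Bool) (P : SSProtocol N m)
    (hP : ∀ (x : Fin N → Fin m) (y : Fin N → Fin m → Bool),
      P.eval x y = f (fun i => y i (x i))) :
    ∃ T : DTree N, (∀ z : Fin N → Bool, T.eval z = f z) ∧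
      (T.height : ℝ) * Real.logb 2 m ≤ 2 * (P.cost : ℝ) := by
  classical
  have h0 : 0 < m := by omega
  obtain ⟨T, hbud, hcorr⟩ := SSAux.main_sim f (P.cost + N) P Finset.univ Finset.univ []
    (fun _ => ⟨0, h0⟩) (fun _ => false)
    (by simp)
    (by intro x hx i hi; simp at hi)
    ⟨fun _ => ⟨0, h0⟩, Finset.mem_univ _⟩
    (by intro r hr; simp at hr)
    (by simp)
    (by intro r hr; simp at hr)
    (by intro r hr; simp at hr)
    (by intro x _ y _ _; exact hP x y)
  refine ⟨T, fun z => hcorr z (by intro i hi; simp at hi), ?_⟩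
  have hcard : (Finset.univ : Finset (Fin N → Fin m)).card = m ^ N := by
    simp [Finset.card_univ]
  have hN' : (Finset.univ : Finset (Fin N)).card = N := by simp
  rw [hcard, hN'] at hbud
  have hpow : m ^ T.height ≤ 2 ^ (T.height + P.cost) := by
    have hmN : 0 < m ^ N := pow_pos h0 N
    exact Nat.le_of_mul_le_mul_right hbud hmN
  have hq : T.height ≤ P.cost := by
    have h4 : 4 ^ T.height ≤ 2 ^ (T.height + P.cost) :=
      le_trans (Nat.pow_le_pow_left hm _) hpow
    have h4' : 2 ^ (2 * T.height) ≤ 2 ^ (T.height + P.cost) := by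
      calc 2 ^ (2 * T.height) = 4 ^ T.height := by rw [pow_mul]; norm_num
        _ ≤ _ := h4
    have := (Nat.pow_le_pow_iff_right (by norm_num : 1 < 2)).mp h4'
    omega
  have hm1 : (1 : ℝ) < 2 := by norm_num
  have hle : ((m : ℝ)) ^ T.height ≤ (2 : ℝ) ^ (T.height + P.cost) := by
    exact_mod_cast hpow
  have hposm : (0 : ℝ) < (m : ℝ) ^ T.height := by
    positivity
  have hlog := Real.logb_le_logb_of_le hm1 hposm hle
  rw [Real.logb_pow, Real.logb_pow, Real.logb_self_eq_one (by norm_num)] at hlog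
  have hqR : (T.height : ℝ) ≤ (P.cost : ℝ) := by exact_mod_cast hq
  have hcast : ((T.height + P.cost : ℕ) : ℝ) = (T.height : ℝ) + P.cost := by push_cast; ring
  rw [hcast] at hlog
  calc (T.height : ℝ) * Real.logb 2 m ≤ ((T.height : ℝ) + P.cost) * 1 := by
        simpa using hlog
    _ ≤ 2 * (P.cost : ℝ) := by linarith
end

section
/- There exists a natural number m₀ such that the following holds for every ℓ with m = 2^ℓ ≥ m₀ and every positive integer N. Let f : (Fin N → Bool) → Bool, and let F be the function on assignments w : ((Fin N × Fin ℓ) ⊕ (Fin N × Fin m)) → Bool defined as follows: for each i ∈ Fin N, let x i ∈ Fin m be the number whose binary representation is given by the bits w(inl(i,j)) for j ∈ Fin ℓ (that is, x i = ∑_{j<ℓ} 2^j · (if w(inl(i,j)) then 1 else 0)), let z i = w(inr(i, x i)), and set F(w) = f(z). Then every parity decision tree computing F has depth at least C^{dt}(f) and number of leaves at least 2^{C^{dt}(f)}, where C^{dt}(f) denotes the minimum height of an ordinary decision tree computing f. In particular, the parity decision tree size of F is at least the decision tree size of f. -/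
/-- Number of leaves (size) of a decision tree. -/
def DTree.leaves {N : ℕ} : DTree N → ℕ
  | .leaf _ => 1
  | .node _ t0 t1 => t0.leaves + t1.leaves

/-- `C^{dt}(f)`: the minimum height of a decision tree computing `f`. -/
noncomputable def dtHeight {N : ℕ} (f : (Fin N → Bool) → Bool) : ℕ :=
  sInf {h : ℕ | ∃ T : DTree N, (∀ z, T.eval z = f z) ∧ T.height = h}

/-- `size^{dt}(f)`: the minimum number of leaves of a decision tree computing `f`. -/
noncomputable def dtSize {N : ℕ} (f : (Fin N → Bool) → Bool) : ℕ :=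
  sInf {s : ℕ | ∃ T : DTree N, (∀ z, T.eval z = f z) ∧ T.leaves = s}

/-- Parity decision trees over a variable set `ι`: internal nodes branch on the
parity `⨁_{v ∈ S} w v` of a finite set `S` of variables. -/
inductive PDT (ι : Type) : Type where
  | leaf : Bool → PDT ι
  | node : Finset ι → PDT ι → PDT ι → PDT ι

/-- Evaluation of a parity decision tree. -/
def PDT.eval {ι : Type} : PDT ι → (ι → Bool) → Bool
  | .leaf o, _ => o
  | .node S t0 t1, w =>
      if (S.filter (fun v => w v = true)).card % 2 = 1 then t1.eval w else t0.eval w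

/-- Depth of a parity decision tree. -/
def PDT.depth {ι : Type} : PDT ι → ℕ
  | .leaf _ => 0
  | .node _ t0 t1 => max t0.depth t1.depth + 1

/-- Number of leaves (size) of a parity decision tree. -/
def PDT.leaves {ι : Type} : PDT ι → ℕ
  | .leaf _ => 1
  | .node _ t0 t1 => t0.leaves + t1.leaves

def enumT {N : ℕ} : List (Fin N) → ((Fin N → Bool) → Bool) → DTree N
  | [], f => .leaf (f fun _ => false)
  | i :: l, f => .node i (enumT l fun z => f (Function.update z i false))
      (enumT l fun z => f (Function.update z i true))

lemma enumT_eval {N : ℕ} (l : List (Fin N)) (f : (Fin N → Bool) → Bool) (z : Fin N → Bool) :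
    (enumT l f).eval z = f (fun j => if j ∈ l then z j else false) := by
  induction l generalizing f with
  | nil => simp [enumT, DTree.eval]
  | cons i l ih =>
    have key : ∀ b : Bool, z i = b →
        f (Function.update (fun j => if j ∈ l then z j else false) i b)
          = f (fun j => if j ∈ i :: l then z j else false) := by
      intro b hb
      congr 1
      funext j
      by_cases hj : j = i
      · subst hj; simp [hb]
      · simp [Function.update_of_ne hj, List.mem_cons, hj]
    cases hz : z i with
    | false =>
      simp only [enumT, DTree.eval, hz, Bool.false_eq_true, if_false]
      rw [ih]; exact key false hz
    | true =>
      simp only [enumT, DTree.eval, hz, if_true]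
      rw [ih]; exact key true hz

lemma exists_dtree {N : ℕ} (f : (Fin N → Bool) → Bool) :
    ∃ T : DTree N, ∀ z, T.eval z = f z := by
  refine ⟨enumT (List.finRange N) f, fun z => ?_⟩
  rw [enumT_eval]
  congr 1
  funext j
  simp [List.mem_finRange]

lemma dtHeight_le {N : ℕ} {f : (Fin N → Bool) → Bool} (T : DTree N)
    (h : ∀ z, T.eval z = f z) : dtHeight f ≤ T.height :=
  Nat.sInf_le ⟨T, h, rfl⟩

lemma dtSize_le {N : ℕ} {f : (Fin N → Bool) → Bool} (T : DTree N)
    (h : ∀ z, T.eval z = f z) : dtSize f ≤ T.leaves :=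
  Nat.sInf_le ⟨T, h, rfl⟩

lemma dtHeight_spec {N : ℕ} (f : (Fin N → Bool) → Bool) :
    ∃ T : DTree N, (∀ z, T.eval z = f z) ∧ T.height = dtHeight f := by
  have hne : {h : ℕ | ∃ T : DTree N, (∀ z, T.eval z = f z) ∧ T.height = h}.Nonempty := by
    obtain ⟨T, hT⟩ := exists_dtree f
    exact ⟨T.height, T, hT, rfl⟩
  exact Nat.sInf_mem hne

lemma dtSize_spec {N : ℕ} (f : (Fin N → Bool) → Bool) :
    ∃ T : DTree N, (∀ z, T.eval z = f z) ∧ T.leaves = dtSize f := by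
  have hne : {s : ℕ | ∃ T : DTree N, (∀ z, T.eval z = f z) ∧ T.leaves = s}.Nonempty := by
    obtain ⟨T, hT⟩ := exists_dtree f
    exact ⟨T.leaves, T, hT, rfl⟩
  exact Nat.sInf_mem hne

lemma dtHeight_const {N : ℕ} {f : (Fin N → Bool) → Bool} (o : Bool)
    (h : ∀ z, f z = o) : dtHeight f = 0 :=
  Nat.le_zero.mp (dtHeight_le (.leaf o) fun z => (h z).symm)

lemma dtSize_const {N : ℕ} {f : (Fin N → Bool) → Bool} (o : Bool)
    (h : ∀ z, f z = o) : dtSize f ≤ 1 :=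
  dtSize_le (.leaf o) fun z => (h z).symm

lemma dt_node_eval {N : ℕ} (f : (Fin N → Bool) → Bool) (i : Fin N)
    (T0 T1 : DTree N)
    (h0 : ∀ z, T0.eval z = f (Function.update z i false))
    (h1 : ∀ z, T1.eval z = f (Function.update z i true)) :
    ∀ z, (DTree.node i T0 T1).eval z = f z := by
  intro z
  show (if z i then T1.eval z else T0.eval z) = f z
  cases hz : z i with
  | false =>
    simp only [Bool.false_eq_true, if_false]
    rw [h0, ← hz, Function.update_eq_self]
  | true =>
    simp only [if_true]
    rw [h1, ← hz, Function.update_eq_self]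

lemma dtHeight_node {N : ℕ} (f : (Fin N → Bool) → Bool) (i : Fin N) :
    dtHeight f ≤ max (dtHeight fun z => f (Function.update z i false))
      (dtHeight fun z => f (Function.update z i true)) + 1 := by
  obtain ⟨T0, hT0, hh0⟩ := dtHeight_spec (fun z => f (Function.update z i false))
  obtain ⟨T1, hT1, hh1⟩ := dtHeight_spec (fun z => f (Function.update z i true))
  have := dtHeight_le (f := f) (.node i T0 T1) (dt_node_eval f i T0 T1 hT0 hT1)
  calc dtHeight f ≤ (DTree.node i T0 T1).height := this
    _ = max T0.height T1.height + 1 := rfl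
    _ = _ := by rw [hh0, hh1]

lemma dtSize_node {N : ℕ} (f : (Fin N → Bool) → Bool) (i : Fin N) :
    dtSize f ≤ dtSize (fun z => f (Function.update z i false))
      + dtSize (fun z => f (Function.update z i true)) := by
  obtain ⟨T0, hT0, hh0⟩ := dtSize_spec (fun z => f (Function.update z i false))
  obtain ⟨T1, hT1, hh1⟩ := dtSize_spec (fun z => f (Function.update z i true))
  have := dtSize_le (f := f) (.node i T0 T1) (dt_node_eval f i T0 T1 hT0 hT1)
  calc dtSize f ≤ (DTree.node i T0 T1).leaves := this
    _ = T0.leaves + T1.leaves := rfl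
    _ = _ := by rw [hh0, hh1]

abbrev V (ℓ N : ℕ) : Type := (Fin N × Fin ℓ) ⊕ (Fin N × Fin (2 ^ ℓ))

def blk {ℓ N : ℕ} : V ℓ N → Fin N := Sum.elim Prod.fst Prod.fst

def IND {ℓ N : ℕ} (w : V ℓ N → Bool) (i : Fin N) : Bool :=
  w (Sum.inr (i,
    ⟨(∑ j : Fin ℓ, 2 ^ (j : ℕ) * (if w (Sum.inl (i, j)) then 1 else 0)) % 2 ^ ℓ,
      Nat.mod_lt _ (Nat.two_pow_pos ℓ)⟩))

def tB (x : ZMod 2) : Bool := decide (x = 1)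
def tZ (b : Bool) : ZMod 2 := cond b 1 0

lemma tZ_tB (x : ZMod 2) : tZ (tB x) = x := by revert x; decide
lemma tB_tZ (b : Bool) : tB (tZ b) = b := by cases b <;> rfl
lemma zmod2_cases (x : ZMod 2) : x = 0 ∨ x = 1 := by revert x; decide

lemma parity_bridge {ι : Type} [DecidableEq ι] (S : Finset ι) (w : ι → Bool) :
    ((S.filter (fun v => w v = true)).card % 2 = 1) ↔ (∑ v ∈ S, tZ (w v)) = 1 := by
  have h1 : (∑ v ∈ S, tZ (w v))
      = (((S.filter (fun v => w v = true)).card : ℕ) : ZMod 2) := by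
    rw [← Finset.sum_boole]
    refine Finset.sum_congr rfl fun v _ => ?_
    cases w v <;> simp [tZ]
  rw [h1, ← ZMod.natCast_mod]
  rcases Nat.mod_two_eq_zero_or_one (S.filter (fun v => w v = true)).card with h | h <;>
    rw [h] <;> simp

section Affine

variable {ℓ N : ℕ}

def Amap (ε : V ℓ N → ZMod 2) (M : V ℓ N → V ℓ N → ZMod 2)
    (α : V ℓ N → ZMod 2) (v : V ℓ N) : ZMod 2 :=
  ε v + ∑ u, M v u * α u

def Wf (ε : V ℓ N → ZMod 2) (M : V ℓ N → V ℓ N → ZMod 2)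
    (α : V ℓ N → ZMod 2) : V ℓ N → Bool :=
  fun v => tB (Amap ε M α v)

lemma sum_delta (h : V ℓ N → ZMod 2) (v : V ℓ N) :
    (∑ u, (if u = v then (1 : ZMod 2) else 0) * h u) = h v := by
  simp [ite_mul, Finset.sum_ite_eq' Finset.univ v h]

lemma rowid {ε : V ℓ N → ZMod 2} {M : V ℓ N → V ℓ N → ZMod 2} {v : V ℓ N}
    (h0 : ε v = 0) (h1 : ∀ u, M v u = if u = v then 1 else 0)
    (α : V ℓ N → ZMod 2) : Amap ε M α v = α v := by
  unfold Amap
  rw [h0, Finset.sum_congr rfl (fun u _ => by rw [h1 u]), sum_delta]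
  exact zero_add _

lemma par_exp (ε : V ℓ N → ZMod 2) (M : V ℓ N → V ℓ N → ZMod 2)
    (S : Finset (V ℓ N)) (β : V ℓ N → ZMod 2) :
    ∑ v ∈ S, Amap ε M β v
      = (∑ v ∈ S, ε v) + ∑ u, (∑ v ∈ S, M v u) * β u := by
  unfold Amap
  rw [Finset.sum_add_distrib]
  congr 1
  rw [Finset.sum_comm]
  exact Finset.sum_congr rfl fun u _ => (Finset.sum_mul _ _ _).symm

lemma Amap_comp (ε εg : V ℓ N → ZMod 2) (M Mg : V ℓ N → V ℓ N → ZMod 2)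
    (α : V ℓ N → ZMod 2) (x : V ℓ N) :
    Amap ε M (fun v => Amap εg Mg α v) x
      = Amap (fun v => ε v + ∑ u, M v u * εg u)
          (fun v u => ∑ w, M v w * Mg w u) α x := by
  unfold Amap
  simp only [mul_add, Finset.sum_add_distrib, Finset.mul_sum, Finset.sum_mul, ← add_assoc]
  congr 1
  rw [Finset.sum_comm]
  refine Finset.sum_congr rfl fun u _ => Finset.sum_congr rfl fun w _ => by ring

end Affine

def stif {ℓ N : ℕ} (u₀ : V ℓ N) (b : Bool) : V ℓ N → Bool
  | .inl (_, j) =>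
      (match u₀ with
        | .inl _ => false
        | .inr (_, k₀) => decide (j.val = 0 ∧ k₀.val = 0))
  | .inr _ => b

lemma IND_eq {ℓ N : ℕ} (w : V ℓ N → Bool) (i : Fin N) :
    ∃ k : Fin (2 ^ ℓ), IND w i = w (Sum.inr (i, k)) ∧
      k.val = (∑ j : Fin ℓ, 2 ^ (j : ℕ) * (if w (Sum.inl (i, j)) then 1 else 0)) % 2 ^ ℓ :=
  ⟨_, rfl, rfl⟩

lemma stif_spec {ℓ N : ℕ} (hℓ : 1 ≤ ℓ) (u₀ : V ℓ N) (b : Bool) (w : V ℓ N → Bool)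
    (h : ∀ v, blk v = blk u₀ → v ≠ u₀ → w v = stif u₀ b v) :
    IND w (blk u₀) = b := by
  obtain ⟨k, hk1, hk2⟩ := IND_eq w (blk u₀)
  have hne : (Sum.inr (blk u₀, k) : V ℓ N) ≠ u₀ := by
    cases u₀ with
    | inl p => simp
    | inr p =>
      obtain ⟨i', k₀⟩ := p
      have hbi : blk (Sum.inr (i', k₀) : V ℓ N) = i' := rfl
      rw [hbi] at hk2 ⊢
      have hbits : ∀ j : Fin ℓ, w (Sum.inl (i', j)) = decide (j.val = 0 ∧ k₀.val = 0) := by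
        intro j
        exact h (Sum.inl (i', j)) rfl (by simp)
      intro hcon
      have hk : k = k₀ := by
        have := Sum.inr.inj hcon
        exact (Prod.mk.injEq .. ▸ this).2
      by_cases hk0 : k₀.val = 0
      · have hsum : (∑ j : Fin ℓ, 2 ^ (j : ℕ) * (if w (Sum.inl (i', j)) then 1 else 0)) = 1 := by
          rw [Finset.sum_eq_single_of_mem (⟨0, hℓ⟩ : Fin ℓ) (Finset.mem_univ _)]
          · rw [hbits ⟨0, hℓ⟩]
            simp [hk0]
          · intro j _ hj
            rw [hbits j]
            have hj0 : ¬ (j.val = 0) := fun hc => hj (Fin.ext hc)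
            simp [hj0]
        rw [hsum, Nat.mod_eq_of_lt (Nat.one_lt_two_pow (by omega))] at hk2
        rw [hk] at hk2
        omega
      · have hsum : (∑ j : Fin ℓ, 2 ^ (j : ℕ) * (if w (Sum.inl (i', j)) then 1 else 0)) = 0 := by
          refine Finset.sum_eq_zero fun j _ => ?_
          rw [hbits j]
          simp [hk0]
        rw [hsum, Nat.zero_mod] at hk2
        rw [hk] at hk2
        omega
  rw [hk1, h (Sum.inr (blk u₀, k)) rfl hne]
  rfl

lemma eval_node {ι : Type} [DecidableEq ι] (S : Finset ι) (t0 t1 : PDT ι) (w : ι → Bool) :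
    (PDT.node S t0 t1).eval w
      = if (S.filter (fun v => w v = true)).card % 2 = 1 then t1.eval w else t0.eval w := rfl

lemma two_zmod : (2 : ZMod 2) = 0 := by decide

lemma step {ℓ N : ℕ} (hℓ : 1 ≤ ℓ) (S : Finset (V ℓ N)) (t0 t1 : PDT (V ℓ N))
    (alive : Finset (Fin N)) (ε : V ℓ N → ZMod 2) (M : V ℓ N → V ℓ N → ZMod 2)
    (f' : (Fin N → Bool) → Bool)
    (hE : ∀ α, (PDT.node S t0 t1).eval (Wf ε M α) = f' (fun i => IND (Wf ε M α) i))
    (hi : ∀ v, blk v ∈ alive → ε v = 0 ∧ ∀ u, M v u = if u = v then 1 else 0)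
    (hii : ∀ v u, M v u ≠ 0 → blk u ∈ alive)
    (u₀ : V ℓ N) (hcu : (∑ v ∈ S, M v u₀) = 1) (b c : Bool) :
    ∃ (ε' : V ℓ N → ZMod 2) (M' : V ℓ N → V ℓ N → ZMod 2),
      (∀ α, (cond c t1 t0).eval (Wf ε' M' α)
          = f' (Function.update (fun i => IND (Wf ε' M' α) i) (blk u₀) b)) ∧
      (∀ v, blk v ∈ alive.erase (blk u₀) →
          ε' v = 0 ∧ ∀ u, M' v u = if u = v then 1 else 0) ∧
      (∀ v u, M' v u ≠ 0 → blk u ∈ alive.erase (blk u₀)) := by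
  classical
  have hia : blk u₀ ∈ alive := by
    obtain ⟨v, hvS, hv⟩ := Finset.exists_ne_zero_of_sum_ne_zero (by rw [hcu]; exact one_ne_zero)
    exact hii v u₀ hv
  set s : V ℓ N → ZMod 2 := fun v => tZ (stif u₀ b v) with hs
  set Cs : ZMod 2 := ∑ v ∈ S, ε v with hCs
  set cu : V ℓ N → ZMod 2 := fun u => ∑ v ∈ S, M v u with hcudef
  set Ps : ZMod 2 := ∑ u, (if blk u = blk u₀ ∧ u ≠ u₀ then cu u * s u else 0) with hPs
  set Kc : ZMod 2 := tZ c + Cs + Ps with hKc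
  set εg : V ℓ N → ZMod 2 :=
    fun v => if blk v = blk u₀ then (if v = u₀ then Kc else s v) else 0 with hεg
  set Mg : V ℓ N → V ℓ N → ZMod 2 :=
    fun v u => if blk v = blk u₀ then
        (if v = u₀ then (if blk u = blk u₀ then 0 else cu u) else 0)
      else (if u = v then 1 else 0) with hMg
  refine ⟨fun v => ε v + ∑ u, M v u * εg u, fun v u => ∑ w, M v w * Mg w u, ?_, ?_, ?_⟩
  · -- the evaluation invariant
    intro α
    set ε' : V ℓ N → ZMod 2 := fun v => ε v + ∑ u, M v u * εg u with hε'
    set M' : V ℓ N → V ℓ N → ZMod 2 := fun v u => ∑ w, M v w * Mg w u with hM'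
    have hcomp : ∀ x, Amap ε M (fun v => Amap εg Mg α v) x = Amap ε' M' α x :=
      fun x => Amap_comp ε εg M Mg α x
    have hW : Wf ε M (fun v => Amap εg Mg α v) = Wf ε' M' α :=
      funext fun v => congrArg tB (hcomp v)
    -- value of the affine substitution
    have hgval : ∀ v, Amap εg Mg α v
        = if blk v = blk u₀ then
            (if v = u₀ then Kc + ∑ u, (if blk u = blk u₀ then 0 else cu u * α u) else s v)
          else α v := by
      intro v
      unfold Amap
      by_cases hbv : blk v = blk u₀
      · by_cases hv0 : v = u₀
        · simp only [hεg, hMg, hbv, hv0, if_true, if_pos rfl]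
          congr 1
          refine Finset.sum_congr rfl fun u _ => ?_
          by_cases hbu : blk u = blk u₀ <;> simp [hbu]
        · simp only [hεg, hMg, hbv, hv0, if_true, if_false, if_pos rfl, if_neg hv0]
          rw [Finset.sum_eq_zero fun u _ => by simp]
          exact add_zero _
      · simp only [hεg, hMg, if_neg hbv]
        rw [zero_add]
        exact sum_delta α v
    -- blocks in alive are untouched by (ε, M)
    have hrow : ∀ v, blk v ∈ alive → Amap ε' M' α v = Amap εg Mg α v := by
      intro v hv
      rw [← hcomp v]
      exact rowid (hi v hv).1 (hi v hv).2 _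
    -- the gadget at blk u₀ is forced to b
    have hgad : IND (Wf ε' M' α) (blk u₀) = b := by
      refine stif_spec hℓ u₀ b _ fun v hbv hvne => ?_
      have : Amap ε' M' α v = s v := by
        rw [hrow v (hbv ▸ hia), hgval v, if_pos hbv, if_neg hvne]
      show tB (Amap ε' M' α v) = stif u₀ b v
      rw [this, hs]
      exact tB_tZ _
    -- the parity of S is forced to c
    have hpar : ∑ v ∈ S, Amap ε' M' α v = tZ c := by
      have h1 : ∑ v ∈ S, Amap ε' M' α v
          = Cs + ∑ u, cu u * Amap εg Mg α u := by
        rw [Finset.sum_congr rfl fun v _ => (hcomp v).symm]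
        exact par_exp ε M S _
      rw [h1]
      set Pn : ZMod 2 := ∑ u, (if blk u = blk u₀ then 0 else cu u * α u) with hPn
      have hsplit : ∑ u, cu u * Amap εg Mg α u
          = (∑ u ∈ Finset.univ.erase u₀, cu u * Amap εg Mg α u) + cu u₀ * Amap εg Mg α u₀ :=
        (Finset.sum_erase_add _ _ (Finset.mem_univ u₀)).symm
      have hu₀ : cu u₀ * Amap εg Mg α u₀ = Kc + Pn := by
        rw [hgval u₀, if_pos rfl, if_pos rfl, hcudef]
        simp only []
        rw [hcu, one_mul]
      have herase : (∑ u ∈ Finset.univ.erase u₀, cu u * Amap εg Mg α u) = Ps + Pn := by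
        have h2 : ∀ u ∈ Finset.univ.erase u₀, cu u * Amap εg Mg α u
            = (if blk u = blk u₀ ∧ u ≠ u₀ then cu u * s u else 0)
              + (if blk u = blk u₀ then 0 else cu u * α u) := by
          intro u hu
          have hune : u ≠ u₀ := (Finset.mem_erase.mp hu).1
          rw [hgval u]
          by_cases hbu : blk u = blk u₀
          · simp [hbu, hune]
          · simp [hbu]
        rw [Finset.sum_congr rfl h2, Finset.sum_add_distrib]
        congr 1
        · rw [hPs]
          exact Finset.sum_erase _ (by simp)
        · rw [hPn]
          exact Finset.sum_erase _ (by simp)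
      rw [hsplit, herase, hu₀, hKc]
      linear_combination (Cs + Ps + Pn) * two_zmod
    -- conclude the evaluation claim
    have h1 := hE (fun v => Amap εg Mg α v)
    rw [hW] at h1
    rw [eval_node] at h1
    have hcond : ((S.filter (fun v => Wf ε' M' α v = true)).card % 2 = 1) ↔ (c = true) := by
      rw [parity_bridge]
      have htz : ∀ v, tZ (Wf ε' M' α v) = Amap ε' M' α v := fun v => tZ_tB _
      have : ∑ v ∈ S, tZ (Wf ε' M' α v) = tZ c :=
        (Finset.sum_congr rfl fun v _ => htz v).trans hpar
      rw [this]
      cases c <;> simp [tZ]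
    have hupd : f' (Function.update (fun i => IND (Wf ε' M' α) i) (blk u₀) b)
        = f' (fun i => IND (Wf ε' M' α) i) := by
      rw [← hgad, Function.update_eq_self]
    rw [hupd]
    cases c with
    | false =>
      have : ¬ ((S.filter (fun v => Wf ε' M' α v = true)).card % 2 = 1) := by
        rw [hcond]; simp
      rw [if_neg this] at h1
      exact h1
    | true =>
      rw [if_pos (hcond.mpr rfl)] at h1
      exact h1
  · -- invariant (i)
    intro v hv
    have hvmem := Finset.mem_of_mem_erase hv
    have hvne : blk v ≠ blk u₀ := (Finset.mem_erase.mp hv).1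
    obtain ⟨he, hm⟩ := hi v hvmem
    have hδ : ∀ (g : V ℓ N → ZMod 2), (∑ u, M v u * g u) = g v := by
      intro g
      have h2 : ∀ u, M v u * g u = (if u = v then 1 else 0) * g u := fun u => by rw [hm u]
      rw [Finset.sum_congr rfl fun u _ => h2 u]
      exact sum_delta g v
    constructor
    · show ε v + (∑ u, M v u * εg u) = 0
      rw [he, hδ εg, zero_add]
      show (if blk v = blk u₀ then (if v = u₀ then Kc else s v) else 0) = 0
      rw [if_neg hvne]
    · intro u
      show (∑ w, M v w * Mg w u) = if u = v then 1 else 0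
      rw [hδ (fun w => Mg w u)]
      show (if blk v = blk u₀ then _ else (if u = v then (1 : ZMod 2) else 0)) = _
      rw [if_neg hvne]
  · -- invariant (ii)
    intro v u hvu
    obtain ⟨w, _, hw⟩ := Finset.exists_ne_zero_of_sum_ne_zero hvu
    have hw1 : M v w ≠ 0 := left_ne_zero_of_mul hw
    have hw2 : Mg w u ≠ 0 := right_ne_zero_of_mul hw
    have hwal : blk w ∈ alive := hii v w hw1
    have hw2' : (if blk w = blk u₀ then
        (if w = u₀ then (if blk u = blk u₀ then (0 : ZMod 2) else cu u) else 0)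
      else if u = w then 1 else 0) ≠ 0 := hw2
    by_cases hbw : blk w = blk u₀
    · rw [if_pos hbw] at hw2'
      by_cases hw0 : w = u₀
      · rw [if_pos hw0] at hw2'
        by_cases hbu : blk u = blk u₀
        · rw [if_pos hbu] at hw2'; exact absurd rfl hw2'
        · rw [if_neg hbu] at hw2'
          obtain ⟨v', _, hv'⟩ := Finset.exists_ne_zero_of_sum_ne_zero hw2'
          exact Finset.mem_erase.mpr ⟨hbu, hii v' u hv'⟩
      · rw [if_neg hw0] at hw2'; exact absurd rfl hw2'
    · rw [if_neg hbw] at hw2'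
      have huw : u = w := by
        by_contra hne
        rw [if_neg hne] at hw2'; exact absurd rfl hw2'
      subst huw
      exact Finset.mem_erase.mpr ⟨hbw, hwal⟩

theorem main_lift {ℓ N : ℕ} (hℓ : 1 ≤ ℓ) (t : PDT (V ℓ N)) :
    ∀ (alive : Finset (Fin N)) (ε : V ℓ N → ZMod 2) (M : V ℓ N → V ℓ N → ZMod 2)
      (f' : (Fin N → Bool) → Bool),
      (∀ α, t.eval (Wf ε M α) = f' (fun i => IND (Wf ε M α) i)) →
      (∀ v, blk v ∈ alive → ε v = 0 ∧ ∀ u, M v u = if u = v then 1 else 0) →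
      (∀ v u, M v u ≠ 0 → blk u ∈ alive) →
      (∀ z z', (∀ i ∈ alive, z i = z' i) → f' z = f' z') →
      dtHeight f' ≤ t.depth ∧ 2 ^ dtHeight f' ≤ t.leaves ∧ dtSize f' ≤ t.leaves := by
  induction t with
  | leaf o =>
    intro alive ε M f' hE hi hii hF
    have hconst : ∀ z, f' z = o := by
      intro z
      have hα : ∀ i ∈ alive, IND (Wf ε M (fun v => tZ (z (blk v)))) i = z i := by
        intro i hiA
        obtain ⟨k, hk1, _⟩ := IND_eq (Wf ε M (fun v => tZ (z (blk v)))) i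
        rw [hk1]
        have hb : blk (Sum.inr (i, k) : V ℓ N) = i := rfl
        have hr := rowid (hi _ (hb ▸ hiA)).1 (hi _ (hb ▸ hiA)).2 (fun v => tZ (z (blk v)))
        show tB (Amap ε M (fun v => tZ (z (blk v))) (Sum.inr (i, k))) = z i
        rw [hr]
        exact tB_tZ _
      have h1 := hE (fun v => tZ (z (blk v)))
      have h2 : f' (fun i => IND (Wf ε M (fun v => tZ (z (blk v)))) i) = f' z :=
        hF _ _ (fun i hiA => hα i hiA)
      rw [← h2, ← h1]
      rfl
    refine ⟨?_, ?_, ?_⟩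
    · rw [dtHeight_const o hconst]
      exact Nat.zero_le _
    · rw [dtHeight_const o hconst]
      exact le_refl 1
    · exact dtSize_const o hconst
  | node S t0 t1 ih0 ih1 =>
    intro alive ε M f' hE hi hii hF
    by_cases hc : ∀ u : V ℓ N, (∑ v ∈ S, M v u) = 0
    · -- the parity is constant on the range of the restriction
      have hval : ∀ α, ∑ v ∈ S, Amap ε M α v = ∑ v ∈ S, ε v := by
        intro α
        have hz : ∀ u : V ℓ N, (∑ v ∈ S, M v u) * α u = 0 := fun u => by
          rw [hc u, zero_mul]
        rw [par_exp, Finset.sum_eq_zero fun u _ => hz u, add_zero]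
      have hsum : ∀ α, ∑ v ∈ S, tZ (Wf ε M α v) = ∑ v ∈ S, ε v := fun α =>
        (Finset.sum_congr rfl fun v _ => tZ_tB _).trans (hval α)
      rcases zmod2_cases (∑ v ∈ S, ε v) with hCs | hCs
      · have hE' : ∀ α, t0.eval (Wf ε M α) = f' (fun i => IND (Wf ε M α) i) := by
          intro α
          have h1 := hE α
          rw [eval_node] at h1
          have hcond : ¬ ((S.filter (fun v => Wf ε M α v = true)).card % 2 = 1) := by
            rw [parity_bridge, hsum α, hCs]
            decide
          rw [if_neg hcond] at h1
          exact h1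
        obtain ⟨hA, hB, hC⟩ := ih0 alive ε M f' hE' hi hii hF
        exact ⟨hA.trans (Nat.le_succ_of_le (le_max_left _ _)),
          hB.trans (Nat.le_add_right _ _), hC.trans (Nat.le_add_right _ _)⟩
      · have hE' : ∀ α, t1.eval (Wf ε M α) = f' (fun i => IND (Wf ε M α) i) := by
          intro α
          have h1 := hE α
          rw [eval_node] at h1
          have hcond : ((S.filter (fun v => Wf ε M α v = true)).card % 2 = 1) := by
            rw [parity_bridge, hsum α, hCs]
          rw [if_pos hcond] at h1
          exact h1
        obtain ⟨hA, hB, hC⟩ := ih1 alive ε M f' hE' hi hii hF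
        exact ⟨hA.trans (Nat.le_succ_of_le (le_max_right _ _)),
          hB.trans (Nat.le_add_left _ _), hC.trans (Nat.le_add_left _ _)⟩
    · push_neg at hc
      obtain ⟨u₀, hu₀⟩ := hc
      have hcu1 : (∑ v ∈ S, M v u₀) = 1 := by
        rcases zmod2_cases (∑ v ∈ S, M v u₀) with h | h
        · exact absurd h hu₀
        · exact h
      have hF' : ∀ (b : Bool) (z z' : Fin N → Bool),
          (∀ j ∈ alive.erase (blk u₀), z j = z' j) →
          f' (Function.update z (blk u₀) b) = f' (Function.update z' (blk u₀) b) := by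
        intro b z z' hag
        refine hF _ _ fun j hj => ?_
        by_cases hji : j = blk u₀
        · subst hji
          simp
        · rw [Function.update_of_ne hji, Function.update_of_ne hji]
          exact hag j (Finset.mem_erase.mpr ⟨hji, hj⟩)
      have key : ∀ (b c : Bool),
          dtHeight (fun z => f' (Function.update z (blk u₀) b)) ≤ (cond c t1 t0).depth ∧
          2 ^ dtHeight (fun z => f' (Function.update z (blk u₀) b)) ≤ (cond c t1 t0).leaves ∧
          dtSize (fun z => f' (Function.update z (blk u₀) b)) ≤ (cond c t1 t0).leaves := by
        intro b c
        obtain ⟨ε', M', hE', hi', hii'⟩ := step hℓ S t0 t1 alive ε M f' hE hi hii u₀ hcu1 b c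
        have hE'' : ∀ α, (cond c t1 t0).eval (Wf ε' M' α)
            = (fun z => f' (Function.update z (blk u₀) b)) (fun i => IND (Wf ε' M' α) i) :=
          hE'
        cases c with
        | false => exact ih0 _ ε' M' _ hE'' hi' hii' (hF' b)
        | true => exact ih1 _ ε' M' _ hE'' hi' hii' (hF' b)
      obtain ⟨d00, l00, s00⟩ := key false false
      obtain ⟨d10, l10, _⟩ := key true false
      obtain ⟨d01, l01, _⟩ := key false true
      obtain ⟨d11, l11, s11⟩ := key true true
      have hmax0 : 2 ^ max (dtHeight (fun z => f' (Function.update z (blk u₀) false)))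
          (dtHeight (fun z => f' (Function.update z (blk u₀) true))) ≤ t0.leaves := by
        rcases le_total (dtHeight (fun z => f' (Function.update z (blk u₀) false)))
          (dtHeight (fun z => f' (Function.update z (blk u₀) true))) with h | h
        · rw [max_eq_right h]; exact l10
        · rw [max_eq_left h]; exact l00
      have hmax1 : 2 ^ max (dtHeight (fun z => f' (Function.update z (blk u₀) false)))
          (dtHeight (fun z => f' (Function.update z (blk u₀) true))) ≤ t1.leaves := by
        rcases le_total (dtHeight (fun z => f' (Function.update z (blk u₀) false)))
          (dtHeight (fun z => f' (Function.update z (blk u₀) true))) with h | h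
        · rw [max_eq_right h]; exact l11
        · rw [max_eq_left h]; exact l01
      have hd := dtHeight_node f' (blk u₀)
      refine ⟨?_, ?_, ?_⟩
      · refine hd.trans ?_
        show _ ≤ max t0.depth t1.depth + 1
        exact Nat.succ_le_succ (max_le_max d00 d11)
      · show _ ≤ t0.leaves + t1.leaves
        calc 2 ^ dtHeight f'
            ≤ 2 ^ (max (dtHeight (fun z => f' (Function.update z (blk u₀) false)))
                (dtHeight (fun z => f' (Function.update z (blk u₀) true))) + 1) :=
              Nat.pow_le_pow_right (by norm_num) hd
          _ = 2 ^ max (dtHeight (fun z => f' (Function.update z (blk u₀) false)))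
                (dtHeight (fun z => f' (Function.update z (blk u₀) true)))
              + 2 ^ max (dtHeight (fun z => f' (Function.update z (blk u₀) false)))
                (dtHeight (fun z => f' (Function.update z (blk u₀) true))) := by
              rw [pow_succ]; ring
          _ ≤ t0.leaves + t1.leaves := Nat.add_le_add hmax0 hmax1
      · show _ ≤ t0.leaves + t1.leaves
        exact (dtSize_node f' (blk u₀)).trans (Nat.add_le_add s00 s11)

/-- Lifting from decision trees to parity decision trees: for all sufficiently
large `m = 2^ℓ`, every parity decision tree computing the lift `F = f ∘ IND_m^N`
(on Boolean variables where the `ℓ` bits `w(inl(i,·))` encode the pointer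
`x i ∈ Fin m` in binary and `z i = w(inr(i, x i))`) has depth at least
`C^{dt}(f)` and at least `2^{C^{dt}(f)}` leaves; in particular its size is at
least the decision tree size of `f`. -/
theorem stmt17 :
    ∃ m₀ : ℕ, ∀ ℓ : ℕ, m₀ ≤ 2 ^ ℓ → ∀ N : ℕ, 0 < N →
      ∀ f : (Fin N → Bool) → Bool,
        ∀ P : PDT ((Fin N × Fin ℓ) ⊕ (Fin N × Fin (2 ^ ℓ))),
          (∀ w : ((Fin N × Fin ℓ) ⊕ (Fin N × Fin (2 ^ ℓ))) → Bool,
            P.eval w = f (fun i =>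
              w (Sum.inr (i,
                ⟨(∑ j : Fin ℓ, 2 ^ (j : ℕ) *
                    (if w (Sum.inl (i, j)) then 1 else 0)) % 2 ^ ℓ,
                  Nat.mod_lt _ (Nat.two_pow_pos ℓ)⟩)))) →
          dtHeight f ≤ P.depth ∧ 2 ^ dtHeight f ≤ P.leaves ∧ dtSize f ≤ P.leaves := by
  refine ⟨2, fun ℓ hm N _ f P hw => ?_⟩
  have hℓ : 1 ≤ ℓ := by
    by_contra h
    interval_cases ℓ
    · simp at hm
  have hE : ∀ α : V ℓ N → ZMod 2,
      P.eval (Wf 0 (fun v u => if u = v then 1 else 0) α)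
        = f (fun i => IND (Wf 0 (fun v u => if u = v then 1 else 0) α) i) := by
    intro α
    have hWid : Wf (0 : V ℓ N → ZMod 2) (fun v u => if u = v then 1 else 0) α
        = fun v => tB (α v) := by
      funext v
      show tB (Amap 0 (fun v u => if u = v then 1 else 0) α v) = tB (α v)
      congr 1
      show (0 : ZMod 2) + ∑ u, (if u = v then (1 : ZMod 2) else 0) * α u = α v
      rw [zero_add, sum_delta]
    rw [hWid]
    exact hw (fun v => tB (α v))
  exact main_lift hℓ P Finset.univ 0 (fun v u => if u = v then 1 else 0) f hE
    (fun v _ => ⟨rfl, fun u => rfl⟩)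
    (fun v u _ => Finset.mem_univ _)
    (fun z z' h => by
      have : z = z' := funext fun i => h i (Finset.mem_univ i)
      rw [this])
end
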